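/- arXiv:1603.09401 — 7 statements merged into one kernel-verified Lean document; each statement's English description precedes it below -/
import Mathlib

section
/- Let R = F[x_1,...,x_n] be a polynomial ring over a field F. If f_1,...,f_k is a partial regular sequence of homogeneous polynomials and each f_i splits into a product of linear forms, f_i = ℓ_{i,1}···ℓ_{i,N_i}, then for any choice of indices j_1,...,j_k with 1 ≤ j_i ≤ N_i, the sequence of linear forms ℓ_{1,j_1},...,ℓ_{k,j_k} is also a partial regular sequence. -/
open MvPolynomial

namespace StmtAux

variable {σ F : Type} [Field F]

/-- Non-zero-divisor mod an ideal, in membership form. -/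
def NZD (I : Ideal (MvPolynomial σ F)) (a : MvPolynomial σ F) : Prop :=
  ∀ z, z * a ∈ I → z ∈ I

theorem comp_mem (S : Set (MvPolynomial σ F))
    (hS : ∀ x ∈ S, ∃ d : ℕ, x.IsHomogeneous d)
    {z : MvPolynomial σ F} (hz : z ∈ Ideal.span S) (d : ℕ) :
    homogeneousComponent d z ∈ Ideal.span S := by
  letI := MvPolynomial.gradedAlgebra (σ := σ) (R := F)
  have hhom : (Ideal.span S).IsHomogeneous (homogeneousSubmodule σ F) :=
    Ideal.homogeneous_span _ _ (fun x hx => by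
      obtain ⟨d, hd⟩ := hS x hx
      exact ⟨d, (mem_homogeneousSubmodule _ _).mpr hd⟩)
  have h := hhom d hz
  rwa [show ((DirectSum.decompose (homogeneousSubmodule σ F) z d : MvPolynomial σ F))
      = homogeneousComponent d z from MvPolynomial.decomposition.decompose'_apply z d] at h

theorem comp_mul_key {a : MvPolynomial σ F} {e : ℕ} (ha : a.IsHomogeneous e)
    (c : MvPolynomial σ F) (D : ℕ) :
    homogeneousComponent D (c * a)
      = ∑ i ∈ Finset.range (c.totalDegree + 1),
          if D = i + e then homogeneousComponent i c * a else 0 := by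
  conv_lhs => rw [show c * a = ∑ i ∈ Finset.range (c.totalDegree + 1),
      homogeneousComponent i c * a by rw [← Finset.sum_mul, sum_homogeneousComponent]]
  rw [map_sum]
  refine Finset.sum_congr rfl fun i _ => ?_
  have hmem : homogeneousComponent i c * a ∈ homogeneousSubmodule σ F (i + e) :=
    (mem_homogeneousSubmodule _ _).mpr
      ((homogeneousComponent_isHomogeneous i c).mul ha)
  rw [homogeneousComponent_of_mem hmem]

theorem comp_mul {a : MvPolynomial σ F} {e : ℕ} (ha : a.IsHomogeneous e)
    (c : MvPolynomial σ F) (d : ℕ) :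
    homogeneousComponent (d + e) (c * a) = homogeneousComponent d c * a := by
  rw [comp_mul_key ha]
  simp only [add_left_inj]
  rw [Finset.sum_ite_eq]
  split_ifs with h
  · rfl
  · rw [homogeneousComponent_eq_zero, zero_mul]
    simpa using h

theorem comp_mul_lt {a : MvPolynomial σ F} {e : ℕ} (ha : a.IsHomogeneous e)
    (c : MvPolynomial σ F) {d : ℕ} (hd : d < e) :
    homogeneousComponent d (c * a) = 0 := by
  rw [comp_mul_key ha]
  refine Finset.sum_eq_zero fun i _ => ?_
  rw [if_neg]
  omega



theorem lemA (S : Set (MvPolynomial σ F))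
    (hS : ∀ x ∈ S, ∃ d : ℕ, x.IsHomogeneous d)
    {a b : MvPolynomial σ F} {ea eb : ℕ} (hea : 0 < ea)
    (ha : a.IsHomogeneous ea) (hb : b.IsHomogeneous eb)
    (h1 : NZD (Ideal.span S) a)
    (h2 : NZD (Ideal.span (insert a S)) b) :
    NZD (Ideal.span S) b ∧ NZD (Ideal.span (insert b S)) a := by
  have P1 : NZD (Ideal.span S) b := by
    -- first for homogeneous z, by strong induction on the degree
    have main : ∀ d : ℕ, ∀ z : MvPolynomial σ F, z.IsHomogeneous d →
        z * b ∈ Ideal.span S → z ∈ Ideal.span S := by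
      intro d
      induction d using Nat.strong_induction_on with
      | _ d IHd =>
        intro z hz hzb
        have hz2 : z ∈ Ideal.span (insert a S) :=
          h2 z (Ideal.span_mono (Set.subset_insert a S) hzb)
        rw [Ideal.span_insert] at hz2
        obtain ⟨v, hv, u, hu, huv⟩ := Submodule.mem_sup.mp hz2
        rw [Ideal.mem_span_singleton'] at hv
        obtain ⟨c, rfl⟩ := hv
        -- z = c * a + u
        have hzcomp : homogeneousComponent d z = z := by
          rw [homogeneousComponent_of_mem ((mem_homogeneousSubmodule _ _).mpr hz), if_pos rfl]
        by_cases hd : ea ≤ d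
        · set c' := homogeneousComponent (d - ea) c with hc'
          have hz' : z = c' * a + homogeneousComponent d u := by
            have h := congrArg (homogeneousComponent d) huv
            rw [map_add, hzcomp, show d = (d - ea) + ea by omega, comp_mul ha] at h
            rw [show d - ea + ea = d by omega] at h
            exact h.symm
          have hc'b : (c' * b) * a ∈ Ideal.span S := by
            have : (c' * a) * b ∈ Ideal.span S := by
              have h4 : (c' * a + homogeneousComponent d u) * b ∈ Ideal.span S := by
                rw [← hz']; exact hzb
              rw [add_mul] at h4
              have h5 : homogeneousComponent d u * b ∈ Ideal.span S :=
                Ideal.mul_mem_right _ _ (comp_mem S hS hu d)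
              have := Submodule.sub_mem _ h4 h5
              simpa using this
            rw [show (c' * b) * a = (c' * a) * b by ring]; exact this
          have hcb : c' * b ∈ Ideal.span S := h1 _ hc'b
          have hc'mem : c' ∈ Ideal.span S :=
            IHd (d - ea) (by omega) c' (homogeneousComponent_isHomogeneous _ _) hcb
          rw [hz']
          exact Submodule.add_mem _ (Ideal.mul_mem_right _ _ hc'mem) (comp_mem S hS hu d)
        · -- d < ea : the a-part contributes nothing in degree d
          have hz' : z = homogeneousComponent d u := by
            have h := congrArg (homogeneousComponent d) huv
            rw [map_add, hzcomp, comp_mul_lt ha c (by omega), zero_add] at h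
            exact h.symm
          rw [hz']
          exact comp_mem S hS hu d
    -- now for general z, via homogeneous components
    intro z hzb
    rw [← sum_homogeneousComponent z]
    refine Submodule.sum_mem _ fun i _ => ?_
    refine main i _ (homogeneousComponent_isHomogeneous _ _) ?_
    have := comp_mem S hS hzb (i + eb)
    rwa [comp_mul hb z i] at this
  refine ⟨P1, ?_⟩
  -- part 2 needs no grading
  intro z hza
  rw [Ideal.span_insert] at hza ⊢
  obtain ⟨v, hv, u, hu, huv⟩ := Submodule.mem_sup.mp hza
  rw [Ideal.mem_span_singleton'] at hv
  obtain ⟨c, rfl⟩ := hv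
  -- z * a = c * b + u
  have hcb : c ∈ Ideal.span (insert a S) := by
    refine h2 c ?_
    rw [Ideal.span_insert]
    refine Submodule.mem_sup.mpr ⟨z * a, ?_, -u, Submodule.neg_mem _ hu, by
      rw [← huv]; ring⟩
    · rw [Ideal.mem_span_singleton']
      exact ⟨z, rfl⟩
  rw [Ideal.span_insert] at hcb
  obtain ⟨v', hv', u', hu', huv'⟩ := Submodule.mem_sup.mp hcb
  rw [Ideal.mem_span_singleton'] at hv'
  obtain ⟨w, rfl⟩ := hv'
  -- c = w * a + u'
  have key : (z - w * b) * a ∈ Ideal.span S := by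
    have : (z - w * b) * a = u' * b + u := by
      linear_combination -huv - b * huv'
    rw [this]
    exact Submodule.add_mem _ (Ideal.mul_mem_right _ _ hu') hu
  have hzwb : z - w * b ∈ Ideal.span S := h1 _ key
  refine Submodule.mem_sup.mpr ⟨w * b, ?_, z - w * b, hzwb, by ring⟩
  rw [Ideal.mem_span_singleton']
  exact ⟨w, rfl⟩

end StmtAux

open StmtAux

/-- `f 0, f 1, ..., f (k-1)` is a partial regular sequence in `F[x_1,...,x_n]`:
`f 0 ≠ 0` and each subsequent `f i` is a non-zero divisor in the quotient by the
ideal generated by its predecessors. -/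
def IsPartialRegSeq (F : Type) [Field F] (σ : Type) {k : ℕ}
    (f : Fin k → MvPolynomial σ F) : Prop :=
  (∀ i : Fin k, i.val = 0 → f i ≠ 0) ∧
  ∀ i : Fin k, 0 < i.val →
    ∀ g : MvPolynomial σ F,
      Ideal.Quotient.mk (Ideal.span (f '' {j | j < i})) (g * f i) = 0 →
      Ideal.Quotient.mk (Ideal.span (f '' {j | j < i})) g = 0

/-- If `f 0, ..., f (k-1)` is a partial regular sequence of homogeneous polynomials,
and each `f i` splits into a product of linear forms `f i = ℓ i 0 ⋯ ℓ i (N i - 1)`,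
then for every choice of indices `j i`, the linear forms `ℓ 0 (j 0), ..., ℓ (k-1) (j (k-1))`
again form a partial regular sequence. -/
theorem stmt2 (F : Type) [Field F] (n k : ℕ) (N : Fin k → ℕ)
    (f : Fin k → MvPolynomial (Fin n) F)
    (hhom : ∀ i, ∃ d : ℕ, 0 < d ∧ (f i).IsHomogeneous d)
    (hreg : IsPartialRegSeq F (Fin n) f)
    (ℓ : (i : Fin k) → Fin (N i) → MvPolynomial (Fin n) F)
    (hlin : ∀ i t, (ℓ i t).IsHomogeneous 1)
    (hsplit : ∀ i, f i = ∏ t : Fin (N i), ℓ i t) :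
    ∀ j : (i : Fin k) → Fin (N i),
      IsPartialRegSeq F (Fin n) (fun i => ℓ i (j i)) := by
  intro j
  have hfac : ∀ i : Fin k, f i = ℓ i (j i) * ∏ t ∈ Finset.univ.erase (j i), ℓ i t :=
    fun i => (hsplit i).trans (Finset.mul_prod_erase _ _ (Finset.mem_univ (j i))).symm
  have KEY : ∀ m : ℕ, IsPartialRegSeq F (Fin n)
      (fun t : Fin k => if t.val < m then ℓ t (j t) else f t) := by
    intro m
    induction m with
    | zero =>
      have he : (fun t : Fin k => if t.val < 0 then ℓ t (j t) else f t) = f :=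
        funext fun t => if_neg (Nat.not_lt_zero _)
      rw [he]; exact hreg
    | succ m IH =>
      by_cases hmk : m < k
      swap
      · have he : (fun t : Fin k => if t.val < m + 1 then ℓ t (j t) else f t)
            = (fun t : Fin k => if t.val < m then ℓ t (j t) else f t) :=
          funext fun t => by
            have := t.isLt
            rw [if_pos (show t.val < m + 1 by omega), if_pos (show t.val < m by omega)]
        rw [he]; exact IH
      -- main case : m < k
      set s : Fin k → MvPolynomial (Fin n) F :=
        (fun t : Fin k => if t.val < m then ℓ t (j t) else f t) with hs
      set s' : Fin k → MvPolynomial (Fin n) F :=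
        (fun t : Fin k => if t.val < m + 1 then ℓ t (j t) else f t) with hs'
      have hslt : ∀ t : Fin k, t.val < m → s t = ℓ t (j t) := by
        intro t ht; simp only [hs]; rw [if_pos ht]
      have hsge : ∀ t : Fin k, ¬ t.val < m → s t = f t := by
        intro t ht; simp only [hs]; rw [if_neg ht]
      have hs'lt : ∀ t : Fin k, t.val < m + 1 → s' t = ℓ t (j t) := by
        intro t ht; simp only [hs']; rw [if_pos ht]
      have hs'ge : ∀ t : Fin k, ¬ t.val < m + 1 → s' t = f t := by
        intro t ht; simp only [hs']; rw [if_neg ht]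
      have hshom : ∀ t : Fin k, ∃ d, (s t).IsHomogeneous d := by
        intro t
        by_cases h : t.val < m
        · exact ⟨1, by rw [hslt t h]; exact hlin t (j t)⟩
        · obtain ⟨d, _, hd⟩ := hhom t
          exact ⟨d, by rw [hsge t h]; exact hd⟩
      have IH' : ∀ i : Fin k, 0 < i.val → NZD (Ideal.span (s '' {t | t < i})) (s i) := by
        intro i hi z hz
        have h := IH.2 i hi z (by rw [Ideal.Quotient.eq_zero_iff_mem]; exact hz)
        rwa [Ideal.Quotient.eq_zero_iff_mem] at h
      refine ⟨?_, ?_⟩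
      · intro i hi
        rw [hs'lt i (by omega)]
        intro h0
        exact hreg.1 i hi (by rw [hfac i, h0, zero_mul])
      · intro i hi g hg
        rw [Ideal.Quotient.eq_zero_iff_mem] at hg ⊢
        rcases Nat.lt_trichotomy i.val m with hc | hc | hc
        · -- i.val < m : nothing changed
          have heq : s' '' {t | t < i} = s '' {t | t < i} :=
            Set.image_congr fun t ht => by
              have htv : t.val < i.val := ht
              rw [hs'lt t (by omega), hslt t (by omega)]
          have hei : s' i = s i := by rw [hs'lt i (by omega), hslt i hc]
          rw [heq, hei] at hg
          rw [heq]
          exact IH' i hi g hg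
        · -- i.val = m : divisor trick
          have heq : s' '' {t | t < i} = s '' {t | t < i} :=
            Set.image_congr fun t ht => by
              have htv : t.val < i.val := ht
              rw [hs'lt t (by omega), hslt t (by omega)]
          rw [heq, hs'lt i (by omega)] at hg
          rw [heq]
          refine IH' i hi g ?_
          rw [hsge i (by omega)]
          have hfi : g * f i = (g * ℓ i (j i)) * ∏ t ∈ Finset.univ.erase (j i), ℓ i t := by
            rw [hfac i]; ring
          rw [hfi]
          exact Ideal.mul_mem_right _ _ hg
        · -- m < i.val : the interesting case
          set mf : Fin k := ⟨m, hmk⟩ with hmf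
          set A : Set (MvPolynomial (Fin n) F) :=
            s '' {t : Fin k | t.val < i.val ∧ t ≠ mf} with hAdef
          have hmfval : mf.val = m := rfl
          have hagree : ∀ t : Fin k, t ≠ mf → s' t = s t := by
            intro t ht
            by_cases h : t.val < m
            · rw [hs'lt t (by omega), hslt t h]
            · have htv : t.val ≠ m := fun he => ht (Fin.ext (by rw [he, hmfval]))
              rw [hs'ge t (by omega), hsge t h]
          have hset1 : {t : Fin k | t < i} = insert mf {t : Fin k | t.val < i.val ∧ t ≠ mf} := by
            ext t
            simp only [Set.mem_insert_iff, Set.mem_setOf_eq, Fin.lt_def]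
            constructor
            · intro h
              by_cases he : t = mf
              · exact Or.inl he
              · exact Or.inr ⟨h, he⟩
            · rintro (rfl | ⟨h1, -⟩)
              · rw [hmfval]; omega
              · exact h1
          have E1 : s' '' {t | t < i} = insert (ℓ mf (j mf)) A := by
            rw [hset1, Set.image_insert_eq]
            congr 1
            · rw [hs'lt mf (by rw [hmfval]; omega)]
            · exact Set.image_congr fun t ht => hagree t ht.2
          have E2 : s '' {t | t < i} = insert (f mf) A := by
            rw [hset1, Set.image_insert_eq, hsge mf (by rw [hmfval]; omega)]
          -- the permuted regularity, by induction with lemA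
          have B : ∀ q : ℕ, m ≤ q → q ≤ i.val →
              NZD (Ideal.span (s '' {t : Fin k | t.val < q ∧ t ≠ mf})) (f mf) := by
            intro q hq
            induction q, hq using Nat.le_induction with
            | base =>
              intro _
              have hset : {t : Fin k | t.val < m ∧ t ≠ mf} = {t : Fin k | t < mf} := by
                ext t
                simp only [Set.mem_setOf_eq, Fin.lt_def, hmfval]
                exact ⟨fun h => h.1, fun h => ⟨h, fun he => by
                  rw [he, hmfval] at h; omega⟩⟩
              rw [hset]
              rcases Nat.eq_zero_or_pos m with hm0 | hmpos
              · have hempty : {t : Fin k | t < mf} = ∅ := by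
                  ext t
                  simp only [Set.mem_setOf_eq, Fin.lt_def, hmfval, hm0,
                    Set.mem_empty_iff_false, iff_false]
                  omega
                rw [hempty, Set.image_empty, Ideal.span_empty]
                intro z hz
                rw [Ideal.mem_bot] at hz ⊢
                have hne : f mf ≠ 0 := by
                  have h0 := IH.1 mf (by rw [hmfval, hm0])
                  rwa [hsge mf (by rw [hmfval]; omega)] at h0
                rcases mul_eq_zero.mp hz with h | h
                · exact h
                · exact absurd h hne
              · have h := IH' mf (by rw [hmfval]; omega)
                rwa [hsge mf (by rw [hmfval]; omega)] at h
            | succ q hq IHq =>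
              intro hqi
              have hqk : q < k := by have := i.isLt; omega
              set qf : Fin k := ⟨q, hqk⟩ with hqf
              have hqfval : qf.val = q := rfl
              rcases Nat.eq_or_lt_of_le hq with hq0 | hqgt
              · -- q = m
                have hset : {t : Fin k | t.val < q + 1 ∧ t ≠ mf}
                    = {t : Fin k | t.val < q ∧ t ≠ mf} := by
                  ext t
                  simp only [Set.mem_setOf_eq]
                  constructor
                  · rintro ⟨h1, h2⟩
                    have htv : t.val ≠ m := fun he => h2 (Fin.ext (by rw [he, hmfval]))
                    exact ⟨by omega, h2⟩
                  · rintro ⟨h1, h2⟩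
                    exact ⟨by omega, h2⟩
                rw [hset]
                exact IHq (by omega)
              · -- m < q
                have hsplitset : {t : Fin k | t.val < q + 1 ∧ t ≠ mf}
                    = insert qf {t : Fin k | t.val < q ∧ t ≠ mf} := by
                  ext t
                  simp only [Set.mem_insert_iff, Set.mem_setOf_eq]
                  constructor
                  · rintro ⟨h1, h2⟩
                    by_cases he : t = qf
                    · exact Or.inl he
                    · have htv : t.val ≠ q := fun hv => he (Fin.ext (by rw [hv, hqfval]))
                      exact Or.inr ⟨by omega, h2⟩
                  · rintro (rfl | ⟨h1, h2⟩)
                    · refine ⟨by rw [hqfval]; omega, fun he => ?_⟩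
                      have : qf.val = mf.val := congrArg Fin.val he
                      rw [hqfval, hmfval] at this
                      omega
                    · exact ⟨by omega, h2⟩
                have hqprefix : {t : Fin k | t < qf}
                    = insert mf {t : Fin k | t.val < q ∧ t ≠ mf} := by
                  ext t
                  simp only [Set.mem_insert_iff, Set.mem_setOf_eq, Fin.lt_def, hqfval]
                  constructor
                  · intro h
                    by_cases he : t = mf
                    · exact Or.inl he
                    · exact Or.inr ⟨h, he⟩
                  · rintro (rfl | ⟨h1, -⟩)
                    · rw [hmfval]; omega
                    · exact h1
                have h2 : NZD (Ideal.span
                    (insert (f mf) (s '' {t : Fin k | t.val < q ∧ t ≠ mf}))) (f qf) := by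
                  have h := IH' qf (by rw [hqfval]; omega)
                  rw [hqprefix, Set.image_insert_eq, hsge mf (by rw [hmfval]; omega),
                    hsge qf (by rw [hqfval]; omega)] at h
                  exact h
                obtain ⟨d, hd, hdh⟩ := hhom mf
                obtain ⟨e, he, heh⟩ := hhom qf
                have hA : ∀ x ∈ s '' {t : Fin k | t.val < q ∧ t ≠ mf},
                    ∃ d, x.IsHomogeneous d := by
                  rintro x ⟨t, -, rfl⟩; exact hshom t
                have hres := (StmtAux.lemA _ hA hd hdh heh (IHq (by omega)) h2).2
                rw [hsplitset, Set.image_insert_eq, hsge qf (by rw [hqfval]; omega)]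
                exact hres
          have hB := B i.val (by omega) (le_refl _)
          -- main chain
          rw [hs'ge i (by omega), E1] at hg
          have stepA : ∀ x ∈ Ideal.span (insert (ℓ mf (j mf)) A),
              (∏ t ∈ Finset.univ.erase (j mf), ℓ mf t) * x ∈ Ideal.span (insert (f mf) A) := by
            intro x hx
            induction hx using Submodule.span_induction with
            | mem x hxm =>
              rcases Set.mem_insert_iff.mp hxm with rfl | hxA
              · have hrl : (∏ t ∈ Finset.univ.erase (j mf), ℓ mf t) * ℓ mf (j mf) = f mf := by
                  rw [hfac mf]; ring
                rw [hrl]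
                exact Ideal.subset_span (Set.mem_insert _ _)
              · exact Ideal.mul_mem_left _ _ (Ideal.subset_span (Set.mem_insert_of_mem _ hxA))
            | zero => rw [mul_zero]; exact (Ideal.span _).zero_mem
            | add x y _ _ hx hy => rw [mul_add]; exact Submodule.add_mem _ hx hy
            | smul c x _ hx =>
              rw [smul_eq_mul, mul_left_comm]
              exact Ideal.mul_mem_left _ _ hx
          have step1 : ((∏ t ∈ Finset.univ.erase (j mf), ℓ mf t) * g) * f i
              ∈ Ideal.span (insert (f mf) A) := by
            have h := stepA _ hg
            rwa [← mul_assoc] at h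
          have step2 : (∏ t ∈ Finset.univ.erase (j mf), ℓ mf t) * g
              ∈ Ideal.span (insert (f mf) A) := by
            have h := IH' i hi ((∏ t ∈ Finset.univ.erase (j mf), ℓ mf t) * g) ?_
            · rwa [E2] at h
            · rw [E2, hsge i (by omega)]
              exact step1
          obtain ⟨b, z, hzmem, heqz⟩ := Ideal.mem_span_insert.mp step2
          have hz2 : (g - b * ℓ mf (j mf)) * (∏ t ∈ Finset.univ.erase (j mf), ℓ mf t)
              ∈ Ideal.span A := by
            have hrw : (g - b * ℓ mf (j mf)) * (∏ t ∈ Finset.univ.erase (j mf), ℓ mf t) = z := by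
              linear_combination heqz + b * hfac mf
            rw [hrw]; exact hzmem
          have hz3 : (g - b * ℓ mf (j mf)) * f mf ∈ Ideal.span A := by
            have hrw : (g - b * ℓ mf (j mf)) * f mf
                = ((g - b * ℓ mf (j mf)) * (∏ t ∈ Finset.univ.erase (j mf), ℓ mf t))
                    * ℓ mf (j mf) := by
              rw [hfac mf]; ring
            rw [hrw]
            exact Ideal.mul_mem_right _ _ hz2
          have hgb : g - b * ℓ mf (j mf) ∈ Ideal.span A := hB _ hz3
          rw [E1]
          exact Ideal.mem_span_insert.mpr ⟨b, g - b * ℓ mf (j mf), hgb, by ring⟩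
  have hK := KEY k
  have he : (fun t : Fin k => if t.val < k then ℓ t (j t) else f t) = fun i => ℓ i (j i) :=
    funext fun t => if_pos t.isLt
  rwa [he] at hK
end

section
/- Suppose f_1 = x_1·L_1, ..., f_n = x_n·L_n is a regular sequence in F[x_1,...,x_n], where each L_i is a linear form. Then the quotient F[x_1,...,x_n]/⟨f_1,...,f_n⟩ is spanned, as an F-vector space, by the equivalence classes of the square-free monomials of F[x_1,...,x_n]. -/
open MvPolynomial

set_option maxHeartbeats 1000000
set_option synthInstance.maxHeartbeats 200000

section All
variable {F : Type} [Field F]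



lemma degree_one_single {σ : Type*} (d : σ →₀ ℕ) (h : Finsupp.degree d = 1) :
    ∃ j, d = Finsupp.single j 1 := by
  have hsupp : d.support.Nonempty := by
    by_contra hc
    rw [Finset.not_nonempty_iff_eq_empty] at hc
    rw [Finsupp.support_eq_empty.mp hc, map_zero] at h; simp at h
  classical
  obtain ⟨j, hj⟩ := hsupp
  refine ⟨j, ?_⟩
  have hdj : 1 ≤ d j := Nat.one_le_iff_ne_zero.mpr (Finsupp.mem_support_iff.mp hj)
  have hle : d j ≤ Finsupp.degree d := Finset.single_le_sum (fun i _ => Nat.zero_le _) hj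
  ext i
  rcases eq_or_ne i j with rfl | hij
  · rw [Finsupp.single_eq_same]; omega
  · rw [Finsupp.single_eq_of_ne' (Ne.symm hij)]
    by_contra hne
    have hi : i ∈ d.support := Finsupp.mem_support_iff.mpr hne
    have h2 : d i + ∑ a ∈ d.support.erase i, d a = Finsupp.degree d :=
      Finset.add_sum_erase _ d hi
    have hji : j ∈ d.support.erase i := Finset.mem_erase.mpr ⟨Ne.symm hij, hj⟩
    have h3 : d j ≤ ∑ a ∈ d.support.erase i, d a :=
      Finset.single_le_sum (fun i _ => Nat.zero_le _) hji
    omega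


lemma linear_eq_sum {n : ℕ} (L : MvPolynomial (Fin n) F) (h : L.IsHomogeneous 1) :
    L = ∑ j, C (coeff (Finsupp.single j 1) L) * X j := by
  ext d
  rw [coeff_sum]
  simp only [coeff_C_mul, coeff_X']
  rcases eq_or_ne (Finsupp.degree d) 1 with hd | hd
  · obtain ⟨j0, rfl⟩ := degree_one_single d hd
    rw [Finset.sum_eq_single j0]
    · simp
    · intro b _ hbj
      rw [if_neg, mul_zero]
      exact fun hc => hbj (Finsupp.single_left_inj one_ne_zero |>.mp hc)
    · simp
  · rw [h.coeff_eq_zero hd, Finset.sum_eq_zero]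
    intro b _
    rw [if_neg, mul_zero]
    rintro rfl
    exact hd (by classical simp [Finsupp.degree_single])

lemma linear_eval {n : ℕ} (L : MvPolynomial (Fin n) F) (h : L.IsHomogeneous 1) (p : Fin n → F) :
    eval p L = ∑ j, coeff (Finsupp.single j 1) L * p j := by
  conv_lhs => rw [linear_eq_sum L h]
  simp





lemma finSuccEquiv_rename_succ {m : ℕ} (w : MvPolynomial (Fin m) F) :
    finSuccEquiv F m (rename Fin.succ w) = Polynomial.C w := by
  induction w using MvPolynomial.induction_on with
  | C a =>
      rw [rename_C]
      have := MvPolynomial.finSuccEquiv_comp_C_eq_C (R := F) m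
      have h2 := congrArg (fun (f : F →+* MvPolynomial (Fin (m+1)) F) => f a) this
      simp only [RingHom.comp_apply] at h2
      calc finSuccEquiv F m (C a)
          = finSuccEquiv F m ((finSuccEquiv F m).symm (Polynomial.C (C a))) := by rw [← h2]; rfl
        _ = Polynomial.C (C a) := (finSuccEquiv F m).apply_symm_apply _
  | add p q hp hq => simp [hp, hq]
  | mul_X p i hp => simp [hp, finSuccEquiv_X_succ]

lemma mem_span_of_aeval_cases_eq_zero {m : ℕ} (w : MvPolynomial (Fin m) F)
    (u : MvPolynomial (Fin (m+1)) F)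
    (hu : aeval (Fin.cases w X : Fin (m+1) → MvPolynomial (Fin m) F) u = 0) :
    u ∈ Ideal.span {X 0 - rename Fin.succ w} := by
  set e := finSuccEquiv F m with he
  set er : MvPolynomial (Fin (m+1)) F →+* Polynomial (MvPolynomial (Fin m) F) :=
    e.toRingEquiv.toRingHom with her
  have key : ∀ v : MvPolynomial (Fin (m+1)) F,
      Polynomial.eval w (e v) = aeval (Fin.cases w X : Fin (m+1) → MvPolynomial (Fin m) F) v := by
    intro v
    have : (Polynomial.evalRingHom w).comp er
        = ((aeval (Fin.cases w X : Fin (m+1) → MvPolynomial (Fin m) F)).toRingHom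
            : MvPolynomial (Fin (m+1)) F →+* _) := by
      apply MvPolynomial.ringHom_ext
      · intro a
        simp only [RingHom.comp_apply]
        have : er (C a) = Polynomial.C (C a) := by
          rw [her]
          show finSuccEquiv F m (C a) = Polynomial.C (C a)
          have h2 := congrArg (fun (f : F →+* MvPolynomial (Fin (m+1)) F) => f a)
            (MvPolynomial.finSuccEquiv_comp_C_eq_C (R := F) m)
          simp only [RingHom.comp_apply] at h2
          calc finSuccEquiv F m (C a)
              = finSuccEquiv F m ((finSuccEquiv F m).symm (Polynomial.C (C a))) := by rw [← h2]; rfl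
            _ = Polynomial.C (C a) := (finSuccEquiv F m).apply_symm_apply _
        rw [this]
        simp [aeval_C, algebraMap_eq]
      · intro i
        induction i using Fin.cases with
        | zero =>
            show Polynomial.eval w (er (X 0)) = _
            rw [her]; show Polynomial.eval w (finSuccEquiv F m (X 0)) = _
            simp [finSuccEquiv_X_zero]
        | succ j =>
            show Polynomial.eval w (er (X j.succ)) = _
            rw [her]; show Polynomial.eval w (finSuccEquiv F m (X j.succ)) = _
            simp [finSuccEquiv_X_succ]
    exact congrArg (fun (f : MvPolynomial (Fin (m+1)) F →+* MvPolynomial (Fin m) F) => f v) this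
  have hroot : Polynomial.IsRoot (e u) w := by
    unfold Polynomial.IsRoot
    rw [key u, hu]
  obtain ⟨q, hq⟩ := Polynomial.dvd_iff_isRoot.mpr hroot
  have : u = (X 0 - rename Fin.succ w) * e.symm q := by
    apply e.injective
    rw [map_mul, map_sub, finSuccEquiv_X_zero, finSuccEquiv_rename_succ,
      AlgEquiv.apply_symm_apply, ← hq]
  rw [this]
  exact Ideal.mul_mem_right _ _ (Ideal.subset_span rfl)


-- A1
lemma aeval_cases_rename_succ {m : ℕ} (w : MvPolynomial (Fin m) F)
    (u : MvPolynomial (Fin m) F) :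
    aeval (Fin.cases w X : Fin (m+1) → MvPolynomial (Fin m) F) (rename Fin.succ u) = u := by
  rw [aeval_rename]
  have h : ((Fin.cases w X : Fin (m+1) → MvPolynomial (Fin m) F) ∘ Fin.succ) = X :=
    funext fun i => rfl
  rw [h]
  exact aeval_X_left_apply u

-- A2
lemma rename_succ_aeval_linear {m : ℕ} (w : MvPolynomial (Fin m) F)
    (ℓ : MvPolynomial (Fin (m+1)) F) (hℓ : ℓ.IsHomogeneous 1) :
    rename Fin.succ (aeval (Fin.cases w X : Fin (m+1) → MvPolynomial (Fin m) F) ℓ)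
      = (ℓ - C (coeff (Finsupp.single 0 1) ℓ) * X 0)
        + C (coeff (Finsupp.single 0 1) ℓ) * rename Fin.succ w := by
  set cc : Fin (m+1) → F := fun k => coeff (Finsupp.single k 1) ℓ with hcc
  have h0 : coeff (Finsupp.single 0 1) ℓ = cc 0 := rfl
  rw [h0]
  have hrep : ℓ = ∑ k, C (cc k) * X k := linear_eq_sum ℓ hℓ
  rw [hrep, map_sum, map_sum, Fin.sum_univ_succ, Fin.sum_univ_succ]
  simp only [map_mul, aeval_C, algebraMap_eq, rename_C, aeval_X, Fin.cases_zero,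
    Fin.cases_succ, rename_X]
  ring

-- A3
lemma aeval_cases_isHomogeneous {m : ℕ} (w : MvPolynomial (Fin m) F)
    (hw : w.IsHomogeneous 1 ∨ w = 0)
    (ℓ : MvPolynomial (Fin (m+1)) F) (hℓ : ℓ.IsHomogeneous 1) :
    (aeval (Fin.cases w X : Fin (m+1) → MvPolynomial (Fin m) F) ℓ).IsHomogeneous 1 := by
  have hrep : ℓ = ∑ k, C (coeff (Finsupp.single k 1) ℓ) * X k := linear_eq_sum ℓ hℓ
  rw [hrep, map_sum]
  apply MvPolynomial.IsHomogeneous.sum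
  intro k _
  rw [map_mul, aeval_C, algebraMap_eq]
  apply MvPolynomial.IsHomogeneous.C_mul
  induction k using Fin.cases with
  | zero =>
      rw [aeval_X, Fin.cases_zero]
      rcases hw with hw | hw
      · exact hw
      · rw [hw]; exact isHomogeneous_zero _ _ _
  | succ j => rw [aeval_X, Fin.cases_succ]; exact isHomogeneous_X _ _



section Transfer
variable {m : ℕ} (L : Fin (m+1) → MvPolynomial (Fin (m+1)) F)

lemma star_c_ne_zero
    (hlin : ∀ i, (L i).IsHomogeneous 1)
    (hstar : ∀ (S : Finset (Fin (m+1))) (q : Fin (m+1) → F),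
        (∑ i, C (q i) * (if i ∈ S then X i else L i)) = 0 → q = 0) :
    coeff (Finsupp.single 0 1) (L 0) ≠ 0 := by
  intro hc0
  classical
  set cc : Fin (m+1) → F := fun k => coeff (Finsupp.single k 1) (L 0) with hcc
  set S : Finset (Fin (m+1)) := Finset.univ.erase 0 with hS
  set q : Fin (m+1) → F := fun k => if k = 0 then 1 else -(cc k) with hq
  have hL0 : L 0 = C (cc 0) * X 0 + ∑ k ∈ Finset.univ.erase 0, C (cc k) * X k := by
    conv_lhs => rw [linear_eq_sum (L 0) (hlin 0)]
    exact (Finset.add_sum_erase _ _ (Finset.mem_univ 0)).symm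
  have hsum : (∑ i, C (q i) * (if i ∈ S then X i else L i)) = 0 := by
    rw [← Finset.add_sum_erase _ _ (Finset.mem_univ (0 : Fin (m+1)))]
    have h1 : C (q 0) * (if (0:Fin (m+1)) ∈ S then X 0 else L 0) = L 0 := by
      rw [hS, hq]; simp
    rw [h1]
    have h2 : ∀ k ∈ Finset.univ.erase (0 : Fin (m+1)),
        C (q k) * (if k ∈ S then X k else L k) = -(C (cc k) * X k) := by
      intro k hk
      have hk0 : k ≠ 0 := (Finset.mem_erase.mp hk).1
      rw [hS, hq]
      simp [hk0, hk]
    rw [Finset.sum_congr rfl h2, Finset.sum_neg_distrib]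
    rw [hL0]
    have hcc0 : cc 0 = 0 := hc0
    rw [hcc0]
    simp
  have hq0 := congrFun (hstar S q hsum) 0
  rw [hq] at hq0
  simp at hq0

lemma star_transfer
    (hstar : ∀ (S : Finset (Fin (m+1))) (q : Fin (m+1) → F),
        (∑ i, C (q i) * (if i ∈ S then X i else L i)) = 0 → q = 0)
    (Lred : Fin m → MvPolynomial (Fin m) F) (t : Fin m → F)
    (u0 : MvPolynomial (Fin (m+1)) F)
    (hσ : ∀ i : Fin m, rename Fin.succ (Lred i) = L i.succ - C (t i) * u0)
    (S'f : Finset (Fin m) → Finset (Fin (m+1)))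
    (hmem0 : ∀ S, (if (0 : Fin (m+1)) ∈ S'f S then (X 0 : MvPolynomial (Fin (m+1)) F) else L 0) = u0)
    (hmemsucc : ∀ S (i : Fin m), i.succ ∈ S'f S ↔ i ∈ S) :
    ∀ (S : Finset (Fin m)) (q : Fin m → F),
      (∑ i, C (q i) * (if i ∈ S then X i else Lred i)) = 0 → q = 0 := by
  classical
  intro S q hq
  set T : F := ∑ i, (if i ∈ S then 0 else q i * t i) with hT
  set q' : Fin (m+1) → F := Fin.cases (-T) q with hq'
  have hq'succ : ∀ i : Fin m, q' i.succ = q i := fun i => by rw [hq']; simp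
  have hq'0 : q' 0 = -T := by rw [hq']; simp
  -- push the hypothesis through rename
  have hq2 : (∑ i, C (q i) * (if i ∈ S then X i.succ
      else (L i.succ - C (t i) * u0))) = 0 := by
    have h := congrArg (rename (Fin.succ : Fin m → Fin (m+1))) hq
    rw [map_sum, map_zero] at h
    convert h using 2 with i
    rw [map_mul, rename_C, apply_ite (rename Fin.succ), rename_X, hσ i]
  have htail : ∀ i : Fin m,
      C (q' i.succ) * (if i.succ ∈ S'f S then X i.succ else L i.succ)
        = C (q i) * (if i ∈ S then X i.succ else (L i.succ - C (t i) * u0))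
          + C (if i ∈ S then 0 else q i * t i) * u0 := by
    intro i
    rw [hq'succ]
    by_cases hi : i ∈ S
    · rw [if_pos ((hmemsucc S i).mpr hi), if_pos hi, if_pos hi]
      simp
    · rw [if_neg (fun hcon => hi ((hmemsucc S i).mp hcon)), if_neg hi, if_neg hi]
      rw [map_mul]
      ring
  have hmain : (∑ k, C (q' k) * (if k ∈ S'f S then X k else L k)) = 0 := by
    rw [Fin.sum_univ_succ, hq'0, hmem0 S, Finset.sum_congr rfl (fun i _ => htail i),
      Finset.sum_add_distrib, hq2, ← Finset.sum_mul, ← map_sum, ← hT, zero_add, map_neg]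
    ring
  have hz := hstar (S'f S) q' hmain
  funext i
  rw [← hq'succ i, hz]
  simp
end Transfer


noncomputable def targetSub (n : ℕ) (L : Fin n → MvPolynomial (Fin n) F) :
    Submodule F (MvPolynomial (Fin n) F) :=
  Submodule.span F (Set.range fun s : Finset (Fin n) => ∏ i ∈ s, (X i : MvPolynomial (Fin n) F))
    ⊔ (Ideal.span (Set.range fun i => X i * L i)).restrictScalars F

section SqMem
variable {m : ℕ}

def sqEmb (m : ℕ) : Fin m ↪ Fin (m+1) := ⟨Fin.succ, Fin.succ_injective m⟩

lemma rename_prod_eq (s : Finset (Fin m)) :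
    rename (Fin.succ : Fin m → Fin (m+1)) (∏ i ∈ s, (X i : MvPolynomial (Fin m) F))
      = ∏ j ∈ s.map (sqEmb m), (X j : MvPolynomial (Fin (m+1)) F) := by
  rw [map_prod, Finset.prod_map]
  exact Finset.prod_congr rfl fun x _ => by rw [rename_X]; rfl

lemma zero_not_mem_map (s : Finset (Fin m)) : (0 : Fin (m+1)) ∉ s.map (sqEmb m) := by
  intro h
  obtain ⟨i, _, hi⟩ := Finset.mem_map.mp h
  exact Fin.succ_ne_zero i hi

lemma rename_sq_mem (v : MvPolynomial (Fin m) F)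
    (hv : v ∈ Submodule.span F
        (Set.range fun s : Finset (Fin m) => ∏ i ∈ s, (X i : MvPolynomial (Fin m) F))) :
    rename (Fin.succ : Fin m → Fin (m+1)) v ∈ Submodule.span F
        (Set.range fun s : Finset (Fin (m+1)) => ∏ i ∈ s, (X i : MvPolynomial (Fin (m+1)) F)) := by
  have hmem := Submodule.mem_map_of_mem (f := (rename (Fin.succ : Fin m → Fin (m+1))).toLinearMap) hv
  rw [Submodule.map_span] at hmem
  refine Submodule.span_mono ?_ hmem
  rintro x ⟨_, ⟨s, rfl⟩, rfl⟩
  exact ⟨s.map (sqEmb m), (rename_prod_eq s).symm⟩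

lemma X0_mul_rename_sq_mem (v : MvPolynomial (Fin m) F)
    (hv : v ∈ Submodule.span F
        (Set.range fun s : Finset (Fin m) => ∏ i ∈ s, (X i : MvPolynomial (Fin m) F))) :
    X 0 * rename (Fin.succ : Fin m → Fin (m+1)) v ∈ Submodule.span F
        (Set.range fun s : Finset (Fin (m+1)) => ∏ i ∈ s, (X i : MvPolynomial (Fin (m+1)) F)) := by
  have hmem := Submodule.mem_map_of_mem
    (f := (LinearMap.mulLeft F (X 0 : MvPolynomial (Fin (m+1)) F)).comp
      (rename (Fin.succ : Fin m → Fin (m+1))).toLinearMap) hv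
  rw [Submodule.map_span] at hmem
  refine Submodule.span_mono ?_ hmem
  rintro x ⟨_, ⟨s, rfl⟩, rfl⟩
  refine ⟨insert 0 (s.map (sqEmb m)), ?_⟩
  show (∏ j ∈ insert 0 (s.map (sqEmb m)), (X j : MvPolynomial (Fin (m+1)) F)) = _
  rw [Finset.prod_insert (zero_not_mem_map s)]
  simp only [LinearMap.comp_apply, LinearMap.mulLeft_apply, AlgHom.toLinearMap_apply]
  rw [rename_prod_eq]

end SqMem

lemma step_mem {m : ℕ}
    (IH : ∀ (L' : Fin m → MvPolynomial (Fin m) F),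
      (∀ i, (L' i).IsHomogeneous 1) →
      (∀ (S : Finset (Fin m)) (q : Fin m → F),
        (∑ i, C (q i) * (if i ∈ S then X i else L' i)) = 0 → q = 0) →
      ∀ g', g' ∈ targetSub m L')
    (L : Fin (m+1) → MvPolynomial (Fin (m+1)) F)
    (hlin : ∀ i, (L i).IsHomogeneous 1)
    (hstar : ∀ (S : Finset (Fin (m+1))) (q : Fin (m+1) → F),
        (∑ i, C (q i) * (if i ∈ S then X i else L i)) = 0 → q = 0) :
    ∀ g, g ∈ targetSub (m+1) L := by
  classical
  set c : F := coeff (Finsupp.single 0 1) (L 0) with hcdef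
  have hc : c ≠ 0 := star_c_ne_zero L hlin hstar
  set c0 : Fin (m+1) → F := fun k => coeff (Finsupp.single 0 1) (L k) with hc0def
  set w : MvPolynomial (Fin m) F :=
    -(C c⁻¹ * (aeval (Fin.cases 0 X : Fin (m+1) → MvPolynomial (Fin m) F) (L 0))) with hwdef
  have hwlin : w.IsHomogeneous 1 := by
    rw [hwdef]
    exact (((aeval_cases_isHomogeneous 0 (Or.inr rfl) (L 0) (hlin 0))).C_mul _).neg
  have hσw : rename (Fin.succ : Fin m → Fin (m+1)) w = X 0 - C c⁻¹ * L 0 := by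
    rw [hwdef, map_neg, map_mul, rename_C, rename_succ_aeval_linear 0 (L 0) (hlin 0)]
    rw [map_zero, mul_zero, add_zero]
    have hone : (C c⁻¹ : MvPolynomial (Fin (m+1)) F) * C c = 1 := by
      rw [← map_mul, inv_mul_cancel₀ hc, map_one]
    have : (C c⁻¹ : MvPolynomial (Fin (m+1)) F) * (L 0 - C c * X 0)
        = C c⁻¹ * L 0 - (C c⁻¹ * C c) * X 0 := by ring
    rw [this, hone, one_mul]
    ring
  set Lbar : Fin m → MvPolynomial (Fin m) F :=
    fun i => aeval (Fin.cases 0 X : Fin (m+1) → MvPolynomial (Fin m) F) (L i.succ) with hLbar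
  set Ltil : Fin m → MvPolynomial (Fin m) F :=
    fun i => aeval (Fin.cases w X : Fin (m+1) → MvPolynomial (Fin m) F) (L i.succ) with hLtil
  have hlinbar : ∀ i, (Lbar i).IsHomogeneous 1 :=
    fun i => aeval_cases_isHomogeneous 0 (Or.inr rfl) _ (hlin i.succ)
  have hlintil : ∀ i, (Ltil i).IsHomogeneous 1 :=
    fun i => aeval_cases_isHomogeneous w (Or.inl hwlin) _ (hlin i.succ)
  have hσbar : ∀ i : Fin m, rename Fin.succ (Lbar i) = L i.succ - C (c0 i.succ) * X 0 := by
    intro i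
    rw [hLbar]
    simp only []
    rw [rename_succ_aeval_linear 0 (L i.succ) (hlin i.succ), map_zero, mul_zero, add_zero]
  have hσtil : ∀ i : Fin m, rename Fin.succ (Ltil i)
      = L i.succ - C (c0 i.succ * c⁻¹) * L 0 := by
    intro i
    rw [hLtil]
    simp only []
    rw [rename_succ_aeval_linear w (L i.succ) (hlin i.succ), hσw, map_mul]
    ring
  have hstarbar : ∀ (S : Finset (Fin m)) (q : Fin m → F),
      (∑ i, C (q i) * (if i ∈ S then X i else Lbar i)) = 0 → q = 0 := by
    refine star_transfer L hstar Lbar (fun i => c0 i.succ) (X 0) hσbar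
      (fun S => insert 0 (S.map (sqEmb m))) ?_ ?_
    · intro S; rw [if_pos (Finset.mem_insert_self _ _)]
    · intro S i
      simp only [Finset.mem_insert]
      constructor
      · rintro (h | h)
        · exact absurd h (Fin.succ_ne_zero i)
        · obtain ⟨j, hj, hji⟩ := Finset.mem_map.mp h
          have hj' : j = i := Fin.succ_injective m hji
          rwa [← hj']
      · intro h; exact Or.inr (Finset.mem_map_of_mem _ h)
  have hstartil : ∀ (S : Finset (Fin m)) (q : Fin m → F),
      (∑ i, C (q i) * (if i ∈ S then X i else Ltil i)) = 0 → q = 0 := by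
    refine star_transfer L hstar Ltil (fun i => c0 i.succ * c⁻¹) (L 0) hσtil
      (fun S => S.map (sqEmb m)) ?_ ?_
    · intro S; rw [if_neg (zero_not_mem_map S)]
    · intro S i
      constructor
      · intro h
        obtain ⟨j, hj, hji⟩ := Finset.mem_map.mp h
        have hj' : j = i := Fin.succ_injective m hji
        rwa [← hj']
      · intro h; exact Finset.mem_map_of_mem _ h
  -- Step B : X 0 * h is always in the target
  have stepB : ∀ h : MvPolynomial (Fin (m+1)) F, X 0 * h ∈ targetSub (m+1) L := by
    intro h
    obtain ⟨v, hv, z, hz, hvz⟩ :=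
      Submodule.mem_sup.mp (IH Ltil hlintil hstartil
        (aeval (Fin.cases w X : Fin (m+1) → MvPolynomial (Fin m) F) h))
    have hzI : z ∈ Ideal.span (Set.range fun i => X i * Ltil i) := hz
    set u' : MvPolynomial (Fin (m+1)) F :=
      h - rename Fin.succ (aeval (Fin.cases w X : Fin (m+1) → MvPolynomial (Fin m) F) h) with hu'def
    have hu'0 : aeval (Fin.cases w X : Fin (m+1) → MvPolynomial (Fin m) F) u' = 0 := by
      rw [hu'def, map_sub, aeval_cases_rename_succ]
      ring
    have hu'mem : u' ∈ Ideal.span {C c⁻¹ * L 0} := by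
      have hmem := mem_span_of_aeval_cases_eq_zero w u' hu'0
      rw [hσw] at hmem
      have heq : (X 0 : MvPolynomial (Fin (m+1)) F) - (X 0 - C c⁻¹ * L 0) = C c⁻¹ * L 0 := by ring
      rwa [heq] at hmem
    obtain ⟨r, hr⟩ := Ideal.mem_span_singleton'.mp hu'mem
    have hdecomp : X 0 * h = X 0 * rename Fin.succ v + X 0 * rename Fin.succ z + X 0 * u' := by
      have h1 : rename (Fin.succ : Fin m → Fin (m+1))
          (aeval (Fin.cases w X : Fin (m+1) → MvPolynomial (Fin m) F) h)
          = rename Fin.succ v + rename Fin.succ z := by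
        rw [← map_add, hvz]
      rw [hu'def, h1]
      ring
    rw [hdecomp]
    refine add_mem (add_mem ?_ ?_) ?_
    · exact Submodule.mem_sup_left (X0_mul_rename_sq_mem v hv)
    · apply Submodule.mem_sup_right
      show X 0 * rename Fin.succ z ∈ (Ideal.span (Set.range fun i => X i * L i)).restrictScalars F
      have h1 : rename (Fin.succ : Fin m → Fin (m+1)) z
          ∈ Ideal.span ((rename (Fin.succ : Fin m → Fin (m+1))).toRingHom ''
              (Set.range fun i => X i * Ltil i)) := by
        rw [← Ideal.map_span]
        exact Ideal.mem_map_of_mem _ hzI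
      show X 0 * rename Fin.succ z ∈ Ideal.span (Set.range fun i => X i * L i)
      refine Submodule.span_induction ?_ ?_ ?_ ?_ h1
      · rintro x ⟨_, ⟨i, rfl⟩, rfl⟩
        show X 0 * ((rename Fin.succ).toRingHom (X i * Ltil i)) ∈ _
        show X 0 * (rename Fin.succ (X i * Ltil i)) ∈ _
        rw [map_mul, rename_X, hσtil i]
        have heq : (X 0 : MvPolynomial (Fin (m+1)) F)
            * (X i.succ * (L i.succ - C (c0 i.succ * c⁻¹) * L 0))
            = X 0 * (X i.succ * L i.succ)
              - (C (c0 i.succ * c⁻¹) * X i.succ) * (X 0 * L 0) := by ring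
        rw [heq]
        refine Submodule.sub_mem _ ?_ ?_
        · exact Ideal.mul_mem_left _ _ (Ideal.subset_span ⟨i.succ, rfl⟩)
        · exact Ideal.mul_mem_left _ _ (Ideal.subset_span ⟨0, rfl⟩)
      · rw [mul_zero]; exact Ideal.zero_mem _
      · intro x y _ _ hx hy
        rw [mul_add]; exact Ideal.add_mem _ hx hy
      · intro a x _ hx
        rw [smul_eq_mul]
        have : X 0 * (a * x) = a * (X 0 * x) := by ring
        rw [this]
        exact Ideal.mul_mem_left _ _ hx
    · apply Submodule.mem_sup_right
      show X 0 * u' ∈ Ideal.span (Set.range fun i => X i * L i)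
      rw [← hr]
      have heq : (X 0 : MvPolynomial (Fin (m+1)) F) * (r * (C c⁻¹ * L 0))
          = (C c⁻¹ * r) * (X 0 * L 0) := by ring
      rw [heq]
      exact Ideal.mul_mem_left _ _ (Ideal.subset_span ⟨0, rfl⟩)
  -- Step A
  intro g
  obtain ⟨v, hv, z, hz, hvz⟩ :=
    Submodule.mem_sup.mp (IH Lbar hlinbar hstarbar
      (aeval (Fin.cases 0 X : Fin (m+1) → MvPolynomial (Fin m) F) g))
  have hzI : z ∈ Ideal.span (Set.range fun i => X i * Lbar i) := hz
  set u : MvPolynomial (Fin (m+1)) F :=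
    g - rename Fin.succ (aeval (Fin.cases 0 X : Fin (m+1) → MvPolynomial (Fin m) F) g) with hudef
  have hu0 : aeval (Fin.cases 0 X : Fin (m+1) → MvPolynomial (Fin m) F) u = 0 := by
    rw [hudef, map_sub, aeval_cases_rename_succ]
    ring
  have humem : u ∈ Ideal.span {(X 0 : MvPolynomial (Fin (m+1)) F)} := by
    have hmem := mem_span_of_aeval_cases_eq_zero 0 u hu0
    rwa [map_zero, sub_zero] at hmem
  have hdecomp : g = rename Fin.succ v + (rename Fin.succ z + u) := by
    have h1 : rename (Fin.succ : Fin m → Fin (m+1))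
        (aeval (Fin.cases 0 X : Fin (m+1) → MvPolynomial (Fin m) F) g)
        = rename Fin.succ v + rename Fin.succ z := by
      rw [← map_add, hvz]
    rw [hudef, h1]
    ring
  have hzu : rename Fin.succ z + u ∈
      (Ideal.span (Set.range fun i => X i * L i) ⊔ Ideal.span {(X 0 : MvPolynomial (Fin (m+1)) F)} :
        Ideal (MvPolynomial (Fin (m+1)) F)) := by
    refine Submodule.add_mem _ ?_ (Ideal.mem_sup_right humem)
    have h1 : rename (Fin.succ : Fin m → Fin (m+1)) z
        ∈ Ideal.span ((rename (Fin.succ : Fin m → Fin (m+1))).toRingHom ''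
            (Set.range fun i => X i * Lbar i)) := by
      rw [← Ideal.map_span]
      exact Ideal.mem_map_of_mem _ hzI
    refine Ideal.span_le.mpr ?_ h1
    rintro x ⟨_, ⟨i, rfl⟩, rfl⟩
    show (rename Fin.succ) (X i * Lbar i) ∈ _
    rw [map_mul, rename_X, hσbar i]
    have heq : (X i.succ : MvPolynomial (Fin (m+1)) F) * (L i.succ - C (c0 i.succ) * X 0)
        = X i.succ * L i.succ - (C (c0 i.succ) * X i.succ) * X 0 := by ring
    rw [heq]
    refine Submodule.sub_mem _ ?_ ?_
    · exact Ideal.mem_sup_left (Ideal.subset_span ⟨i.succ, rfl⟩)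
    · exact Ideal.mem_sup_right (Ideal.mul_mem_left _ _ (Ideal.subset_span rfl))
  obtain ⟨z1, hz1, z2, hz2, hz12⟩ := Submodule.mem_sup.mp hzu
  obtain ⟨a, ha⟩ := Ideal.mem_span_singleton'.mp hz2
  rw [hdecomp, ← hz12, ← ha]
  refine add_mem (Submodule.mem_sup_left (rename_sq_mem v hv)) (add_mem ?_ ?_)
  · exact Submodule.mem_sup_right hz1
  · have : a * X 0 = X 0 * a := by ring
    rw [this]
    exact stepB a



-- P0: homogeneous component of (homogeneous * arbitrary)
lemma homogeneousComponent_homog_mul {n : ℕ} {e d : ℕ}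
    (h y : MvPolynomial (Fin n) F) (hh : h.IsHomogeneous e) :
    homogeneousComponent d (h * y)
      = if e ≤ d then h * homogeneousComponent (d - e) y else 0 := by
  conv_lhs => rw [← sum_homogeneousComponent y]
  rw [Finset.mul_sum, map_sum]
  have hterm : ∀ i ∈ Finset.range (y.totalDegree + 1),
      homogeneousComponent d (h * homogeneousComponent i y)
        = if d = e + i then h * homogeneousComponent i y else 0 := by
    intro i _
    exact homogeneousComponent_of_mem (hh.mul (homogeneousComponent_isHomogeneous i y))
  rw [Finset.sum_congr rfl hterm]
  by_cases hle : e ≤ d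
  · rw [if_pos hle]
    by_cases hbig : d - e ≤ y.totalDegree
    · rw [Finset.sum_eq_single (d - e)]
      · rw [if_pos (by omega)]
      · intro b _ hb
        rw [if_neg (by omega)]
      · intro hnot
        exact absurd (Finset.mem_range.mpr (by omega)) hnot
    · rw [homogeneousComponent_eq_zero _ y (by omega), mul_zero, Finset.sum_eq_zero]
      intro i hi
      rw [if_neg (by simp only [Finset.mem_range] at hi; omega)]
  · rw [if_neg hle, Finset.sum_eq_zero]
    intro i _
    rw [if_neg (by omega)]

section JIdeals
variable {n : ℕ} (f : Fin n → MvPolynomial (Fin n) F)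

/-- the ideal generated by the first `k` of the `f`s -/
noncomputable def Jid (k : ℕ) : Ideal (MvPolynomial (Fin n) F) :=
  Ideal.span (f '' {j | j.val < k})

lemma Jid_zero : Jid f 0 = ⊥ := by
  have : {j : Fin n | j.val < 0} = ∅ := by ext j; simp
  rw [Jid, this, Set.image_empty, Ideal.span_empty]

lemma Jid_mono {k l : ℕ} (h : k ≤ l) : Jid f k ≤ Jid f l :=
  Ideal.span_mono (Set.image_mono fun j hj => lt_of_lt_of_le hj h)

lemma Jid_succ (k : ℕ) (hk : k < n) :
    Jid f (k+1) = Jid f k ⊔ Ideal.span {f ⟨k, hk⟩} := by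
  have hset : {j : Fin n | j.val < k + 1} = {j : Fin n | j.val < k} ∪ {(⟨k, hk⟩ : Fin n)} := by
    ext j
    constructor
    · intro hj
      have hj' : j.val < k + 1 := hj
      rcases Nat.lt_or_ge j.val k with h | h
      · exact Or.inl h
      · exact Or.inr (Fin.ext (show j.val = k by omega))
    · rintro (hj | hj)
      · exact Nat.lt_succ_of_lt hj
      · rw [Set.mem_singleton_iff] at hj
        rw [hj]
        exact Nat.lt_succ_self k
  rw [Jid, Jid, hset, Set.image_union, Set.image_singleton, Ideal.span_union]
lemma Jid_top (hn : 0 ≤ n) : Jid f n = Ideal.span (Set.range f) := by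
  rw [Jid]
  congr 1
  have : {j : Fin n | j.val < n} = Set.univ := by ext j; simpa using j.isLt
  rw [this, Set.image_univ]

-- components of members of Jid stay in Jid
lemma Jid_homogeneousComponent (hf2 : ∀ i, (f i).IsHomogeneous 2)
    {k : ℕ} {x : MvPolynomial (Fin n) F} (hx : x ∈ Jid f k) (d : ℕ) :
    homogeneousComponent d x ∈ Jid f k := by
  revert d
  refine Submodule.span_induction
    (p := fun y _ => ∀ d, homogeneousComponent d y ∈ Jid f k) ?_ ?_ ?_ ?_ hx
  · rintro y ⟨j, hj, rfl⟩ d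
    rw [homogeneousComponent_of_mem (hf2 j)]
    split
    · exact Ideal.subset_span ⟨j, hj, rfl⟩
    · exact Ideal.zero_mem _
  · intro d; rw [map_zero]; exact Ideal.zero_mem _
  · intro a b _ _ ha hb d
    rw [map_add]; exact Ideal.add_mem _ (ha d) (hb d)
  · intro a x _ hx d
    rw [smul_eq_mul]
    have hrw : a * x = ∑ e ∈ Finset.range (a.totalDegree + 1), homogeneousComponent e a * x := by
      conv_lhs => rw [← sum_homogeneousComponent a]
      rw [Finset.sum_mul]
    rw [hrw, map_sum]
    refine Ideal.sum_mem _ fun e _ => ?_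
    rw [homogeneousComponent_homog_mul _ _ (homogeneousComponent_isHomogeneous e a)]
    split
    · exact Ideal.mul_mem_left _ _ (hx _)
    · exact Ideal.zero_mem _

-- low-degree coefficients of Jid elements vanish
lemma Jid_coeff_low (hf2 : ∀ i, (f i).IsHomogeneous 2)
    {k : ℕ} {x : MvPolynomial (Fin n) F} (hx : x ∈ Jid f k)
    (md : Fin n →₀ ℕ) (hmd : Finsupp.degree md < 2) : coeff md x = 0 := by
  revert md
  refine Submodule.span_induction
    (p := fun y _ => ∀ md : Fin n →₀ ℕ, Finsupp.degree md < 2 → coeff md y = 0) ?_ ?_ ?_ ?_ hx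
  · rintro y ⟨j, _, rfl⟩ md hmd
    exact (hf2 j).coeff_eq_zero (by omega)
  · intro md _; rw [coeff_zero]
  · intro a b _ _ ha hb md hmd
    rw [coeff_add, ha md hmd, hb md hmd, add_zero]
  · intro a x _ hx md hmd
    rw [smul_eq_mul, coeff_mul]
    refine Finset.sum_eq_zero fun p hp => ?_
    have hpq := Finset.HasAntidiagonal.mem_antidiagonal.mp hp
    have : Finsupp.degree p.2 < 2 := by
      have hdeg : Finsupp.degree p.1 + Finsupp.degree p.2 = Finsupp.degree md := by
        rw [← hpq]
        simp only [Finsupp.degree_eq_weight_one, map_add]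
      omega
    rw [hx p.2 this, mul_zero]

-- homogeneous low degree elements of Jid vanish
lemma Jid_low_eq_zero (hf2 : ∀ i, (f i).IsHomogeneous 2)
    {k d : ℕ} (hd : d < 2) {x : MvPolynomial (Fin n) F}
    (hx : x ∈ Jid f k) (hhom : x.IsHomogeneous d) : x = 0 := by
  ext md
  rw [coeff_zero]
  by_cases h : Finsupp.degree md < 2
  · exact Jid_coeff_low f hf2 hx md h
  · exact hhom.coeff_eq_zero (by omega)

-- splitting lemma
lemma Jid_split (hf2 : ∀ i, (f i).IsHomogeneous 2)
    {k : ℕ} (hk : k < n) {d : ℕ} {u : MvPolynomial (Fin n) F}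
    (hu : u.IsHomogeneous (d + 2)) (humem : u ∈ Jid f (k+1)) :
    ∃ v : MvPolynomial (Fin n) F, v.IsHomogeneous d ∧ u - v * f ⟨k, hk⟩ ∈ Jid f k := by
  rw [Jid_succ f k hk] at humem
  obtain ⟨y, hy, zz, hzz, hyz⟩ := Submodule.mem_sup.mp humem
  obtain ⟨g, hg⟩ := Ideal.mem_span_singleton'.mp hzz
  refine ⟨homogeneousComponent d g, homogeneousComponent_isHomogeneous d g, ?_⟩
  have hcu : homogeneousComponent (d+2) u = u := by
    rw [homogeneousComponent_of_mem hu, if_pos rfl]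
  have hgf : homogeneousComponent (d+2) (f ⟨k, hk⟩ * g)
      = f ⟨k, hk⟩ * homogeneousComponent d g := by
    rw [homogeneousComponent_homog_mul _ _ (hf2 ⟨k, hk⟩), if_pos (by omega),
      Nat.add_sub_cancel]
  have : u - homogeneousComponent d g * f ⟨k, hk⟩ = homogeneousComponent (d+2) y := by
    have h2 : homogeneousComponent (d+2) zz = homogeneousComponent d g * f ⟨k,hk⟩ := by
      rw [← hg, mul_comm g (f ⟨k,hk⟩), hgf, mul_comm]
    calc u - homogeneousComponent d g * f ⟨k, hk⟩
        = homogeneousComponent (d+2) (y + zz) - homogeneousComponent d g * f ⟨k,hk⟩ := by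
          rw [hyz, hcu]
      _ = homogeneousComponent (d+2) y := by
          rw [map_add, h2]
          ring
  rw [this]
  exact Jid_homogeneousComponent f hf2 hy (d+2)

end JIdeals


section DimCount
variable (n d : ℕ)

noncomputable def degSubtypeEquiv :
    {v : Fin n →₀ ℕ // v ∈ {v : Fin n →₀ ℕ | Finsupp.degree v = d}} ≃ Sym (Fin n) d := by
  classical
  refine Equiv.subtypeEquiv (Finsupp.orderIsoMultiset (ι := Fin n)).toEquiv (fun v => ?_)
  show Finsupp.degree v = d ↔ _
  have hcoe : ((Finsupp.orderIsoMultiset (ι := Fin n)).toEquiv v : Multiset (Fin n))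
      = Finsupp.toMultiset v := by
    rw [← Finsupp.coe_orderIsoMultiset]
    rfl
  constructor
  · intro h
    show Multiset.card _ = d
    rw [hcoe, Finsupp.card_toMultiset]
    exact h
  · intro h
    have h' : Multiset.card ((Finsupp.orderIsoMultiset (ι := Fin n)).toEquiv v) = d := h
    rw [hcoe, Finsupp.card_toMultiset] at h'
    exact h' 

noncomputable instance fintypeDegSet : Fintype {v : Fin n →₀ ℕ // v ∈ {v : Fin n →₀ ℕ | Finsupp.degree v = d}} :=
  Fintype.ofEquiv _ (degSubtypeEquiv n d).symm

lemma card_degSet :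
    Fintype.card {v : Fin n →₀ ℕ // v ∈ {v : Fin n →₀ ℕ | Finsupp.degree v = d}}
      = (n + d - 1).choose d := by
  rw [Fintype.card_congr (degSubtypeEquiv n d), Sym.card_sym_eq_multichoose,
    Fintype.card_fin, Nat.multichoose_eq]

variable (F)

noncomputable def homogEquivSupported :
    (homogeneousSubmodule (Fin n) F d) ≃ₗ[F]
      (restrictSupport F {v : Fin n →₀ ℕ | Finsupp.degree v = d}) :=
  LinearEquiv.ofEq _ _ (homogeneousSubmodule_eq_finsupp_supported (Fin n) F d)

instance restrictFinite : Module.Finite F (restrictSupport F {v : Fin n →₀ ℕ | Finsupp.degree v = d}) :=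
  Module.Finite.of_basis (basisRestrictSupport F _)

instance homogFinite : Module.Finite F (homogeneousSubmodule (Fin n) F d) :=
  Module.Finite.equiv (homogEquivSupported F n d).symm

lemma finrank_homog :
    Module.finrank F (homogeneousSubmodule (Fin n) F d) = (n + d - 1).choose d := by
  rw [(homogEquivSupported F n d).finrank_eq,
    Module.finrank_eq_card_basis (basisRestrictSupport F _), card_degSet]

end DimCount

section Main
variable {n : ℕ} (f : Fin n → MvPolynomial (Fin n) F)

noncomputable def Nsub (k d : ℕ) : Submodule F (homogeneousSubmodule (Fin n) F d) :=
  Submodule.comap (homogeneousSubmodule (Fin n) F d).subtype ((Jid f k).restrictScalars F)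

noncomputable def hdim (k d : ℕ) : ℕ :=
  Module.finrank F ((homogeneousSubmodule (Fin n) F d) ⧸ Nsub f k d)

lemma mem_Nsub_iff {k d : ℕ} (x : homogeneousSubmodule (Fin n) F d) :
    x ∈ Nsub f k d ↔ (x : MvPolynomial (Fin n) F) ∈ Jid f k := Iff.rfl

lemma Nsub_bot_of_low {k d : ℕ} (hf2 : ∀ i, (f i).IsHomogeneous 2) (hd : d < 2) :
    Nsub f k d = ⊥ := by
  ext x
  rw [Submodule.mem_bot, mem_Nsub_iff]
  constructor
  · intro hx
    exact Subtype.ext (Jid_low_eq_zero f hf2 hd hx x.2)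
  · rintro rfl
    exact (Jid f k).zero_mem

lemma Nsub_zero_bot (d : ℕ) : Nsub f 0 d = ⊥ := by
  ext x
  rw [Submodule.mem_bot, mem_Nsub_iff, Jid_zero f, Ideal.mem_bot]
  exact ⟨fun h => Subtype.ext h, fun h => by rw [h]; rfl⟩

lemma hdim_eq_of_Nsub_bot {k d : ℕ} (h : Nsub f k d = ⊥) :
    hdim f k d = (n + d - 1).choose d := by
  rw [hdim, (Submodule.quotEquivOfEqBot _ h).finrank_eq, finrank_homog]

lemma hdim_low {k d : ℕ} (hf2 : ∀ i, (f i).IsHomogeneous 2) (hd : d < 2) (k' : ℕ) :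
    hdim f k d = hdim f k' d := by
  rw [hdim_eq_of_Nsub_bot f (Nsub_bot_of_low f hf2 hd),
    hdim_eq_of_Nsub_bot f (Nsub_bot_of_low f hf2 hd)]

lemma hdim_zero (d : ℕ) : hdim f 0 d = (n + d - 1).choose d :=
  hdim_eq_of_Nsub_bot f (Nsub_zero_bot f d)

lemma hdim_rec (hf2 : ∀ i, (f i).IsHomogeneous 2)
    (hnzd : ∀ (k : ℕ) (hk : k < n) (g : MvPolynomial (Fin n) F),
      g * f ⟨k, hk⟩ ∈ Jid f k → g ∈ Jid f k)
    {k : ℕ} (hk : k < n) (d : ℕ) :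
    hdim f k (d+2) = hdim f (k+1) (d+2) + hdim f k d := by
  classical
  set fk := f ⟨k, hk⟩ with hfk
  have hmul_mem : ∀ x : homogeneousSubmodule (Fin n) F d,
      ((LinearMap.mulRight F fk).comp (homogeneousSubmodule (Fin n) F d).subtype) x
        ∈ homogeneousSubmodule (Fin n) F (d+2) := by
    intro x
    exact x.2.mul (hf2 ⟨k, hk⟩)
  set μ : (homogeneousSubmodule (Fin n) F d) →ₗ[F] (homogeneousSubmodule (Fin n) F (d+2)) :=
    LinearMap.codRestrict _ _ hmul_mem with hμ
  have hμval : ∀ x, (μ x : MvPolynomial (Fin n) F) = (x : MvPolynomial (Fin n) F) * fk :=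
    fun x => rfl
  set τ : (homogeneousSubmodule (Fin n) F d) →ₗ[F]
      ((homogeneousSubmodule (Fin n) F (d+2)) ⧸ Nsub f k (d+2)) :=
    (Nsub f k (d+2)).mkQ.comp μ with hτ
  have hτker : ∀ x, τ x = 0 ↔ (x : MvPolynomial (Fin n) F) * fk ∈ Jid f k := by
    intro x
    rw [hτ, LinearMap.comp_apply, Submodule.mkQ_apply, Submodule.Quotient.mk_eq_zero,
      mem_Nsub_iff, hμval]
  have hker1 : Nsub f k d ≤ LinearMap.ker τ := by
    intro x hx
    rw [LinearMap.mem_ker, hτker]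
    exact Ideal.mul_mem_right _ _ hx
  set T := Submodule.liftQ (Nsub f k d) τ hker1 with hT
  have hTmk : ∀ x : homogeneousSubmodule (Fin n) F d,
      T (Submodule.Quotient.mk x) = τ x := fun x => rfl
  have hTinj : Function.Injective T := by
    rw [← LinearMap.ker_eq_bot, hT]
    rw [Submodule.ker_liftQ_eq_bot]
    intro x hx
    rw [LinearMap.mem_ker, hτker] at hx
    rw [mem_Nsub_iff]
    exact hnzd k hk _ hx
  have hNle : Nsub f k (d+2) ≤ Submodule.comap LinearMap.id (Nsub f (k+1) (d+2)) := by
    intro x hx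
    rw [Submodule.mem_comap, LinearMap.id_apply, mem_Nsub_iff]
    rw [mem_Nsub_iff] at hx
    refine Ideal.span_mono (Set.image_mono fun j hj => ?_) hx
    exact Nat.lt_succ_of_lt hj
  set π : ((homogeneousSubmodule (Fin n) F (d+2)) ⧸ Nsub f k (d+2)) →ₗ[F]
      ((homogeneousSubmodule (Fin n) F (d+2)) ⧸ Nsub f (k+1) (d+2)) :=
    Submodule.mapQ _ _ LinearMap.id hNle with hπ
  have hπmk : ∀ x : homogeneousSubmodule (Fin n) F (d+2),
      π (Submodule.Quotient.mk x) = Submodule.Quotient.mk x := by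
    intro x
    rw [hπ, Submodule.mapQ_apply, LinearMap.id_apply]
  have hπsurj : Function.Surjective π := by
    intro y
    obtain ⟨x, rfl⟩ := Submodule.mkQ_surjective _ y
    exact ⟨Submodule.Quotient.mk x, hπmk x⟩
  have hfk_mem : fk ∈ Jid f (k+1) :=
    Ideal.subset_span ⟨⟨k, hk⟩, Nat.lt_succ_self k, rfl⟩
  have hexact : LinearMap.ker π = LinearMap.range T := by
    ext y
    constructor
    · intro hy
      obtain ⟨x, rfl⟩ := Submodule.mkQ_surjective _ y
      rw [LinearMap.mem_ker] at hy
      have hx' : (x : MvPolynomial (Fin n) F) ∈ Jid f (k+1) := by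
        rw [Submodule.mkQ_apply, hπmk, Submodule.Quotient.mk_eq_zero, mem_Nsub_iff] at hy
        exact hy
      obtain ⟨v, hv, hsplit⟩ := Jid_split f hf2 hk x.2 hx'
      refine ⟨Submodule.Quotient.mk ⟨v, hv⟩, ?_⟩
      rw [hTmk]
      rw [hτ, LinearMap.comp_apply, Submodule.mkQ_apply, Submodule.mkQ_apply]
      rw [Submodule.Quotient.eq]
      rw [mem_Nsub_iff]
      have : ((μ ⟨v, hv⟩ : homogeneousSubmodule (Fin n) F (d+2)) : MvPolynomial (Fin n) F)
          = v * fk := rfl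
      show ((μ ⟨v, hv⟩ : homogeneousSubmodule (Fin n) F (d+2)) : MvPolynomial (Fin n) F)
          - (x : MvPolynomial (Fin n) F) ∈ Jid f k
      rw [this]
      have := (Jid f k).neg_mem hsplit
      simpa using this
    · rintro ⟨q, rfl⟩
      obtain ⟨x, rfl⟩ := Submodule.mkQ_surjective _ q
      rw [LinearMap.mem_ker, Submodule.mkQ_apply, hTmk, hτ, LinearMap.comp_apply,
        Submodule.mkQ_apply, hπmk, Submodule.Quotient.mk_eq_zero, mem_Nsub_iff, hμval]
      exact Ideal.mul_mem_left _ _ hfk_mem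
  have hcount := LinearMap.finrank_range_add_finrank_ker π
  rw [hexact] at hcount
  have h1 : Module.finrank F (LinearMap.range π)
      = hdim f (k+1) (d+2) := by
    rw [LinearMap.range_eq_top.mpr hπsurj]
    exact finrank_top F _
  have h2 : Module.finrank F (LinearMap.range T) = hdim f k d :=
    LinearMap.finrank_range_of_inj hTinj
  rw [h1, h2] at hcount
  have h3 : Module.finrank F ((homogeneousSubmodule (Fin n) F (d+2)) ⧸ Nsub f k (d+2))
      = hdim f k (d+2) := rfl
  rw [h3] at hcount
  omega

end Main


section Series
variable {n : ℕ} (f : Fin n → MvPolynomial (Fin n) F)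

noncomputable def Fser (k : ℕ) : PowerSeries ℤ := PowerSeries.mk fun d => (hdim f k d : ℤ)

lemma Fser_step (hf2 : ∀ i, (f i).IsHomogeneous 2)
    (hnzd : ∀ (k : ℕ) (hk : k < n) (g : MvPolynomial (Fin n) F),
      g * f ⟨k, hk⟩ ∈ Jid f k → g ∈ Jid f k)
    {k : ℕ} (hk : k < n) :
    Fser f (k+1) = (1 - PowerSeries.X^2) * Fser f k := by
  ext d
  rw [sub_mul, one_mul, map_sub, PowerSeries.coeff_X_pow_mul']
  rw [Fser, Fser, PowerSeries.coeff_mk, PowerSeries.coeff_mk]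
  by_cases hd : 2 ≤ d
  · rw [if_pos hd]
    obtain ⟨e, rfl⟩ : ∃ e, d = e + 2 := ⟨d - 2, by omega⟩
    rw [PowerSeries.coeff_mk]
    have hrec := hdim_rec f hf2 hnzd hk e
    have : e + 2 - 2 = e := by omega
    rw [this]
    push_cast
    omega
  · rw [if_neg hd]
    have := hdim_low f (k := k) hf2 (show d < 2 by omega) (k+1)
    rw [this]
    ring

lemma Fser_all (hf2 : ∀ i, (f i).IsHomogeneous 2)
    (hnzd : ∀ (k : ℕ) (hk : k < n) (g : MvPolynomial (Fin n) F),
      g * f ⟨k, hk⟩ ∈ Jid f k → g ∈ Jid f k) :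
    ∀ k, k ≤ n → Fser f k = (1 - PowerSeries.X^2)^k * Fser f 0 := by
  intro k
  induction k with
  | zero => intro _; rw [pow_zero, one_mul]
  | succ k ih =>
      intro hk1
      rw [Fser_step f hf2 hnzd (show k < n by omega), ih (by omega), pow_succ]
      ring

lemma Fser_zero_eq : Fser f 0 = ((PowerSeries.invOneSubPow ℤ n : (PowerSeries ℤ)ˣ) : PowerSeries ℤ) := by
  ext d
  rw [Fser, PowerSeries.coeff_mk, hdim_zero]
  cases n with
  | zero =>
      rw [PowerSeries.invOneSubPow_zero]
      rw [Units.val_one]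
      cases d with
      | zero => simp
      | succ e =>
          rw [PowerSeries.coeff_one]
          have h1 : (0 + (e+1) - 1).choose (e+1) = 0 :=
            Nat.choose_eq_zero_of_lt (by omega)
          rw [h1, if_neg (by omega)]
          simp
  | succ m =>
      rw [PowerSeries.invOneSubPow_val_succ_eq_mk_add_choose, PowerSeries.coeff_mk]
      have : (m + 1 + d - 1).choose d = (m + d).choose m := by
        have h2 : m + 1 + d - 1 = m + d := by omega
        rw [h2, ← Nat.choose_symm (by omega : d ≤ m + d)]
        congr 1
        omega
      rw [this]

lemma coeff_one_add_X_pow (k j : ℕ) (hj : k < j) :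
    (PowerSeries.coeff (R := ℤ) j) ((1 + PowerSeries.X)^k) = 0 := by
  rw [add_pow, map_sum]
  refine Finset.sum_eq_zero fun i hi => ?_
  rw [one_pow, one_mul]
  have hik : i ≤ k := by
    have := Finset.mem_range.mp hi
    omega
  have hcast : ((k.choose i : ℕ) : PowerSeries ℤ) = PowerSeries.C ((k.choose i : ℕ) : ℤ) := by
    rw [map_natCast (PowerSeries.C (R := ℤ))]
  rw [hcast, PowerSeries.coeff_mul_C, PowerSeries.coeff_X_pow, if_neg (by omega), zero_mul]

lemma hdim_top (hf2 : ∀ i, (f i).IsHomogeneous 2)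
    (hnzd : ∀ (k : ℕ) (hk : k < n) (g : MvPolynomial (Fin n) F),
      g * f ⟨k, hk⟩ ∈ Jid f k → g ∈ Jid f k) :
    hdim f n (n+1) = 0 := by
  have h1 : Fser f n = (1 + PowerSeries.X)^n := by
    rw [Fser_all f hf2 hnzd n le_rfl, Fser_zero_eq]
    have hfactor : ((1 : PowerSeries ℤ) - PowerSeries.X^2)^n
        = (1 + PowerSeries.X)^n * (1 - PowerSeries.X)^n := by
      rw [← mul_pow]
      congr 1
      ring
    rw [hfactor, mul_assoc]
    rw [← PowerSeries.invOneSubPow_inv_eq_one_sub_pow, Units.inv_val, mul_one]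
  have h2 := congrArg (PowerSeries.coeff (R := ℤ) (n+1)) h1
  rw [Fser, PowerSeries.coeff_mk, coeff_one_add_X_pow n (n+1) (by omega)] at h2
  exact_mod_cast h2

end Series


-- extraction
lemma homog_np1_mem {n : ℕ} (f : Fin n → MvPolynomial (Fin n) F)
    (hf2 : ∀ i, (f i).IsHomogeneous 2)
    (hnzd : ∀ (k : ℕ) (hk : k < n) (g : MvPolynomial (Fin n) F),
      g * f ⟨k, hk⟩ ∈ Jid f k → g ∈ Jid f k)
    (p : MvPolynomial (Fin n) F) (hp : p.IsHomogeneous (n+1)) :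
    p ∈ Ideal.span (Set.range f) := by
  have h0 : hdim f n (n+1) = 0 := hdim_top f hf2 hnzd
  have hsub : Subsingleton ((homogeneousSubmodule (Fin n) F (n+1)) ⧸ Nsub f n (n+1)) :=
    Module.finrank_zero_iff.mp h0
  set x : homogeneousSubmodule (Fin n) F (n+1) := ⟨p, hp⟩ with hx
  have hmk : (Submodule.Quotient.mk x :
      (homogeneousSubmodule (Fin n) F (n+1)) ⧸ Nsub f n (n+1)) = 0 := Subsingleton.elim _ _
  rw [Submodule.Quotient.mk_eq_zero] at hmk
  rw [← Jid_top f (Nat.zero_le n)]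
  exact hmk

-- Part II
lemma star_of_contain {n : ℕ} (L : Fin n → MvPolynomial (Fin n) F)
    (hlin : ∀ i, (L i).IsHomogeneous 1)
    (hcont : ∀ p : MvPolynomial (Fin n) F, p.IsHomogeneous (n+1) →
      p ∈ Ideal.span (Set.range fun i => X i * L i)) :
    ∀ (S : Finset (Fin n)) (q : Fin n → F),
      (∑ i, C (q i) * (if i ∈ S then X i else L i)) = 0 → q = 0 := by
  classical
  intro S q hq
  by_contra hq0
  set P : Fin n → MvPolynomial (Fin n) F := fun i => if i ∈ S then X i else L i with hP
  have hPlin : ∀ i, (P i).IsHomogeneous 1 := by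
    intro i
    simp only [hP]
    by_cases hiS : i ∈ S
    · rw [if_pos hiS]; exact isHomogeneous_X _ _
    · rw [if_neg hiS]; exact hlin i
  set M : Matrix (Fin n) (Fin n) F := Matrix.of fun i j => coeff (Finsupp.single j 1) (P i) with hM
  have hvec : Matrix.vecMul q M = 0 := by
    funext j
    have hcoeff := congrArg (coeff (Finsupp.single j 1)) hq
    rw [MvPolynomial.coeff_sum] at hcoeff
    simp only [coeff_C_mul, coeff_zero] at hcoeff
    rw [Matrix.vecMul, dotProduct]
    simpa [hM] using hcoeff
  have hdet : M.det = 0 := by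
    rw [← Matrix.exists_vecMul_eq_zero_iff]
    exact ⟨q, hq0, hvec⟩
  obtain ⟨p, hp0, hmv⟩ := Matrix.exists_mulVec_eq_zero_iff.mpr hdet
  have hPz : ∀ i, eval p (P i) = 0 := by
    intro i
    have h1 : eval p (P i) = ∑ j, M i j * p j := by
      rw [linear_eval (P i) (hPlin i)]
      rfl
    rw [h1]
    have h2 := congrFun hmv i
    rw [Matrix.mulVec, dotProduct] at h2
    simpa using h2
  have hgen : ∀ i, eval p (X i * L i) = 0 := by
    intro i
    rw [map_mul]
    by_cases hiS : i ∈ S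
    · have h3 := hPz i
      simp only [hP, if_pos hiS] at h3
      rw [h3, zero_mul]
    · have h3 := hPz i
      simp only [hP, if_neg hiS] at h3
      rw [h3, mul_zero]
  obtain ⟨i0, hi0⟩ : ∃ i0, p i0 ≠ 0 := by
    by_contra h
    push_neg at h
    exact hp0 (funext h)
  have hX : (X i0 ^ (n+1) : MvPolynomial (Fin n) F)
      ∈ Ideal.span (Set.range fun i => X i * L i) :=
    hcont _ (isHomogeneous_X_pow i0 (n+1))
  have hzero : eval p (X i0 ^ (n+1)) = 0 := by
    refine Submodule.span_induction (p := fun x _ => eval p x = 0) ?_ ?_ ?_ ?_ hX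
    · rintro y ⟨i, rfl⟩
      exact hgen i
    · exact map_zero (eval p)
    · intro a b _ _ ha hb
      show eval p (a + b) = 0
      rw [map_add, ha, hb, add_zero]
    · intro a y _ hy
      show eval p (a • y) = 0
      rw [smul_eq_mul, map_mul, hy, mul_zero]
  rw [map_pow, eval_X] at hzero
  exact hi0 (pow_eq_zero_iff (by omega) |>.mp hzero)



theorem span_of_star : ∀ (n : ℕ) (L : Fin n → MvPolynomial (Fin n) F),
    (∀ i, (L i).IsHomogeneous 1) →
    (∀ (S : Finset (Fin n)) (q : Fin n → F),
        (∑ i, C (q i) * (if i ∈ S then X i else L i)) = 0 → q = 0) →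
    ∀ g, g ∈ targetSub n L := by
  intro n
  induction n with
  | zero =>
      intro L _ _ g
      have hg : g = constantCoeff g • ((∅ : Finset (Fin 0)).prod X) := by
        rw [Finset.prod_empty, smul_eq_C_mul, mul_one]
        exact (eq_C_of_isEmpty g)
      refine Submodule.mem_sup_left ?_
      rw [hg]
      exact Submodule.smul_mem _ _ (Submodule.subset_span ⟨∅, rfl⟩)
  | succ m IH =>
      intro L hlin hstar
      exact step_mem IH L hlin hstar


end All


/-- If `f i = xᵢ · Lᵢ` (each `Lᵢ` a linear form) is a regular sequence in
`F[x_1,...,x_n]`, then the quotient by `⟨f_1,...,f_n⟩` is spanned, as an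
`F`-vector space, by the classes of the square-free monomials. -/
theorem stmt4 (F : Type) [Field F] (n : ℕ)
    (L : Fin n → MvPolynomial (Fin n) F)
    (hlin : ∀ i, (L i).IsHomogeneous 1)
    (hreg : IsPartialRegSeq F (Fin n) (fun i => X i * L i)) :
    Submodule.span F
        (Set.range fun s : Finset (Fin n) =>
          Ideal.Quotient.mk (Ideal.span (Set.range fun i => X i * L i))
            (∏ i ∈ s, X i)) = ⊤ := by
  classical
  set f : Fin n → MvPolynomial (Fin n) F := fun i => X i * L i with hf
  have hf2 : ∀ i, (f i).IsHomogeneous 2 := fun i => (isHomogeneous_X F i).mul (hlin i)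
  have hnzd : ∀ (k : ℕ) (hk : k < n) (g : MvPolynomial (Fin n) F),
      g * f ⟨k, hk⟩ ∈ Jid f k → g ∈ Jid f k := by
    intro k hk g hg
    rcases Nat.eq_zero_or_pos k with rfl | hkpos
    · rw [Jid_zero f] at hg ⊢
      rw [Ideal.mem_bot] at hg ⊢
      have hf0 : f ⟨0, hk⟩ ≠ 0 := hreg.1 ⟨0, hk⟩ rfl
      rcases mul_eq_zero.mp hg with h | h
      · exact h
      · exact absurd h hf0
    · have h2 := hreg.2 ⟨k, hk⟩ hkpos g
      rw [Ideal.Quotient.eq_zero_iff_mem, Ideal.Quotient.eq_zero_iff_mem] at h2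
      have hset : (f '' {j | j < (⟨k, hk⟩ : Fin n)}) = (f '' {j | j.val < k}) := rfl
      rw [hset] at h2
      exact h2 hg
  have hcont : ∀ p : MvPolynomial (Fin n) F, p.IsHomogeneous (n+1) →
      p ∈ Ideal.span (Set.range f) := fun p hp => homog_np1_mem f hf2 hnzd p hp
  have hstar := star_of_contain L hlin hcont
  have hmem := span_of_star n L hlin hstar
  rw [eq_top_iff]
  rintro y -
  obtain ⟨g, rfl⟩ := Ideal.Quotient.mk_surjective y
  obtain ⟨v, hv, z, hz, hvz⟩ := Submodule.mem_sup.mp (hmem g)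
  have hzmem : z ∈ Ideal.span (Set.range f) := hz
  have hmkz : Ideal.Quotient.mk (Ideal.span (Set.range fun i => X i * L i)) z = 0 :=
    Ideal.Quotient.eq_zero_iff_mem.mpr hzmem
  have hsplit : Ideal.Quotient.mk (Ideal.span (Set.range fun i => X i * L i)) g
      = Ideal.Quotient.mk (Ideal.span (Set.range fun i => X i * L i)) v
        + Ideal.Quotient.mk (Ideal.span (Set.range fun i => X i * L i)) z := by
    rw [← map_add, hvz]
  rw [hsplit, hmkz, add_zero]
  have hlinmap := Submodule.mem_map_of_mem
    (f := (Ideal.Quotient.mkₐ F (Ideal.span (Set.range fun i => X i * L i))).toLinearMap) hv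
  rw [Submodule.map_span] at hlinmap
  refine Submodule.span_mono ?_ hlinmap
  rintro x ⟨_, ⟨s, rfl⟩, rfl⟩
  exact ⟨s, rfl⟩
end

section
/- Suppose f_1 = x_1·L_1, ..., f_n = x_n·L_n is a regular sequence in F[x_1,...,x_n], where each L_i is a linear form. Then the class of L_1···L_n is a socle generator of the quotient algebra F[x_1,...,x_n]/⟨f_1,...,f_n⟩; that is, L_1···L_n is nonzero in the quotient and its class spans the annihilator of the maximal ideal generated by x_1,...,x_n. -/
open MvPolynomial

/-- `a` is a socle generator of `F[x_i : i ∈ σ] ⧸ I`: it is nonzero, annihilated by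
the maximal ideal generated by the classes of the variables, and spans the
annihilator of that maximal ideal. -/
def IsSocleGen (F : Type) [Field F] (σ : Type) (I : Ideal (MvPolynomial σ F))
    (a : MvPolynomial σ F ⧸ I) : Prop :=
  a ≠ 0 ∧ (∀ j : σ, Ideal.Quotient.mk I (X j) * a = 0) ∧
    ∀ b : MvPolynomial σ F ⧸ I,
      (∀ j : σ, Ideal.Quotient.mk I (X j) * b = 0) → ∃ c : F, b = c • a

namespace SocleAux
variable {F : Type} [Field F] {σ τ : Type}

lemma hc_mul_homog {b : MvPolynomial σ F} {e : ℕ} (hb : b.IsHomogeneous e)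
    (r : MvPolynomial σ F) (d : ℕ) :
    homogeneousComponent (d + e) (r * b) = homogeneousComponent d r * b := by
  induction r using MvPolynomial.induction_on' with
  | monomial u c =>
      have h1 : (monomial u c * b).IsHomogeneous (u.degree + e) :=
        (isHomogeneous_monomial c rfl).mul hb
      rw [homogeneousComponent_of_mem h1,
          homogeneousComponent_of_mem (isHomogeneous_monomial c rfl)]
      by_cases h : d = u.degree
      · subst h; simp
      · rw [if_neg (by omega), if_neg h, zero_mul]
  | add p q hp hq =>
      rw [add_mul, map_add, map_add, hp, hq, add_mul]

lemma hc_mul_homog_lt {b : MvPolynomial σ F} {e : ℕ} (hb : b.IsHomogeneous e)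
    (r : MvPolynomial σ F) (d : ℕ) (hd : d < e) :
    homogeneousComponent d (r * b) = 0 := by
  induction r using MvPolynomial.induction_on' with
  | monomial u c =>
      have h1 : (monomial u c * b).IsHomogeneous (u.degree + e) :=
        (isHomogeneous_monomial c rfl).mul hb
      rw [homogeneousComponent_of_mem h1, if_neg (by omega)]
  | add p q hp hq => rw [add_mul, map_add, hp, hq, add_zero]

/-- a set of homogeneous polynomials of positive degree -/
def HomogSet (S : Set (MvPolynomial σ F)) : Prop := ∀ s ∈ S, ∃ e, 0 < e ∧ s.IsHomogeneous e

lemma span_comp {S : Set (MvPolynomial σ F)} (hS : HomogSet S) {p} (hp : p ∈ Ideal.span S)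
    (d : ℕ) : homogeneousComponent d p ∈ Ideal.span S := by
  have key : ∀ p ∈ Ideal.span S, ∀ r d, homogeneousComponent d (r * p) ∈ Ideal.span S := by
    intro p hp
    refine Submodule.span_induction ?_ ?_ ?_ ?_ hp
    · intro s hs r d
      obtain ⟨e, _, hse⟩ := hS s hs
      rcases le_or_gt e d with h | h
      · have hde : d = (d - e) + e := by omega
        rw [hde, hc_mul_homog hse]
        exact Ideal.mul_mem_left _ _ (Ideal.subset_span hs)
      · rw [hc_mul_homog_lt hse _ _ h]; exact zero_mem _
    · intro r d; rw [mul_zero, map_zero]; exact zero_mem _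
    · intro x y _ _ hx hy r d; rw [mul_add, map_add]; exact add_mem (hx r d) (hy r d)
    · intro a x _ hx r d
      rw [smul_eq_mul, ← mul_assoc]; exact hx (r * a) d
  have := key p hp 1 d
  simpa using this

/-- `a` is a non-zero-divisor modulo the ideal spanned by `S`. -/
def NZD (a : MvPolynomial σ F) (S : Set (MvPolynomial σ F)) : Prop :=
  ∀ g, g * a ∈ Ideal.span S → g ∈ Ideal.span S

lemma nzd_swap1 {S : Set (MvPolynomial σ F)} (hS : HomogSet S)
    {a b : MvPolynomial σ F} {da db : ℕ} (hda : 0 < da)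
    (ha : a.IsHomogeneous da) (hb : b.IsHomogeneous db)
    (h1 : NZD a S) (h2 : NZD b (insert a S)) : NZD b S := by
  have main : ∀ δ : ℕ, ∀ g : MvPolynomial σ F, g.IsHomogeneous δ →
      g * b ∈ Ideal.span S → g ∈ Ideal.span S := by
    intro δ
    induction δ using Nat.strong_induction_on with
    | _ δ IH =>
      intro g hg hgb
      have hg2 : g ∈ Ideal.span (insert a S) :=
        h2 g (Ideal.span_mono (Set.subset_insert _ _) hgb)
      rw [Ideal.span_insert, Submodule.mem_sup] at hg2
      obtain ⟨y, hy, z, hz, hgyz⟩ := hg2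
      rw [Ideal.mem_span_singleton'] at hy
      obtain ⟨v, rfl⟩ := hy
      -- v * a + z = g
      have hcomp : homogeneousComponent δ (v * a) + homogeneousComponent δ z = g := by
        have := congrArg (homogeneousComponent δ) hgyz
        rwa [map_add, homogeneousComponent_of_mem hg, if_pos rfl] at this
      have hzs : homogeneousComponent δ z ∈ Ideal.span S := span_comp hS hz δ
      rcases lt_or_ge δ da with h | h
      · rw [hc_mul_homog_lt ha v δ h, zero_add] at hcomp
        rw [← hcomp]; exact hzs
      · have hδ : δ = (δ - da) + da := by omega
        rw [hδ, hc_mul_homog ha v (δ - da)] at hcomp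
        set v' := homogeneousComponent (δ - da) v with hv'
        have hva : v' * a + homogeneousComponent (δ - da + da) z = g := by
          rw [← hδ] at hcomp ⊢; exact hcomp
        have hvb : (v' * b) * a ∈ Ideal.span S := by
          have hmem : (v' * a) * b ∈ Ideal.span S := by
            have heq : (v' * a) * b = g * b - (homogeneousComponent (δ - da + da) z) * b := by
              rw [← hva]; ring
            rw [heq]
            exact Submodule.sub_mem _ hgb (Ideal.mul_mem_right _ _ (by rw [← hδ]; exact hzs))
          have heq : (v' * b) * a = (v' * a) * b := by ring
          rw [heq]; exact hmem
        have hvbs : v' * b ∈ Ideal.span S := h1 _ hvb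
        have hv's : v' ∈ Ideal.span S := by
          refine IH (δ - da) (by omega) v' ?_ hvbs
          exact homogeneousComponent_isHomogeneous _ _
        rw [← hva]
        exact Submodule.add_mem _ (Ideal.mul_mem_right _ _ hv's) (by rw [← hδ]; exact hzs)
  intro g hgb
  have hcomps : ∀ i, homogeneousComponent i g ∈ Ideal.span S := by
    intro i
    refine main i _ (homogeneousComponent_isHomogeneous _ _) ?_
    rw [← hc_mul_homog hb g i]
    exact span_comp hS hgb _
  rw [← sum_homogeneousComponent g]
  exact Ideal.sum_mem _ fun i _ => hcomps i

lemma nzd_swap2 {S : Set (MvPolynomial σ F)} {a b : MvPolynomial σ F}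
    (h1 : NZD a S) (h2 : NZD b (insert a S)) : NZD a (insert b S) := by
  intro g hg
  rw [Ideal.span_insert, Submodule.mem_sup] at hg
  obtain ⟨y, hy, z, hz, hsum⟩ := hg
  rw [Ideal.mem_span_singleton'] at hy
  obtain ⟨v, rfl⟩ := hy
  -- v * b + z = g * a
  have hvb : v * b ∈ Ideal.span (insert a S) := by
    have heq : v * b = g * a - z := by rw [← hsum]; ring
    rw [heq]
    refine Submodule.sub_mem _ ?_ (Ideal.span_mono (Set.subset_insert _ _) hz)
    exact Ideal.mul_mem_left _ _ (Ideal.subset_span (Set.mem_insert _ _))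
  have hv : v ∈ Ideal.span (insert a S) := h2 v hvb
  rw [Ideal.span_insert, Submodule.mem_sup] at hv
  obtain ⟨y2, hy2, z2, hz2, hsum2⟩ := hv
  rw [Ideal.mem_span_singleton'] at hy2
  obtain ⟨w, rfl⟩ := hy2
  -- w * a + z2 = v
  have key : (g - w * b) * a ∈ Ideal.span S := by
    have heq : (g - w * b) * a = z2 * b + z := by
      have h1' : (w * a + z2) * b + z = g * a := by rw [hsum2, hsum]
      linear_combination -h1'
    rw [heq]
    exact Submodule.add_mem _ (Ideal.mul_mem_right _ _ hz2) hz
  have := h1 _ key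
  rw [Ideal.span_insert, Submodule.mem_sup]
  refine ⟨w * b, ?_, g - w * b, this, by ring⟩
  exact Ideal.mem_span_singleton'.mpr ⟨w, rfl⟩

def HList (l : List (MvPolynomial σ F)) : Prop := ∀ p ∈ l, ∃ e, 0 < e ∧ p.IsHomogeneous e

def RegMod : Set (MvPolynomial σ F) → List (MvPolynomial σ F) → Prop
  | _, [] => True
  | S, a :: t => NZD a S ∧ RegMod (insert a S) t

lemma NZD_congr {S1 S2 : Set (MvPolynomial σ F)} (h : Ideal.span S1 = Ideal.span S2)
    {a} (h1 : NZD a S1) : NZD a S2 := by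
  intro g hg; rw [← h] at hg ⊢; exact h1 g hg

lemma span_insert_congr {S1 S2 : Set (MvPolynomial σ F)} (h : Ideal.span S1 = Ideal.span S2)
    (a : MvPolynomial σ F) : Ideal.span (insert a S1) = Ideal.span (insert a S2) := by
  rw [Ideal.span_insert, Ideal.span_insert, h]

lemma RegMod_congr : ∀ {l : List (MvPolynomial σ F)} {S1 S2 : Set (MvPolynomial σ F)},
    Ideal.span S1 = Ideal.span S2 → RegMod S1 l → RegMod S2 l
  | [], _, _, _, _ => trivial
  | a :: t, S1, S2, h, ⟨h1, h2⟩ =>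
    ⟨NZD_congr h h1, RegMod_congr (span_insert_congr h a) h2⟩

lemma RegMod_swap {S : Set (MvPolynomial σ F)} (hS : HomogSet S)
    {a b : MvPolynomial σ F} {da db : ℕ} (hda : 0 < da) (hdb : 0 < db)
    (ha : a.IsHomogeneous da) (hb : b.IsHomogeneous db) {t : List (MvPolynomial σ F)}
    (h : RegMod S (a :: b :: t)) : RegMod S (b :: a :: t) := by
  obtain ⟨h1, h2, h3⟩ := h
  exact ⟨nzd_swap1 hS hda ha hb h1 h2, nzd_swap2 h1 h2,
    RegMod_congr (by rw [Set.insert_comm]) h3⟩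

lemma HomogSet_insert {S : Set (MvPolynomial σ F)} (hS : HomogSet S) {a : MvPolynomial σ F}
    {d : ℕ} (hd : 0 < d) (ha : a.IsHomogeneous d) : HomogSet (insert a S) := by
  rintro s (rfl | hs)
  · exact ⟨d, hd, ha⟩
  · exact hS s hs

lemma RegMod_rot1 : ∀ {t : List (MvPolynomial σ F)} {S a}, HomogSet S → HList (a :: t) →
    RegMod S (a :: t) → RegMod S (t ++ [a])
  | [], _, _, _, _, h => h
  | b :: t', S, a, hS, hl, h => by
    obtain ⟨da, hda, ha⟩ := hl a List.mem_cons_self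
    obtain ⟨db, hdb, hb⟩ := hl b (List.mem_cons_of_mem _ List.mem_cons_self)
    have h' := RegMod_swap hS hda hdb ha hb h
    refine ⟨h'.1, ?_⟩
    refine RegMod_rot1 (HomogSet_insert hS hdb hb) ?_ h'.2
    intro p hp
    rcases List.mem_cons.1 hp with rfl | hp
    · exact ⟨da, hda, ha⟩
    · exact hl p (List.mem_cons_of_mem _ (List.mem_cons_of_mem _ hp))

lemma RegMod_rot2 : ∀ {t : List (MvPolynomial σ F)} {S a}, HomogSet S → HList (a :: t) →
    RegMod S (t ++ [a]) → RegMod S (a :: t)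
  | [], _, _, _, _, h => h
  | b :: t', S, a, hS, hl, h => by
    obtain ⟨da, hda, ha⟩ := hl a List.mem_cons_self
    obtain ⟨db, hdb, hb⟩ := hl b (List.mem_cons_of_mem _ List.mem_cons_self)
    obtain ⟨h1, h2⟩ := h
    have h2' : RegMod (insert b S) (a :: t') := by
      refine RegMod_rot2 (HomogSet_insert hS hdb hb) ?_ h2
      intro p hp
      rcases List.mem_cons.1 hp with rfl | hp
      · exact ⟨da, hda, ha⟩
      · exact hl p (List.mem_cons_of_mem _ (List.mem_cons_of_mem _ hp))
    exact RegMod_swap hS hdb hda hb ha ⟨h1, h2'⟩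

lemma RegMod_append : ∀ {l1 l2 : List (MvPolynomial σ F)} {S},
    RegMod S (l1 ++ l2) ↔ RegMod S l1 ∧ RegMod (S ∪ {x | x ∈ l1}) l2
  | [], l2, S => by
    constructor
    · intro h
      refine ⟨trivial, RegMod_congr ?_ h⟩
      congr 1
      simp
    · intro ⟨_, h⟩
      refine RegMod_congr ?_ h
      congr 1
      simp
  | a :: t, l2, S => by
    have hset : insert a S ∪ {x | x ∈ t} = S ∪ {x | x ∈ a :: t} := by
      ext x; simp [Set.mem_insert_iff, or_assoc, or_comm, or_left_comm]
    constructor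
    · intro ⟨h1, h2⟩
      have h2 : RegMod (insert a S) (t ++ l2) := h2
      rw [RegMod_append] at h2
      exact ⟨⟨h1, h2.1⟩, RegMod_congr (by rw [hset]) h2.2⟩
    · intro ⟨⟨h1, h2⟩, h3⟩
      exact ⟨h1, RegMod_append.mpr ⟨h2, RegMod_congr (by rw [hset]) h3⟩⟩

lemma NZD_of_mul_left {S : Set (MvPolynomial σ F)} {a b : MvPolynomial σ F}
    (h : NZD (a * b) S) : NZD a S := by
  intro g hg
  refine h g ?_
  rw [← mul_assoc]
  exact Ideal.mul_mem_right _ _ hg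

lemma NZD_of_mul_right {S : Set (MvPolynomial σ F)} {a b : MvPolynomial σ F}
    (h : NZD (a * b) S) : NZD b S := by
  refine NZD_of_mul_left (S := S) (b := a) ?_
  rw [mul_comm]; exact h

lemma RegMod_map (π : MvPolynomial σ F →+* MvPolynomial τ F) (hsurj : Function.Surjective π) :
    ∀ {l : List (MvPolynomial σ F)} {S}, RingHom.ker π ≤ Ideal.span S → RegMod S l →
      RegMod (π '' S) (l.map π)
  | [], _, _, _ => trivial
  | a :: t, S, hker, ⟨h1, h2⟩ => by
    refine ⟨?_, ?_⟩
    · intro g' hg'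
      obtain ⟨g, rfl⟩ := hsurj g'
      rw [← Ideal.map_span π S] at hg' ⊢
      rw [← map_mul] at hg'
      obtain ⟨x, hx, hxeq⟩ := Ideal.mem_map_iff_of_surjective π hsurj |>.1 hg'
      have hk : g * a - x ∈ RingHom.ker π := by
        rw [RingHom.mem_ker, map_sub, hxeq, sub_self]
      have hga : g * a ∈ Ideal.span S := by
        have := Submodule.add_mem _ (hker hk) hx
        simpa using this
      exact Ideal.mem_map_of_mem _ (h1 g hga)
    · have := RegMod_map π hsurj
        (l := t) (S := insert a S)
        (le_trans hker (Ideal.span_mono (Set.subset_insert _ _))) h2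
      rwa [Set.image_insert_eq] at this

/-- the algebra map killing the variable `x_0` -/
noncomputable def kill0 (n : ℕ) :
    MvPolynomial (Fin (n + 1)) F →ₐ[F] MvPolynomial (Fin n) F :=
  aeval (Fin.cases 0 X)

@[simp] lemma kill0_X_zero {n : ℕ} : kill0 (F := F) n (X 0) = 0 := by
  simp [kill0]

@[simp] lemma kill0_X_succ {n : ℕ} (i : Fin n) : kill0 (F := F) n (X i.succ) = X i := by
  simp [kill0]

@[simp] lemma kill0_C {n : ℕ} (c : F) : kill0 (F := F) n (C c) = C c := by
  simp [kill0]

lemma kill0_rename {n : ℕ} (p : MvPolynomial (Fin n) F) :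
    kill0 n (rename Fin.succ p) = p := by
  rw [kill0, aeval_rename]
  have h : (Fin.cases (0 : MvPolynomial (Fin n) F) X ∘ Fin.succ) = X := by
    funext i; simp
  rw [h, aeval_X_left_apply]

lemma kill0_surjective (n : ℕ) : Function.Surjective (kill0 (F := F) n) :=
  fun p => ⟨rename Fin.succ p, kill0_rename p⟩

lemma kill0_eq (n : ℕ) (p : MvPolynomial (Fin (n + 1)) F) :
    kill0 n p = Polynomial.eval 0 (finSuccEquiv F n p) := by
  have h : (kill0 (F := F) n).toRingHom =
      (Polynomial.evalRingHom 0).comp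
        ((finSuccEquiv F n).toAlgHom.toRingHom) := by
    apply MvPolynomial.ringHom_ext
    · intro r
      simp [finSuccEquiv_apply]
    · intro i
      refine Fin.cases ?_ ?_ i
      · simp [finSuccEquiv_X_zero]
      · intro j
        simp [finSuccEquiv_X_succ]
  exact RingHom.congr_fun h p

lemma ker_kill0 {n : ℕ} {p : MvPolynomial (Fin (n + 1)) F} (hp : kill0 n p = 0) :
    p ∈ Ideal.span {(X 0 : MvPolynomial (Fin (n + 1)) F)} := by
  rw [kill0_eq] at hp
  have hdvd : Polynomial.X ∣ finSuccEquiv F n p := by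
    rw [Polynomial.X_dvd_iff, Polynomial.coeff_zero_eq_eval_zero, hp]
  obtain ⟨q, hq⟩ := hdvd
  have heq : p = X 0 * (finSuccEquiv F n).symm q := by
    apply (finSuccEquiv F n).injective
    rw [map_mul, AlgEquiv.apply_symm_apply, hq, finSuccEquiv_X_zero]
  rw [heq]
  exact Ideal.mul_mem_right _ _ (Ideal.subset_span rfl)

lemma aeval_isHomogeneous {n m : ℕ} (g : Fin (n + 1) → MvPolynomial (Fin n) F)
    (hg : ∀ i, (g i).IsHomogeneous 1) {p : MvPolynomial (Fin (n + 1)) F}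
    (hp : p.IsHomogeneous m) : (aeval g p).IsHomogeneous m := by
  have h := hp.eval₂ (algebraMap F (MvPolynomial (Fin n) F)) g
    (fun r => isHomogeneous_C _ _) hg
  rw [one_mul] at h
  exact h

lemma kill0_isHomogeneous {n m : ℕ} {p : MvPolynomial (Fin (n + 1)) F}
    (hp : p.IsHomogeneous m) : (kill0 n p).IsHomogeneous m := by
  refine aeval_isHomogeneous _ ?_ hp
  intro i
  refine Fin.cases ?_ ?_ i
  · exact isHomogeneous_zero _ _ _
  · intro j; exact isHomogeneous_X _ _
lemma bridge {k : ℕ} {f : Fin k → MvPolynomial σ F} (h : IsPartialRegSeq F σ f) :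
    RegMod ∅ (List.ofFn f) := by
  have claim : ∀ c i₀ (hik : i₀ + c = k),
      RegMod (f '' {j | j.val < i₀}) (List.ofFn fun t : Fin c => f ⟨i₀ + t.val, by omega⟩) := by
    intro c
    induction c with
    | zero =>
        intro i₀ hik
        rw [List.ofFn_zero]
        trivial
    | succ c IH =>
        intro i₀ hik
        rw [List.ofFn_succ]
        constructor
        · -- NZD of the head
          show NZD (f ⟨i₀ + (0 : Fin (c+1)).val, by omega⟩) (f '' {j | j.val < i₀})
          have hhead : (⟨i₀ + (0 : Fin (c+1)).val, by omega⟩ : Fin k) = ⟨i₀, by omega⟩ := by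
            simp
          rw [hhead]
          intro g hg
          rcases Nat.eq_zero_or_pos i₀ with h0 | hpos
          · subst h0
            have hempty : {j : Fin k | j.val < 0} = ∅ := by ext j; simp
            rw [hempty, Set.image_empty, Ideal.span_empty, Ideal.mem_bot] at hg ⊢
            have hne : f ⟨0, by omega⟩ ≠ 0 := h.1 _ rfl
            rcases mul_eq_zero.1 hg with h' | h'
            · exact h'
            · exact absurd h' hne
          · have hseteq : {j : Fin k | j < ⟨i₀, by omega⟩} = {j : Fin k | j.val < i₀} := by
              ext j; simp [Fin.lt_def]
            have hmk := h.2 ⟨i₀, by omega⟩ hpos g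
            rw [Ideal.Quotient.eq_zero_iff_mem, Ideal.Quotient.eq_zero_iff_mem, hseteq] at hmk
            exact hmk hg
        · -- tail
          have hset2 : insert (f ⟨i₀ + (0 : Fin (c+1)).val, by omega⟩) (f '' {j | j.val < i₀})
              = f '' {j | j.val < i₀ + 1} := by
            ext x
            simp only [Set.mem_insert_iff, Set.mem_image, Set.mem_setOf_eq]
            constructor
            · rintro (rfl | ⟨j, hj, rfl⟩)
              · exact ⟨⟨i₀ + (0 : Fin (c+1)).val, by omega⟩, by simp, rfl⟩
              · exact ⟨j, by omega, rfl⟩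
            · rintro ⟨j, hj, rfl⟩
              rcases Nat.lt_succ_iff_lt_or_eq.1 hj with hlt | heq
              · exact Or.inr ⟨j, hlt, rfl⟩
              · refine Or.inl ?_
                congr 1
                exact Fin.ext (by simp [heq])
          have hfun : (fun t : Fin c => f ⟨(i₀ + 1) + t.val, by omega⟩)
              = ((fun t : Fin (c+1) => f ⟨i₀ + t.val, by omega⟩) ∘ Fin.succ) := by
            funext t
            simp only [Function.comp_apply]
            congr 1
            exact Fin.ext (by simp; omega)
          have := IH (i₀ + 1) (by omega)
          rw [hfun] at this
          rw [← hset2] at this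
          exact this
  have h0 := claim k 0 (by omega)
  have hempty : (f '' {j : Fin k | j.val < 0}) = ∅ := by
    have : {j : Fin k | j.val < 0} = ∅ := by ext j; simp
    rw [this, Set.image_empty]
  have hfun : (fun t : Fin k => f ⟨0 + t.val, by omega⟩) = f := by
    funext t
    congr 1
    exact Fin.ext (by simp)
  rw [hempty, hfun] at h0
  exact h0

theorem key : ∀ (n : ℕ) (L : Fin n → MvPolynomial (Fin n) F),
    (∀ i, (L i).IsHomogeneous 1) →
    RegMod ∅ (List.ofFn fun i => X i * L i) →
    ((∏ i, L i) ∉ Ideal.span (Set.range fun i => X i * L i)) ∧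
    (∀ p : MvPolynomial (Fin n) F,
      (∀ j, X j * p ∈ Ideal.span (Set.range fun i => X i * L i)) →
      ∃ c : F, p - C c * ∏ i, L i ∈ Ideal.span (Set.range fun i => X i * L i))
  | 0, L, _, _ => by
    constructor
    · intro hmem
      have h1 : (∏ i : Fin 0, L i) = 1 := by simp
      have h2 : (Set.range fun i : Fin 0 => X i * L i) = ∅ := by
        simp [Set.range_eq_empty]
      rw [h1, h2, Ideal.span_empty, Ideal.mem_bot] at hmem
      exact one_ne_zero hmem
    · intro p _
      obtain ⟨c, rfl⟩ := C_surjective (Fin 0) p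
      exact ⟨c, by simp⟩
  | (n+1), L, hlin, hreg => by
    classical
    set f : Fin (n+1) → MvPolynomial (Fin (n+1)) F := fun i => X i * L i with hfdef
    have hfh : ∀ i, (f i).IsHomogeneous 2 := fun i => (isHomogeneous_X _ _).mul (hlin i)
    have hHl : HList (List.ofFn f) := by
      intro p hp
      rw [List.mem_ofFn] at hp
      obtain ⟨i, rfl⟩ := hp
      exact ⟨2, by omega, hfh i⟩
    have hSe : HomogSet (∅ : Set (MvPolynomial (Fin (n+1)) F)) := by
      intro s hs; cases hs
    have hofn : List.ofFn f = f 0 :: List.ofFn (fun i : Fin n => f i.succ) :=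
      List.ofFn_succ
    set T : List (MvPolynomial (Fin (n+1)) F) := List.ofFn (fun i : Fin n => f i.succ) with hT
    have hHlT : HList (f 0 :: T) := by rw [← hofn]; exact hHl
    have hrot : RegMod ∅ (T ++ [f 0]) := by
      refine RegMod_rot1 hSe hHlT ?_
      rw [← hofn]; exact hreg
    set SJ : Set (MvPolynomial (Fin (n+1)) F) := Set.range (fun i : Fin n => f i.succ) with hSJ
    have hTset : (∅ ∪ {x | x ∈ T} : Set (MvPolynomial (Fin (n+1)) F)) = SJ := by
      rw [Set.empty_union]
      ext x; simp [hT, List.mem_ofFn, hSJ]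
    have happ := RegMod_append.mp hrot
    have hTreg : RegMod ∅ T := happ.1
    have hf0 : NZD (f 0) SJ := by
      have h2 := happ.2.1
      exact NZD_congr (by rw [hTset]) h2
    have hX0 : NZD (X 0) SJ := NZD_of_mul_left hf0
    have hL0 : NZD (L 0) SJ := NZD_of_mul_right hf0
    -- rotate x_0 to the front
    have happ2 : RegMod ∅ (T ++ [X 0]) := by
      refine RegMod_append.mpr ⟨hTreg, ?_, trivial⟩
      exact NZD_congr (by rw [hTset]) hX0
    have hHlX : HList ((X 0 : MvPolynomial (Fin (n+1)) F) :: T) := by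
      intro p hp
      rcases List.mem_cons.1 hp with rfl | hp
      · exact ⟨1, by omega, isHomogeneous_X _ _⟩
      · exact hHlT p (List.mem_cons_of_mem _ hp)
    have hrot2 : RegMod ∅ ((X 0 : MvPolynomial (Fin (n+1)) F) :: T) :=
      RegMod_rot2 hSe hHlX happ2
    have hregT : RegMod {(X 0 : MvPolynomial (Fin (n+1)) F)} T := by
      have h2 := hrot2.2
      exact RegMod_congr (by congr 1; ext x; simp) h2
    -- push down along kill0
    set πr : MvPolynomial (Fin (n+1)) F →+* MvPolynomial (Fin n) F :=
      (kill0 (F := F) n).toRingHom with hπr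
    have hsurj : Function.Surjective πr := kill0_surjective n
    have hker : RingHom.ker πr ≤ Ideal.span {(X 0 : MvPolynomial (Fin (n+1)) F)} := by
      intro p hp
      exact ker_kill0 (by exact hp)
    have hdown0 : RegMod (πr '' {(X 0 : MvPolynomial (Fin (n+1)) F)}) (T.map πr) :=
      RegMod_map πr hsurj hker hregT
    have himg : (πr '' {(X 0 : MvPolynomial (Fin (n+1)) F)}) = {0} := by
      rw [Set.image_singleton]
      congr 1
      exact kill0_X_zero
    have hdown : RegMod ∅ (T.map πr) := by
      refine RegMod_congr ?_ hdown0
      rw [himg]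
      simp [Ideal.span_empty]
    set L' : Fin n → MvPolynomial (Fin n) F := fun i => kill0 n (L i.succ) with hL'
    have hmapT : T.map πr = List.ofFn (fun i : Fin n => X i * L' i) := by
      rw [hT, List.map_ofFn]
      congr 1
      funext i
      show kill0 n (X i.succ * L i.succ) = X i * L' i
      rw [map_mul, kill0_X_succ]
    have hlin' : ∀ i, (L' i).IsHomogeneous 1 := fun i => kill0_isHomogeneous (hlin i.succ)
    have hdown' : RegMod ∅ (List.ofFn fun i : Fin n => X i * L' i) := by
      rw [← hmapT]; exact hdown
    obtain ⟨IH1, IH2⟩ := key n L' hlin' hdown'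
    -- ideals
    set I : Ideal (MvPolynomial (Fin (n+1)) F) := Ideal.span (Set.range f) with hI
    set J : Ideal (MvPolynomial (Fin (n+1)) F) := Ideal.span SJ with hJ
    set Jt : Ideal (MvPolynomial (Fin (n+1)) F) := Ideal.span (insert (X 0) SJ) with hJt
    set I' : Ideal (MvPolynomial (Fin n) F) :=
      Ideal.span (Set.range fun i : Fin n => X i * L' i) with hI'
    have hrange : Set.range f = insert (f 0) SJ := by
      ext x
      constructor
      · rintro ⟨i, rfl⟩
        refine Fin.cases ?_ ?_ i
        · exact Set.mem_insert _ _
        · intro j; exact Set.mem_insert_of_mem _ ⟨j, rfl⟩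
      · rintro (rfl | ⟨j, rfl⟩)
        · exact ⟨0, rfl⟩
        · exact ⟨j.succ, rfl⟩
    have hJI : J ≤ I := by
      rw [hI, hrange]
      exact Ideal.span_mono (Set.subset_insert _ _)
    have hf0I : f 0 ∈ I := Ideal.subset_span ⟨0, rfl⟩
    have hJJt : J ≤ Jt := Ideal.span_mono (Set.subset_insert _ _)
    have hX0Jt : (X 0 : MvPolynomial (Fin (n+1)) F) ∈ Jt :=
      Ideal.subset_span (Set.mem_insert _ _)
    have memI : ∀ q : MvPolynomial (Fin (n+1)) F,
        q ∈ I ↔ ∃ w, ∃ j ∈ J, q = w * f 0 + j := by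
      intro q
      rw [hI, hrange]
      exact Ideal.mem_span_insert
    have memJt : ∀ q : MvPolynomial (Fin (n+1)) F,
        q ∈ Jt ↔ ∃ w, ∃ j ∈ J, q = w * X 0 + j := by
      intro q
      rw [hJt]
      exact Ideal.mem_span_insert
    -- transfer along πr
    have hmapJt : Ideal.map πr Jt = I' := by
      rw [hJt, Ideal.map_span, Set.image_insert_eq]
      have h1 : πr (X 0) = 0 := kill0_X_zero
      have hcomp : (⇑πr ∘ fun i : Fin n => f i.succ) = fun i : Fin n => X i * L' i := by
        funext i
        show kill0 n (X i.succ * L i.succ) = X i * L' i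
        rw [map_mul, kill0_X_succ]
      have h2 : πr '' SJ = Set.range (fun i : Fin n => X i * L' i) := by
        rw [hSJ, ← Set.range_comp, hcomp]
      have hb : Ideal.span {(0 : MvPolynomial (Fin n) F)} = ⊥ := by
        rw [Ideal.span_singleton_eq_bot]
      rw [h1, h2, Ideal.span_insert, hb, bot_sup_eq]
    have push : ∀ q, q ∈ Jt → πr q ∈ I' := by
      intro q hq
      rw [← hmapJt]
      exact Ideal.mem_map_of_mem _ hq
    have pull : ∀ q, πr q ∈ I' → q ∈ Jt := by
      intro q hq
      rw [← hmapJt] at hq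
      obtain ⟨x, hx, hxeq⟩ := Ideal.mem_map_iff_of_surjective πr hsurj |>.1 hq
      have hk : q - x ∈ RingHom.ker πr := by
        rw [RingHom.mem_ker, map_sub, hxeq, sub_self]
      have hqx : q - x ∈ Jt := by
        refine le_trans hker ?_ hk
        rw [hJt]
        exact Ideal.span_mono (Set.singleton_subset_iff.mpr (Set.mem_insert _ _))
      have := add_mem hqx hx
      simpa using this
    -- products
    have hprodsucc : (∏ i : Fin (n+1), L i) = L 0 * ∏ i : Fin n, L i.succ :=
      Fin.prod_univ_succ L
    set P : MvPolynomial (Fin (n+1)) F := ∏ i : Fin n, L i.succ with hP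
    have hπP : πr P = ∏ i : Fin n, L' i := by
      rw [hP, map_prod]
      rfl
    constructor
    · -- nonvanishing
      intro hmem
      rw [hprodsucc, memI] at hmem
      obtain ⟨w, j, hj, heq⟩ := hmem
      have hLP : (P - w * X 0) * L 0 ∈ J := by
        have heq2 : (P - w * X 0) * L 0 = j := by
          rw [hfdef] at heq
          linear_combination heq
        rw [heq2]; exact hj
      have hPX : P - w * X 0 ∈ J := hL0 _ hLP
      have hPJt : P ∈ Jt := by
        have : P = (P - w * X 0) + w * X 0 := by ring
        rw [this]
        exact add_mem (hJJt hPX) (Ideal.mul_mem_left _ _ hX0Jt)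
      have := push P hPJt
      rw [hπP] at this
      exact IH1 this
    · intro p hp
      -- step 1 : p = L 0 * v + (element of J)
      have h0 : X 0 * p ∈ I := hp 0
      rw [memI] at h0
      obtain ⟨v, j, hj, heq⟩ := h0
      have hp1 : p - v * L 0 ∈ J := by
        refine hX0 _ ?_
        have heq2 : (p - v * L 0) * X 0 = j := by
          rw [hfdef] at heq
          linear_combination heq
        rw [heq2]; exact hj
      -- step 2 : ∀ jj, X jj * v ∈ Jt
      have hstep2 : ∀ jj : Fin (n+1), X jj * v ∈ Jt := by
        intro jj
        have h1 : X jj * (v * L 0) ∈ I := by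
          have heq3 : X jj * (v * L 0) = X jj * p - X jj * (p - v * L 0) := by ring
          rw [heq3]
          exact sub_mem (hp jj) (Ideal.mul_mem_left _ _ (hJI hp1))
        rw [memI] at h1
        obtain ⟨w2, j2, hj2, heq2⟩ := h1
        have h2 : (X jj * v - w2 * X 0) * L 0 ∈ J := by
          have heq4 : (X jj * v - w2 * X 0) * L 0 = j2 := by
            rw [hfdef] at heq2
            linear_combination heq2
          rw [heq4]; exact hj2
        have h3 := hL0 _ h2
        have : X jj * v = (X jj * v - w2 * X 0) + w2 * X 0 := by ring
        rw [this]
        exact add_mem (hJJt h3) (Ideal.mul_mem_left _ _ hX0Jt)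
      -- step 3 : downstairs
      have hdownmem : ∀ j' : Fin n, X j' * πr v ∈ I' := by
        intro j'
        have hh := push _ (hstep2 j'.succ)
        rw [map_mul] at hh
        have hXs : πr (X j'.succ) = X j' := kill0_X_succ j'
        rwa [hXs] at hh
      obtain ⟨c, hc⟩ := IH2 (πr v) hdownmem
      -- step 4 : lift
      have hlift : v - C c * P ∈ Jt := by
        apply pull
        rw [map_sub, map_mul, hπP]
        have hCc : πr (C c) = C c := kill0_C c
        rw [hCc]
        exact hc
      rw [memJt] at hlift
      obtain ⟨w3, j3, hj3, heq3⟩ := hlift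
      refine ⟨c, ?_⟩
      have heq5 : p - C c * ∏ i, L i =
          (p - v * L 0) + w3 * (X 0 * L 0) + j3 * L 0 := by
        rw [hprodsucc]
        linear_combination (L 0) * heq3
      rw [heq5]
      refine add_mem (add_mem (hJI hp1) ?_) (hJI (Ideal.mul_mem_right _ _ hj3))
      exact Ideal.mul_mem_left _ _ hf0I

end SocleAux


/-- If `f i = xᵢ · Lᵢ` (each `Lᵢ` a linear form) is a regular sequence in
`F[x_1,...,x_n]`, then the class of `L₁ ⋯ Lₙ` is a socle generator of the
quotient `F[x_1,...,x_n] ⧸ ⟨f_1,...,f_n⟩`. -/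
theorem stmt5 (F : Type) [Field F] (n : ℕ)
    (L : Fin n → MvPolynomial (Fin n) F)
    (hlin : ∀ i, (L i).IsHomogeneous 1)
    (hreg : IsPartialRegSeq F (Fin n) (fun i => X i * L i)) :
    IsSocleGen F (Fin n) (Ideal.span (Set.range fun i => X i * L i))
      (Ideal.Quotient.mk (Ideal.span (Set.range fun i => X i * L i))
        (∏ i : Fin n, L i)) := by
  have hreg' : SocleAux.RegMod ∅ (List.ofFn fun i => X i * L i) := SocleAux.bridge hreg
  obtain ⟨h1, h2⟩ := SocleAux.key n L hlin hreg'
  set I : Ideal (MvPolynomial (Fin n) F) := Ideal.span (Set.range fun i => X i * L i) with hIdef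
  refine ⟨?_, ?_, ?_⟩
  · intro h
    rw [Ideal.Quotient.eq_zero_iff_mem] at h
    exact h1 h
  · intro j
    rw [← map_mul, Ideal.Quotient.eq_zero_iff_mem]
    have heq : X j * ∏ i, L i = (X j * L j) * ∏ i ∈ Finset.univ.erase j, L i := by
      rw [← Finset.mul_prod_erase Finset.univ L (Finset.mem_univ j)]
      ring
    rw [heq]
    exact Ideal.mul_mem_right _ _ (Ideal.subset_span ⟨j, rfl⟩)
  · intro b hb
    obtain ⟨p, rfl⟩ := Ideal.Quotient.mk_surjective b
    have hp : ∀ j, X j * p ∈ I := by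
      intro j
      rw [← Ideal.Quotient.eq_zero_iff_mem, map_mul]
      exact hb j
    obtain ⟨c, hc⟩ := h2 p hp
    refine ⟨c, ?_⟩
    have hmk : Ideal.Quotient.mk I p = Ideal.Quotient.mk I (C c * ∏ i, L i) :=
      (Ideal.Quotient.mk_eq_mk_iff_sub_mem p (C c * ∏ i, L i)).mpr hc
    rw [hmk, ← MvPolynomial.smul_eq_C_mul]
    rw [show Ideal.Quotient.mk I = ⇑(Ideal.Quotient.mkₐ F I) from rfl]
    exact map_smul _ c _
end

section
/- Let F be a field, n ≥ 1, N_1,...,N_n positive integers, and fix scalars λ_{i,j}^k ∈ F for 1 ≤ i ≤ n, j ≠ i, 0 ≤ k ≤ N_i−1. In the polynomial ring F[Z_{i,k} | 1 ≤ i ≤ n, 1 ≤ k ≤ N_i], let J be the ideal generated by the products Z_{i,j}·L_{i,j} for all 1 ≤ i ≤ n, 1 ≤ j ≤ N_i. Then for each 1 ≤ i ≤ n, the polynomial Z_{i,N_i} · ∏_{k=0}^{N_i−1} (Z_{i,N_i} − Σ_{j≠i} λ_{i,j}^k Z_{j,N_j}) belongs to J. Consequently there is a well-defined F-algebra homomorphism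 φ : A → Â with φ(x_i) = Z_{i,N_i}, where A = F[x_1,...,x_n]/⟨x_i·∏_{k=0}^{N_i−1}(x_i − Σ_{j≠i} λ_{i,j}^k x_j) | 1 ≤ i ≤ n⟩ and Â = F[Z_{i,k}]/J. -/
open MvPolynomial Finset

/-- The variable `Z_{i, N i}` (top variable of the `i`-th block) in
`F[Z_{i,k} | 1 ≤ i ≤ n, 1 ≤ k ≤ N i]`; the index `⟨i, t⟩` with `t : Fin (N i)`
represents the variable `Z_{i, t+1}`. -/
noncomputable def Ztop {F : Type} [Field F] {n : ℕ} (N : Fin n → ℕ) (hN : ∀ i, 0 < N i)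
    (i : Fin n) : MvPolynomial ((i : Fin n) × Fin (N i)) F :=
  X ⟨i, ⟨N i - 1, Nat.sub_lt (hN i) Nat.one_pos⟩⟩

/-- The linear form `L_{i,j}` (at index `p = ⟨i, j-1⟩`):
`L_{i,N i} = Z_{i,1} + ⋯ + Z_{i,N i - 1} - Z_{i,N i} + ∑_{j ≠ i} λ⁰_{i,j} Z_{j,N j}`,
and for `1 ≤ k ≤ N i - 1`,
`L_{i,k} = Z_{i,1} + ⋯ + Z_{i,k} - ∑_{j ≠ i} (λ^{N i - k}_{i,j} - λ⁰_{i,j}) Z_{j,N j}`. -/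
noncomputable def Lform {F : Type} [Field F] {n : ℕ} (N : Fin n → ℕ) (hN : ∀ i, 0 < N i)
    (lam : Fin n → Fin n → ℕ → F) (p : (i : Fin n) × Fin (N i)) :
    MvPolynomial ((i : Fin n) × Fin (N i)) F :=
  if p.2.val + 1 = N p.1 then
    (∑ t ∈ univ.filter fun t : Fin (N p.1) => t.val + 1 < N p.1, X (⟨p.1, t⟩ : (i : Fin n) × Fin (N i)))
      - X p
      + ∑ j ∈ univ.erase p.1, C (lam p.1 j 0) * Ztop N hN j
  else
    (∑ t ∈ univ.filter fun t : Fin (N p.1) => t.val ≤ p.2.val, X (⟨p.1, t⟩ : (i : Fin n) × Fin (N i)))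
      - ∑ j ∈ univ.erase p.1,
          C (lam p.1 j (N p.1 - (p.2.val + 1)) - lam p.1 j 0) * Ztop N hN j

/-- Auxiliary inductive claim: `y·u_t·∏_{m=1}^{d}(y - c_m) = 0` whenever `t+1+d = M`. -/
lemma key_aux {R : Type*} [CommRing R] (M : ℕ) (y : R) (u c : ℕ → R)
    (H1 : y * (y - c 0) = y * ∑ s ∈ Finset.range (M - 1), u s)
    (H2 : ∀ t, t + 1 < M → u t * ∑ s ∈ Finset.range (t + 1), u s
        = u t * (c (M - (t + 1)) - c 0)) :
    ∀ d, 0 < d → ∀ t, t + 1 + d = M →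
      y * u t * ∏ m ∈ Finset.range d, (y - c (m + 1)) = 0 := by
  intro d
  induction d using Nat.strong_induction_on with
  | _ d ih =>
    intro hd t ht
    obtain ⟨e, rfl⟩ : ∃ e, d = e + 1 := ⟨d - 1, by omega⟩
    have hstep : y * u t * (y - c (e + 1)) = ∑ s ∈ Finset.Ico (t + 1) (M - 1), y * u t * u s := by
      have h2 := H2 t (by omega)
      have he : e + 1 = M - (t + 1) := by omega
      have hsub : ∑ s ∈ Finset.Ico (t + 1) (M - 1), u s
          = ∑ s ∈ Finset.range (M - 1), u s - ∑ s ∈ Finset.range (t + 1), u s :=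
        Finset.sum_Ico_eq_sub _ (by omega)
      rw [← Finset.mul_sum, hsub, he]
      linear_combination u t * H1 + y * h2
    calc y * u t * ∏ m ∈ Finset.range (e + 1), (y - c (m + 1))
        = (y * u t * (y - c (e + 1))) * ∏ m ∈ Finset.range e, (y - c (m + 1)) := by
          rw [Finset.prod_range_succ]; ring
      _ = ∑ s ∈ Finset.Ico (t + 1) (M - 1), (y * u t * u s) * ∏ m ∈ Finset.range e, (y - c (m + 1)) := by
          rw [hstep, Finset.sum_mul]
      _ = 0 := by
          apply Finset.sum_eq_zero
          intro s hs
          rw [Finset.mem_Ico] at hs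
          set d' := M - (s + 1) with hd'
          have h1 : s + 1 + d' = M := by omega
          have h2 : d' < e + 1 := by omega
          have h3 : 0 < d' := by omega
          obtain ⟨f, hf⟩ : ∃ f, e = d' + f := ⟨e - d', by omega⟩
          have ihz := ih d' h2 h3 s h1
          have hprod : ∏ m ∈ Finset.range e, (y - c (m + 1))
              = (∏ m ∈ Finset.range d', (y - c (m + 1)))
                * ∏ m ∈ Finset.range f, (y - c (d' + m + 1)) := by
            rw [hf, Finset.prod_range_add]
          calc (y * u t * u s) * ∏ m ∈ Finset.range e, (y - c (m + 1))
              = (y * u s * ∏ m ∈ Finset.range d', (y - c (m + 1)))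
                * (u t * ∏ m ∈ Finset.range f, (y - c (d' + m + 1))) := by
                rw [hprod]; ring
            _ = 0 := by rw [ihz, zero_mul]

/-- Abstract key lemma: in a commutative ring, the two families of relations imply
`y · ∏_{k=0}^{M-1} (y - c_k) = 0`. -/
lemma key {R : Type*} [CommRing R] (M : ℕ) (hM : 0 < M) (y : R) (u c : ℕ → R)
    (H1 : y * (y - c 0) = y * ∑ s ∈ Finset.range (M - 1), u s)
    (H2 : ∀ t, t + 1 < M → u t * ∑ s ∈ Finset.range (t + 1), u s
        = u t * (c (M - (t + 1)) - c 0)) :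
    y * ∏ k ∈ Finset.range M, (y - c k) = 0 := by
  have hcalc : y * ∏ k ∈ Finset.range M, (y - c k)
      = ∑ s ∈ Finset.range (M - 1), (y * u s) * ∏ m ∈ Finset.range (M - 1), (y - c (m + 1)) := by
    conv_lhs => rw [show M = (M - 1) + 1 from by omega, Finset.prod_range_succ']
    rw [show y * ((∏ i ∈ Finset.range (M-1), (y - c (i+1))) * (y - c 0))
        = (y * (y - c 0)) * ∏ i ∈ Finset.range (M-1), (y - c (i+1)) from by ring,
      H1, Finset.mul_sum, Finset.sum_mul]
  rw [hcalc]
  apply Finset.sum_eq_zero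
  intro s hs
  rw [Finset.mem_range] at hs
  set d' := M - (s + 1) with hd'
  have h1 : s + 1 + d' = M := by omega
  have h3 : 0 < d' := by omega
  obtain ⟨f, hf⟩ : ∃ f, M - 1 = d' + f := ⟨M - 1 - d', by omega⟩
  have ihz := key_aux M y u c H1 H2 d' h3 s h1
  calc (y * u s) * ∏ m ∈ Finset.range (M - 1), (y - c (m + 1))
      = (y * u s * ∏ m ∈ Finset.range d', (y - c (m + 1)))
        * ∏ m ∈ Finset.range f, (y - c (d' + m + 1)) := by
        rw [hf, Finset.prod_range_add]; ring
    _ = 0 := by rw [ihz, zero_mul]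

/-- Converting a sum over a filtered `Fin (N i)` into a sum over `Finset.range m`. -/
lemma sum_conv {F : Type} [Field F] {n : ℕ} (N : Fin n → ℕ) (i : Fin n)
    {Q : Type*} [CommRing Q] (g : MvPolynomial ((i : Fin n) × Fin (N i)) F →+* Q)
    (P : Fin (N i) → Prop) [DecidablePred P] (m : ℕ) (hm : m ≤ N i)
    (hP : ∀ t : Fin (N i), P t ↔ t.val < m) :
    g (∑ t ∈ univ.filter P, X (⟨i, t⟩ : (i : Fin n) × Fin (N i)))
      = ∑ s ∈ Finset.range m,
          (if h : s < N i then g (X (⟨i, ⟨s, h⟩⟩ : (i : Fin n) × Fin (N i))) else 0) := by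
  set f : ℕ → Q := fun s =>
    if h : s < N i then g (X (⟨i, ⟨s, h⟩⟩ : (i : Fin n) × Fin (N i))) else 0 with hf
  rw [map_sum, Finset.sum_filter]
  have h1 : ∀ t : Fin (N i),
      (if P t then g (X (⟨i, t⟩ : (i : Fin n) × Fin (N i))) else 0)
        = if t.val < m then f t.val else 0 := by
    intro t
    simp only [hf, t.isLt, dif_pos, Fin.eta, hP t]
  rw [Finset.sum_congr rfl fun t _ => h1 t]
  rw [Fin.sum_univ_eq_sum_range (fun s => if s < m then f s else 0)]
  rw [← Finset.sum_subset (Finset.range_subset_range.mpr hm)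
      (fun x _ hx => by rw [Finset.mem_range] at hx; rw [if_neg (by omega)])]
  exact Finset.sum_congr rfl fun s hs => by
    rw [Finset.mem_range] at hs; rw [if_pos hs]

set_option maxHeartbeats 1600000 in
/-- For each `i`, the polynomial
`Z_{i,N i} · ∏_{k=0}^{N i - 1} (Z_{i,N i} - ∑_{j ≠ i} λᵏ_{i,j} Z_{j,N j})` lies in the
ideal `J = ⟨Z_{i,j} · L_{i,j}⟩`; consequently there is a well-defined `F`-algebra
homomorphism `φ : A → Â` with `φ(xᵢ) = Z_{i,N i}`, where
`A = F[x] ⧸ ⟨xᵢ · ∏ₖ (xᵢ - ∑_{j ≠ i} λᵏ_{i,j} xⱼ)⟩` and `Â = F[Z] ⧸ J`. -/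
theorem stmt7 (F : Type) [Field F] (n : ℕ) (N : Fin n → ℕ) (hN : ∀ i, 0 < N i)
    (lam : Fin n → Fin n → ℕ → F) :
    (∀ i : Fin n,
      Ztop N hN i *
        ∏ k ∈ Finset.range (N i),
          (Ztop N hN i - ∑ j ∈ univ.erase i, C (lam i j k) * Ztop N hN j) ∈
      Ideal.span (Set.range fun p : (i : Fin n) × Fin (N i) =>
        X p * Lform N hN lam p)) ∧
    ∃ φ : (MvPolynomial (Fin n) F ⧸
            (Ideal.span (Set.range fun i : Fin n =>
              X i * ∏ k ∈ Finset.range (N i),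
                (X i - ∑ j ∈ univ.erase i, C (lam i j k) * X j)) : Ideal (MvPolynomial (Fin n) F))) →ₐ[F]
          (MvPolynomial ((i : Fin n) × Fin (N i)) F ⧸
            Ideal.span (Set.range fun p : (i : Fin n) × Fin (N i) =>
              X p * Lform N hN lam p)),
      ∀ i : Fin n,
        φ (Ideal.Quotient.mk _ (X i)) = Ideal.Quotient.mk _ (Ztop N hN i) := by
  classical
  set J : Ideal (MvPolynomial ((i : Fin n) × Fin (N i)) F) :=
    Ideal.span (Set.range fun p : (i : Fin n) × Fin (N i) => X p * Lform N hN lam p) with hJ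
  have hgen : ∀ p, Ideal.Quotient.mk J (X p * Lform N hN lam p) = 0 := fun p =>
    Ideal.Quotient.eq_zero_iff_mem.mpr (Ideal.subset_span ⟨p, rfl⟩)
  have hmain : ∀ i : Fin n,
      Ideal.Quotient.mk J (Ztop N hN i * ∏ k ∈ Finset.range (N i),
        (Ztop N hN i - ∑ j ∈ univ.erase i, C (lam i j k) * Ztop N hN j)) = 0 := by
    intro i
    have H1 : Ideal.Quotient.mk J (Ztop N hN i) *
          (Ideal.Quotient.mk J (Ztop N hN i)
            - Ideal.Quotient.mk J (∑ j ∈ univ.erase i, C (lam i j 0) * Ztop N hN j))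
        = Ideal.Quotient.mk J (Ztop N hN i) *
          ∑ s ∈ Finset.range (N i - 1),
            (if h : s < N i then
              Ideal.Quotient.mk J (X (⟨i, ⟨s, h⟩⟩ : (i : Fin n) × Fin (N i))) else 0) := by
      have htop := hgen ⟨i, ⟨N i - 1, Nat.sub_lt (hN i) Nat.one_pos⟩⟩
      simp only [Lform] at htop
      rw [if_pos (by have := hN i; omega : N i - 1 + 1 = N i)] at htop
      rw [map_mul, map_add, map_sub,
        sum_conv N i (Ideal.Quotient.mk J) _ (N i - 1) (by have := hN i; omega)
          (fun t => by constructor <;> (intro h; omega))] at htop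
      have hz : Ideal.Quotient.mk J (Ztop N hN i)
          = Ideal.Quotient.mk J
              (X (⟨i, ⟨N i - 1, Nat.sub_lt (hN i) Nat.one_pos⟩⟩ : (i : Fin n) × Fin (N i))) := rfl
      rw [hz]
      linear_combination -htop
    have H2 : ∀ t, t + 1 < N i →
        (if h : t < N i then
            Ideal.Quotient.mk J (X (⟨i, ⟨t, h⟩⟩ : (i : Fin n) × Fin (N i))) else 0) *
          ∑ s ∈ Finset.range (t + 1),
            (if h : s < N i then
              Ideal.Quotient.mk J (X (⟨i, ⟨s, h⟩⟩ : (i : Fin n) × Fin (N i))) else 0)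
        = (if h : t < N i then
            Ideal.Quotient.mk J (X (⟨i, ⟨t, h⟩⟩ : (i : Fin n) × Fin (N i))) else 0) *
          (Ideal.Quotient.mk J
              (∑ j ∈ univ.erase i, C (lam i j (N i - (t + 1))) * Ztop N hN j)
            - Ideal.Quotient.mk J (∑ j ∈ univ.erase i, C (lam i j 0) * Ztop N hN j)) := by
      intro t ht
      have ht' : t < N i := by omega
      rw [dif_pos ht']
      have hrel := hgen ⟨i, ⟨t, ht'⟩⟩
      simp only [Lform] at hrel
      rw [if_neg (by omega : ¬ (t + 1 = N i))] at hrel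
      rw [map_mul, map_sub,
        sum_conv N i (Ideal.Quotient.mk J) _ (t + 1) (by omega)
          (fun s => by constructor <;> (intro h; omega))] at hrel
      have hcs : Ideal.Quotient.mk J
            (∑ j ∈ univ.erase i, C (lam i j (N i - (t + 1)) - lam i j 0) * Ztop N hN j)
          = Ideal.Quotient.mk J
              (∑ j ∈ univ.erase i, C (lam i j (N i - (t + 1))) * Ztop N hN j)
            - Ideal.Quotient.mk J (∑ j ∈ univ.erase i, C (lam i j 0) * Ztop N hN j) := by
        rw [← map_sub, ← Finset.sum_sub_distrib]
        exact congrArg _ (Finset.sum_congr rfl fun j _ => by rw [C_sub, sub_mul])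
      rw [hcs] at hrel
      linear_combination hrel
    have hz := key (N i) (hN i) (Ideal.Quotient.mk J (Ztop N hN i))
      (fun s => if h : s < N i then
        Ideal.Quotient.mk J (X (⟨i, ⟨s, h⟩⟩ : (i : Fin n) × Fin (N i))) else 0)
      (fun k => Ideal.Quotient.mk J (∑ j ∈ univ.erase i, C (lam i j k) * Ztop N hN j))
      H1 H2
    rw [map_mul, map_prod]
    simp only [map_sub]
    exact hz
  refine ⟨fun i => Ideal.Quotient.eq_zero_iff_mem.mp (hmain i), ?_⟩
  set f : MvPolynomial (Fin n) F →ₐ[F]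
      (MvPolynomial ((i : Fin n) × Fin (N i)) F ⧸ J) :=
    aeval (fun i : Fin n => Ideal.Quotient.mk J (Ztop N hN i)) with hfdef
  have hker : ∀ i : Fin n,
      f (X i * ∏ k ∈ Finset.range (N i),
        (X i - ∑ j ∈ univ.erase i, C (lam i j k) * X j)) = 0 := by
    intro i
    have heq : f (X i * ∏ k ∈ Finset.range (N i),
        (X i - ∑ j ∈ univ.erase i, C (lam i j k) * X j))
      = Ideal.Quotient.mk J (Ztop N hN i * ∏ k ∈ Finset.range (N i),
          (Ztop N hN i - ∑ j ∈ univ.erase i, C (lam i j k) * Ztop N hN j)) := by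
      simp only [hfdef, map_mul, map_prod, map_sub, map_sum, aeval_X, aeval_C,
        ← Ideal.Quotient.mk_algebraMap, MvPolynomial.algebraMap_eq]
    rw [heq, hmain i]
  refine ⟨Ideal.Quotient.liftₐ _ f ?_, ?_⟩
  · intro a ha
    have hle : Ideal.span (Set.range fun i : Fin n =>
        X i * ∏ k ∈ Finset.range (N i),
          (X i - ∑ j ∈ univ.erase i, C (lam i j k) * X j)) ≤ RingHom.ker f.toRingHom :=
      Ideal.span_le.mpr (by rintro _ ⟨i, rfl⟩; exact hker i)
    exact hle ha
  · intro i
    show f (X i) = _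
    rw [hfdef, aeval_X]
end

section
/- Let F be a field, N_1,...,N_n positive integers, and λ_{i,j}^k ∈ F fixed scalars. Let A = F[x_1,...,x_n]/⟨x_i·∏_{k=0}^{N_i−1}(x_i − Σ_{j≠i} λ_{i,j}^k x_j) | 1 ≤ i ≤ n⟩ and let Â = F[Z_{i,k} | 1 ≤ i ≤ n, 1 ≤ k ≤ N_i]/⟨Z_{i,j}·L_{i,j} | 1 ≤ i ≤ n, 1 ≤ j ≤ N_i⟩. If A is Artinian (finite-dimensional as an F-vector space), then Â is also Artinian (finite-dimensional as an F-vector space). -/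
attribute [local instance] MvPolynomial.gradedAlgebra
open MvPolynomial Finset

/-- Helper 2: if every variable is in the radical of `I`, the quotient is
finite-dimensional. -/
lemma findim_of_X_mem_radical {σ : Type} [Finite σ] {F : Type} [Field F]
    (I : Ideal (MvPolynomial σ F)) (h : ∀ p : σ, X p ∈ I.radical) :
    FiniteDimensional F (MvPolynomial σ F ⧸ I) := by
  set B := MvPolynomial σ F ⧸ I
  have hint : ∀ p : σ, IsIntegral F ((Ideal.Quotient.mkₐ F I) (X p)) := by
    intro p
    obtain ⟨m, hm⟩ := (Ideal.mem_radical_iff).mp (h p)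
    refine ⟨Polynomial.X ^ (m + 1), Polynomial.monic_X_pow _, ?_⟩
    have hm' : (X p : MvPolynomial σ F) ^ (m + 1) ∈ I := by
      rw [pow_succ]
      exact Ideal.mul_mem_right _ _ hm
    simp only [Polynomial.eval₂_X_pow, Polynomial.aeval_X_pow]
    rw [← map_pow]
    exact Ideal.Quotient.eq_zero_iff_mem.mpr hm'
  have hadj : Algebra.adjoin F (Set.range fun p : σ => (Ideal.Quotient.mkₐ F I) (X p)) = ⊤ := by
    have : (Set.range fun p : σ => (Ideal.Quotient.mkₐ F I) (X p))
        = (Ideal.Quotient.mkₐ F I) '' (Set.range (X : σ → MvPolynomial σ F)) := by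
      rw [← Set.range_comp]; rfl
    rw [this, ← AlgHom.map_adjoin, MvPolynomial.adjoin_range_X, Algebra.map_top,
      (AlgHom.range_eq_top _).mpr (Ideal.Quotient.mkₐ_surjective F I)]
  have hfg : (Algebra.adjoin F
      (Set.range fun p : σ => (Ideal.Quotient.mkₐ F I) (X p))).toSubmodule.FG :=
    fg_adjoin_of_finite (Set.finite_range _) (by rintro x ⟨p, rfl⟩; exact hint p)
  rw [hadj] at hfg
  exact ⟨by rwa [← Algebra.top_toSubmodule]⟩

/-- Helper 1: a homogeneous ideal with finite-dimensional quotient contains a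
positive power of each variable. -/
lemma exists_pow_X_mem {n : ℕ} {F : Type} [Field F]
    (s : Set (MvPolynomial (Fin n) F)) (hs : ∀ g ∈ s, ∃ e, g.IsHomogeneous e)
    (hfin : FiniteDimensional F (MvPolynomial (Fin n) F ⧸ Ideal.span s)) (i : Fin n) :
    ∃ d : ℕ, 0 < d ∧ (X i : MvPolynomial (Fin n) F) ^ d ∈ Ideal.span s := by
  have hint : IsIntegral F ((Ideal.Quotient.mkₐ F (Ideal.span s)) (X i)) :=
    IsIntegral.of_finite F _
  obtain ⟨p, hpmonic, hproot⟩ := hint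
  -- replace p by p * X to ensure positive degree
  set q : Polynomial F := p * Polynomial.X with hq
  have hqmonic : q.Monic := hpmonic.mul (Polynomial.monic_X)
  have hproot' : Polynomial.aeval ((Ideal.Quotient.mkₐ F (Ideal.span s)) (X i)) p = 0 := hproot
  have hqroot : Polynomial.aeval ((Ideal.Quotient.mkₐ F (Ideal.span s)) (X i)) q = 0 := by
    rw [hq, map_mul, hproot', zero_mul]
  set d : ℕ := q.natDegree with hd
  have hd0 : 0 < d := by
    rw [hd, hq, Polynomial.natDegree_mul hpmonic.ne_zero Polynomial.X_ne_zero,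
      Polynomial.natDegree_X]
    omega
  refine ⟨d, hd0, ?_⟩
  -- the polynomial g = q(X i) lies in the span
  have hg : Polynomial.aeval (X i : MvPolynomial (Fin n) F) q ∈ Ideal.span s := by
    rw [← Ideal.Quotient.eq_zero_iff_mem (I := Ideal.span s)]
    have h2 := Polynomial.aeval_algHom_apply (Ideal.Quotient.mkₐ F (Ideal.span s))
      (X i : MvPolynomial (Fin n) F) q
    show (Ideal.Quotient.mkₐ F (Ideal.span s)) ((Polynomial.aeval (X i)) q) = 0
    rw [← h2, hqroot]
  -- homogeneity of the span
  have hhom : (Ideal.span s).IsHomogeneous (homogeneousSubmodule (Fin n) F) := by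
    apply Ideal.homogeneous_span
    intro x hx
    obtain ⟨e, he⟩ := hs x hx
    exact ⟨e, (mem_homogeneousSubmodule _ _).mpr he⟩
  have hcompmem := hhom d hg
  have hdecomp : (DirectSum.decompose (homogeneousSubmodule (Fin n) F)
      (Polynomial.aeval (X i : MvPolynomial (Fin n) F) q) d : MvPolynomial (Fin n) F)
      = homogeneousComponent d (Polynomial.aeval (X i : MvPolynomial (Fin n) F) q) :=
    MvPolynomial.decomposition.decompose'_apply _ _
  rw [hdecomp] at hcompmem
  have hcomp : homogeneousComponent d (Polynomial.aeval (X i : MvPolynomial (Fin n) F) q)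
      = X i ^ d := by
    rw [Polynomial.aeval_eq_sum_range, map_sum]
    have hterm : ∀ k ∈ Finset.range (d + 1),
        homogeneousComponent d (q.coeff k • (X i : MvPolynomial (Fin n) F) ^ k)
        = if d = k then q.coeff k • (X i : MvPolynomial (Fin n) F) ^ k else 0 := by
      intro k _
      rw [LinearMap.map_smul, homogeneousComponent_of_mem
        ((mem_homogeneousSubmodule _ _).mpr (by
          simpa using (MvPolynomial.isHomogeneous_X F i).pow k))]
      split <;> simp
    rw [Finset.sum_congr rfl hterm, Finset.sum_ite_eq (Finset.range (d+1)) d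
      (fun k => q.coeff k • (X i : MvPolynomial (Fin n) F) ^ k)]
    rw [if_pos (Finset.self_mem_range_succ d)]
    rw [hqmonic.coeff_natDegree, one_smul]
  rwa [hcomp] at hcompmem

/-- The pointwise vanishing argument over an integral domain. -/
lemma point_vanishes {F : Type} [Field F] {n : ℕ} (N : Fin n → ℕ) (hN : ∀ i, 0 < N i)
    (lam : Fin n → Fin n → ℕ → F) {D : Type} [CommRing D] [IsDomain D]
    (π : MvPolynomial ((i : Fin n) × Fin (N i)) F →+* D)
    (hz : ∀ q : (i : Fin n) × Fin (N i), π (X q * Lform N hN lam q) = 0)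
    (hpow : ∀ i : Fin n, ∃ d, 0 < d ∧
      (X i : MvPolynomial (Fin n) F) ^ d ∈ Ideal.span (Set.range fun i : Fin n =>
        X i * ∏ k ∈ Finset.range (N i),
          (X i - ∑ j ∈ Finset.univ.erase i, C (lam i j k) * X j)))
    (q : (i : Fin n) × Fin (N i)) : π (X q) = 0 := by
  classical
  set z : ∀ i : Fin n, Fin (N i) → D := fun i t => π (X ⟨i, t⟩) with hzdef
  set w : Fin n → D := fun j => π (Ztop N hN j) with hwdef
  set μ : Fin n → ℕ → D := fun i k => ∑ j ∈ univ.erase i, π (C (lam i j k)) * w j with hμdef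
  have hztop : ∀ i : Fin n, z i ⟨N i - 1, Nat.sub_lt (hN i) Nat.one_pos⟩ = w i := fun i => rfl
  -- pushing π through the top linear form
  have hLtop : ∀ i : Fin n,
      π (Lform N hN lam ⟨i, ⟨N i - 1, Nat.sub_lt (hN i) Nat.one_pos⟩⟩)
      = (∑ t ∈ univ.filter fun t : Fin (N i) => t.val + 1 < N i, z i t) - w i + μ i 0 := by
    intro i
    rw [Lform, if_pos (by simpa using Nat.succ_pred_eq_of_pos (hN i))]
    simp only [map_add, map_sub, map_sum, map_mul]
    rfl
  -- pushing π through the lower linear forms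
  have hLlow : ∀ (i : Fin n) (t : Fin (N i)), t.val + 1 ≠ N i →
      π (Lform N hN lam ⟨i, t⟩)
      = (∑ t' ∈ univ.filter fun t' : Fin (N i) => t'.val ≤ t.val, z i t')
        - (μ i (N i - (t.val + 1)) - μ i 0) := by
    intro i t ht
    rw [Lform, if_neg (by simpa using ht)]
    simp only [map_sub, map_sum, map_mul, C_sub, sub_mul, hzdef, hwdef, hμdef,
      Finset.sum_sub_distrib]
  -- claim 1 : the A-relations hold at the point (w j)
  have claim1 : ∀ i : Fin n, w i * ∏ k ∈ Finset.range (N i), (w i - μ i k) = 0 := by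
    intro i
    by_cases hw : w i = 0
    · rw [hw, zero_mul]
    have htop := hz ⟨i, ⟨N i - 1, Nat.sub_lt (hN i) Nat.one_pos⟩⟩
    rw [map_mul] at htop
    have hLz := (mul_eq_zero.mp htop).resolve_left hw
    rw [hLtop i] at hLz
    have hkey : w i - μ i 0
        = ∑ t ∈ univ.filter (fun t : Fin (N i) => t.val + 1 < N i), z i t := by
      linear_combination -hLz
    by_cases hS : (∑ t ∈ univ.filter (fun t : Fin (N i) => t.val + 1 < N i), z i t) = 0
    · exact mul_eq_zero_of_right _ (Finset.prod_eq_zero (Finset.mem_range.mpr (hN i))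
        (by rw [hkey, hS]))
    · have hTne : (univ.filter (fun t : Fin (N i) => t.val + 1 < N i ∧ z i t ≠ 0)).Nonempty := by
        by_contra hc
        rw [Finset.not_nonempty_iff_eq_empty] at hc
        apply hS
        apply Finset.sum_eq_zero
        intro t ht
        by_contra hzt
        have hmem : t ∈ univ.filter (fun t : Fin (N i) => t.val + 1 < N i ∧ z i t ≠ 0) :=
          Finset.mem_filter.mpr ⟨Finset.mem_univ _, (Finset.mem_filter.mp ht).2, hzt⟩
        rw [hc] at hmem
        exact absurd hmem (Finset.notMem_empty t)
      set r := (univ.filter (fun t : Fin (N i) => t.val + 1 < N i ∧ z i t ≠ 0)).max' hTne with hr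
      have hrmem := Finset.max'_mem _ hTne
      rw [← hr] at hrmem
      obtain ⟨-, hrlt, hrz⟩ : r ∈ univ ∧ r.val + 1 < N i ∧ z i r ≠ 0 := by
        simpa [Finset.mem_filter, and_assoc] using hrmem
      have hrel := hz ⟨i, r⟩
      rw [map_mul] at hrel
      have hrLz := (mul_eq_zero.mp hrel).resolve_left hrz
      rw [hLlow i r (by omega)] at hrLz
      have hsum_eq : (∑ t' ∈ univ.filter fun t' : Fin (N i) => t'.val ≤ r.val, z i t')
          = ∑ t ∈ univ.filter (fun t : Fin (N i) => t.val + 1 < N i), z i t := by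
        apply Finset.sum_subset
        · intro t ht
          rw [Finset.mem_filter] at ht ⊢
          exact ⟨ht.1, by omega⟩
        · intro t ht hnt
          rw [Finset.mem_filter] at ht hnt
          by_contra hzt
          have hmem : t ∈ univ.filter (fun t : Fin (N i) => t.val + 1 < N i ∧ z i t ≠ 0) :=
            Finset.mem_filter.mpr ⟨Finset.mem_univ _, ht.2, hzt⟩
          have := Finset.le_max' _ t hmem
          rw [← hr] at this
          exact absurd ⟨ht.1, this⟩ hnt
      apply mul_eq_zero_of_right
      refine Finset.prod_eq_zero (Finset.mem_range.mpr (show N i - (r.val + 1) < N i by omega)) ?_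
      linear_combination hkey + hrLz - hsum_eq
  -- claim 2 : all the top variables vanish
  have hwm : ∀ i : Fin n, w i = 0 := by
    set f : F →+* D := π.comp (C : F →+* MvPolynomial ((i : Fin n) × Fin (N i)) F) with hf
    set ε : MvPolynomial (Fin n) F →+* D := eval₂Hom f (fun j => w j) with hε
    have hεgen : ∀ i : Fin n,
        ε (X i * ∏ k ∈ Finset.range (N i),
          (X i - ∑ j ∈ Finset.univ.erase i, C (lam i j k) * X j))
        = w i * ∏ k ∈ Finset.range (N i), (w i - μ i k) := by
      intro i
      rw [hε, map_mul, map_prod]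
      congr 1
      · exact eval₂Hom_X' _ _ _
      · refine Finset.prod_congr rfl fun k _ => ?_
        rw [map_sub, map_sum, eval₂Hom_X']
        congr 1
        refine Finset.sum_congr rfl fun j _ => ?_
        rw [map_mul, eval₂Hom_X', eval₂Hom_C]
        rfl
    have hker : Ideal.span (Set.range fun i : Fin n =>
        X i * ∏ k ∈ Finset.range (N i),
          (X i - ∑ j ∈ Finset.univ.erase i, C (lam i j k) * X j)) ≤ RingHom.ker ε := by
      rw [Ideal.span_le]
      rintro g ⟨i, rfl⟩
      exact RingHom.mem_ker.mpr ((hεgen i).trans (claim1 i))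
    intro i
    obtain ⟨d, hd0, hXd⟩ := hpow i
    have h0 : ε (X i ^ d) = 0 := RingHom.mem_ker.mp (hker hXd)
    rw [map_pow, eval₂Hom_X'] at h0
    exact (pow_eq_zero_iff hd0.ne').mp h0
  -- claim 3 : all variables vanish
  have claim3 : ∀ (m : ℕ) (i : Fin n) (t : Fin (N i)), t.val = m → z i t = 0 := by
    intro m
    induction m using Nat.strong_induction_on with
    | _ m ih =>
      intro i t ht
      by_cases htop : t.val + 1 = N i
      · have heq : t = ⟨N i - 1, Nat.sub_lt (hN i) Nat.one_pos⟩ := Fin.ext (show t.val = N i - 1 by omega)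
        rw [heq, hztop]
        exact hwm i
      · have h1 := hz ⟨i, t⟩
        rw [map_mul, hLlow i t htop] at h1
        have hμ : ∀ k, μ i k = 0 := fun k =>
          Finset.sum_eq_zero fun j _ => by rw [hwm j, mul_zero]
        rw [hμ, hμ, sub_zero, sub_zero] at h1
        have hsum : (∑ t' ∈ univ.filter fun t' : Fin (N i) => t'.val ≤ t.val, z i t')
            = z i t := by
          rw [Finset.sum_eq_single t]
          · intro t' ht' hne
            refine ih t'.val ?_ i t' rfl
            rw [Finset.mem_filter] at ht'
            have : t'.val ≠ t.val := fun hc => hne (Fin.ext hc)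
            omega
          · intro habs
            exact absurd (Finset.mem_filter.mpr ⟨Finset.mem_univ t, le_refl t.val⟩) habs
        rw [hsum] at h1
        exact mul_self_eq_zero.mp h1
  obtain ⟨i, t⟩ := q
  exact claim3 t.val i t rfl

/-- If `A = F[x] ⧸ ⟨xᵢ · ∏ₖ (xᵢ - ∑_{j ≠ i} λᵏ_{i,j} xⱼ)⟩` is Artinian
(finite-dimensional over `F`), then so is
`Â = F[Z_{i,k}] ⧸ ⟨Z_{i,j} · L_{i,j}⟩`. -/
theorem stmt8 (F : Type) [Field F] (n : ℕ) (N : Fin n → ℕ) (hN : ∀ i, 0 < N i)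
    (lam : Fin n → Fin n → ℕ → F)
    (hA : FiniteDimensional F
      (MvPolynomial (Fin n) F ⧸
        (Ideal.span (Set.range fun i : Fin n =>
          X i * ∏ k ∈ Finset.range (N i),
            (X i - ∑ j ∈ Finset.univ.erase i, C (lam i j k) * X j)) : Ideal (MvPolynomial (Fin n) F)))) :
    FiniteDimensional F
      (MvPolynomial ((i : Fin n) × Fin (N i)) F ⧸
        Ideal.span (Set.range fun p : (i : Fin n) × Fin (N i) =>
          X p * Lform N hN lam p)) := by
  classical
  have hgenhom : ∀ i : Fin n, ((X i : MvPolynomial (Fin n) F) * ∏ k ∈ Finset.range (N i),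
      (X i - ∑ j ∈ Finset.univ.erase i, C (lam i j k) * X j)).IsHomogeneous
        (1 + ∑ _k ∈ Finset.range (N i), 1) := fun i =>
    (isHomogeneous_X F i).mul (IsHomogeneous.prod _ _ _ fun k _ =>
      (isHomogeneous_X F i).sub (IsHomogeneous.sum _ _ _ fun j _ =>
        isHomogeneous_C_mul_X _ _))
  have hpow : ∀ i : Fin n, ∃ d, 0 < d ∧
      (X i : MvPolynomial (Fin n) F) ^ d ∈ Ideal.span (Set.range fun i : Fin n =>
        X i * ∏ k ∈ Finset.range (N i),
          (X i - ∑ j ∈ Finset.univ.erase i, C (lam i j k) * X j)) := fun i =>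
    exists_pow_X_mem _ (by rintro g ⟨i, rfl⟩; exact ⟨_, hgenhom i⟩) hA i
  apply findim_of_X_mem_radical
  intro p
  rw [Ideal.radical_eq_sInf]
  refine Submodule.mem_sInf.mpr ?_
  rintro P ⟨hIP, hP⟩
  haveI := hP
  rw [← Ideal.Quotient.eq_zero_iff_mem]
  exact point_vanishes N hN lam (Ideal.Quotient.mk P)
    (fun q => Ideal.Quotient.eq_zero_iff_mem.mpr (hIP (Ideal.subset_span ⟨q, rfl⟩)))
    hpow p
end

section
/- Let F be a field, N_1,...,N_n positive integers, and λ_{i,j}^k ∈ F fixed scalars. In the polynomial ring F[Z_{i,k} | 1 ≤ i ≤ n, 1 ≤ k ≤ N_i], let J be the ideal generated by the products Z_{i,j}·L_{i,j}. For each 1 ≤ i ≤ n set M_i := ∏_{k=0}^{N_i−1} (Z_{i,N_i} − Σ_{j≠i} λ_{i,j}^k Z_{j,N_j}) and L_i := ∏_{k=0}^{N_i−1} L_{i,N_i−k}. Then M_1···M_n ≡ (−1)^n · L_1···L_n modulo J, i.e. M_1···M_n − (−1)^n ∏_{i=1}^n ∏_{j=1}^{N_i} L_{i,j} ∈ J.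 -/
open MvPolynomial Finset

namespace Stmt10Aux

variable {F : Type} [Field F] {n : ℕ} (N : Fin n → ℕ) (hN : ∀ i, 0 < N i)
  (lam : Fin n → Fin n → ℕ → F)

/-- The linear form `∑_{j ≠ i} λ^k_{i,j} Z_{j,N_j}`. -/
noncomputable def aF (i : Fin n) (k : ℕ) : MvPolynomial ((i : Fin n) × Fin (N i)) F :=
  ∑ j ∈ univ.erase i, C (lam i j k) * Ztop N hN j

/-- `Z_{i,1} + ⋯ + Z_{i,m}`. -/
noncomputable def Ss (i : Fin n) (m : ℕ) : MvPolynomial ((i : Fin n) × Fin (N i)) F :=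
  ∑ t ∈ univ.filter (fun t : Fin (N i) => t.val < m), X (⟨i, t⟩ : (i : Fin n) × Fin (N i))

noncomputable def Jid : Ideal (MvPolynomial ((i : Fin n) × Fin (N i)) F) :=
  Ideal.span (Set.range fun p : (i : Fin n) × Fin (N i) => X p * Lform N hN lam p)

def tfin (i : Fin n) : Fin (N i) := ⟨N i - 1, Nat.sub_lt (hN i) Nat.one_pos⟩

noncomputable def Mb (i : Fin n) : MvPolynomial ((i : Fin n) × Fin (N i)) F :=
  ∏ k ∈ Finset.range (N i), (Ztop N hN i - aF N hN lam i k)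

noncomputable def Lb (i : Fin n) : MvPolynomial ((i : Fin n) × Fin (N i)) F :=
  ∏ t : Fin (N i), Lform N hN lam ⟨i, t⟩

noncomputable def Tid (i : Fin n) : Ideal (MvPolynomial ((i : Fin n) × Fin (N i)) F) :=
  Ideal.span {x | ∃ j, j ≠ i ∧ x = Ztop N hN j}

lemma gen_mem (p : (i : Fin n) × Fin (N i)) :
    X p * Lform N hN lam p ∈ Jid N hN lam :=
  Ideal.subset_span ⟨p, rfl⟩

lemma Lform_top (i : Fin n) :
    Lform N hN lam ⟨i, tfin N hN i⟩ =
      Ss N i (N i - 1) - Ztop N hN i + aF N hN lam i 0 := by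
  have hc : (tfin N hN i).val + 1 = N i := Nat.succ_pred_eq_of_pos (hN i)
  have hf : (univ.filter fun t : Fin (N i) => t.val + 1 < N i)
      = univ.filter (fun t : Fin (N i) => t.val < N i - 1) := by
    ext t; simp only [mem_filter, mem_univ, true_and]; omega
  rw [Lform, if_pos hc]
  rw [hf]
  rfl

lemma Lform_low (i : Fin n) (t : Fin (N i)) (ht : t.val + 1 < N i) :
    Lform N hN lam ⟨i, t⟩ =
      Ss N i (t.val + 1) - (aF N hN lam i (N i - (t.val + 1)) - aF N hN lam i 0) := by
  have hf : (univ.filter fun s : Fin (N i) => s.val ≤ t.val)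
      = univ.filter (fun s : Fin (N i) => s.val < t.val + 1) := by
    ext s; simp only [mem_filter, mem_univ, true_and]; omega
  rw [Lform]
  dsimp only
  rw [if_neg (by omega), hf]
  rw [Ss, aF, aF]
  congr 1
  rw [← Finset.sum_sub_distrib]
  exact Finset.sum_congr rfl fun j _ => by rw [map_sub]; ring

lemma Ss_split (i : Fin n) {m m' : ℕ} (h : m ≤ m') :
    Ss (F := F) N i m' = Ss N i m +
      ∑ s ∈ univ.filter (fun s : Fin (N i) => m ≤ s.val ∧ s.val < m'),
        X (⟨i, s⟩ : (i : Fin n) × Fin (N i)) := by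
  have h1 : (univ.filter fun s : Fin (N i) => s.val < m').filter (fun s => s.val < m)
      = univ.filter (fun s : Fin (N i) => s.val < m) := by
    rw [Finset.filter_filter]
    ext s; simp only [mem_filter, mem_univ, true_and]; omega
  have h2 : (univ.filter fun s : Fin (N i) => s.val < m').filter (fun s => ¬ s.val < m)
      = univ.filter (fun s : Fin (N i) => m ≤ s.val ∧ s.val < m') := by
    rw [Finset.filter_filter]
    ext s; simp only [mem_filter, mem_univ, true_and]; omega
  rw [Ss, Ss, ← Finset.sum_filter_add_sum_filter_not
    (univ.filter fun s : Fin (N i) => s.val < m') (fun s => s.val < m)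
    (fun s => X (⟨i, s⟩ : (i : Fin n) × Fin (N i))), h1, h2]

lemma Ztop_eq (i : Fin n) : Ztop N hN i
    = (X (⟨i, tfin N hN i⟩ : (i : Fin n) × Fin (N i)) :
        MvPolynomial ((i : Fin n) × Fin (N i)) F) := rfl

lemma top_gen_mem (i : Fin n) :
    Ztop N hN i * Lform N hN lam ⟨i, tfin N hN i⟩ ∈ Jid N hN lam := by
  rw [Ztop_eq]; exact gen_mem N hN lam _

lemma key_identity (i : Fin n) (t : Fin (N i)) (d : ℕ) (hd : t.val + 1 + d = N i)
    (hd1 : 1 ≤ d) :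
    Ztop N hN i * X (⟨i, t⟩ : (i : Fin n) × Fin (N i)) * (Ztop N hN i - aF N hN lam i d) =
      Ztop N hN i * (X (⟨i, t⟩ : (i : Fin n) × Fin (N i)) * Lform N hN lam ⟨i, t⟩)
      - X (⟨i, t⟩ : (i : Fin n) × Fin (N i)) *
          (Ztop N hN i * Lform N hN lam ⟨i, tfin N hN i⟩)
      + ∑ s ∈ univ.filter (fun s : Fin (N i) => t.val + 1 ≤ s.val ∧ s.val < N i - 1),
          Ztop N hN i * X (⟨i, t⟩ : (i : Fin n) × Fin (N i)) *
            X (⟨i, s⟩ : (i : Fin n) × Fin (N i)) := by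
  have ht : t.val + 1 < N i := by omega
  rw [Lform_low N hN lam i t ht, Lform_top N hN lam i]
  have hda : N i - (t.val + 1) = d := by omega
  rw [hda]
  rw [Ss_split N i (show t.val + 1 ≤ N i - 1 by omega)]
  rw [show (∑ s ∈ univ.filter (fun s : Fin (N i) => t.val + 1 ≤ s.val ∧ s.val < N i - 1),
          Ztop N hN i * X (⟨i, t⟩ : (i : Fin n) × Fin (N i)) *
            X (⟨i, s⟩ : (i : Fin n) × Fin (N i)))
      = Ztop N hN i * X (⟨i, t⟩ : (i : Fin n) × Fin (N i)) *
          ∑ s ∈ univ.filter (fun s : Fin (N i) => t.val + 1 ≤ s.val ∧ s.val < N i - 1),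
            X (⟨i, s⟩ : (i : Fin n) × Fin (N i)) from (Finset.mul_sum _ _ _).symm]
  ring

lemma wzA (i : Fin n) : ∀ d : ℕ, 1 ≤ d → ∀ t : Fin (N i), t.val + 1 + d = N i →
    Ztop N hN i * X (⟨i, t⟩ : (i : Fin n) × Fin (N i)) *
        ∏ k ∈ Finset.range d, (Ztop N hN i - aF N hN lam i (k + 1))
      ∈ Jid N hN lam := by
  intro d
  induction d using Nat.strong_induction_on with
  | _ d IH =>
    intro hd1 t hdt
    obtain ⟨e, rfl⟩ : ∃ e, d = e + 1 := ⟨d - 1, by omega⟩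
    rw [Finset.prod_range_succ]
    have hre : Ztop N hN i * X (⟨i, t⟩ : (i : Fin n) × Fin (N i)) *
          ((∏ k ∈ Finset.range e, (Ztop N hN i - aF N hN lam i (k + 1))) *
            (Ztop N hN i - aF N hN lam i (e + 1)))
        = (Ztop N hN i * X (⟨i, t⟩ : (i : Fin n) × Fin (N i)) *
            (Ztop N hN i - aF N hN lam i (e + 1))) *
          ∏ k ∈ Finset.range e, (Ztop N hN i - aF N hN lam i (k + 1)) := by ring
    rw [hre, key_identity N hN lam i t (e + 1) hdt (by omega), add_mul, sub_mul]
    refine Ideal.add_mem _ (Ideal.sub_mem _ ?_ ?_) ?_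
    · exact Ideal.mul_mem_right _ _ (Ideal.mul_mem_left _ _ (gen_mem N hN lam _))
    · exact Ideal.mul_mem_right _ _ (Ideal.mul_mem_left _ _ (top_gen_mem N hN lam i))
    · rw [Finset.sum_mul]
      refine Ideal.sum_mem _ fun s hs => ?_
      simp only [mem_filter, mem_univ, true_and] at hs
      set ds := N i - (s.val + 1) with hds
      have h1 : 1 ≤ ds := by omega
      have h2 : ds < e + 1 := by omega
      have h3 : s.val + 1 + ds = N i := by omega
      have h4 : ds ≤ e := by omega
      have hsplit : (∏ k ∈ Finset.range ds, (Ztop N hN i - aF N hN lam i (k + 1))) *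
            (∏ k ∈ Finset.Ico ds e, (Ztop N hN i - aF N hN lam i (k + 1)))
          = ∏ k ∈ Finset.range e, (Ztop N hN i - aF N hN lam i (k + 1)) := by
        exact Finset.prod_range_mul_prod_Ico _ h4
      have heq : Ztop N hN i * X (⟨i, t⟩ : (i : Fin n) × Fin (N i)) *
            X (⟨i, s⟩ : (i : Fin n) × Fin (N i)) *
            ∏ k ∈ Finset.range e, (Ztop N hN i - aF N hN lam i (k + 1))
          = (Ztop N hN i * X (⟨i, s⟩ : (i : Fin n) × Fin (N i)) *
              ∏ k ∈ Finset.range ds, (Ztop N hN i - aF N hN lam i (k + 1))) *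
            (X (⟨i, t⟩ : (i : Fin n) × Fin (N i)) *
              ∏ k ∈ Finset.Ico ds e, (Ztop N hN i - aF N hN lam i (k + 1))) := by
        rw [← hsplit]; ring
      rw [heq]
      exact Ideal.mul_mem_right _ _ (IH ds h2 h1 s h3)

lemma wM (i : Fin n) : Ztop N hN i * Mb N hN lam i ∈ Jid N hN lam := by
  rw [Mb, show Finset.range (N i) = Finset.range ((N i - 1) + 1) from by
    rw [Nat.sub_add_cancel (hN i)], Finset.prod_range_succ']
  have hid : Ztop N hN i *
        ((∏ k ∈ Finset.range (N i - 1), (Ztop N hN i - aF N hN lam i (k + 1))) *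
          (Ztop N hN i - aF N hN lam i 0))
      = (Ztop N hN i * Ss N i (N i - 1)) *
          (∏ k ∈ Finset.range (N i - 1), (Ztop N hN i - aF N hN lam i (k + 1)))
        - (Ztop N hN i * Lform N hN lam ⟨i, tfin N hN i⟩) *
          (∏ k ∈ Finset.range (N i - 1), (Ztop N hN i - aF N hN lam i (k + 1))) := by
    rw [Lform_top N hN lam i]; ring
  rw [hid]
  refine Ideal.sub_mem _ ?_ (Ideal.mul_mem_right _ _ (top_gen_mem N hN lam i))
  rw [Ss, Finset.mul_sum, Finset.sum_mul]
  refine Ideal.sum_mem _ fun t ht => ?_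
  simp only [mem_filter, mem_univ, true_and] at ht
  set dt := N i - (t.val + 1) with hdt
  have h1 : 1 ≤ dt := by omega
  have h3 : t.val + 1 + dt = N i := by omega
  have h4 : dt ≤ N i - 1 := by omega
  have hsplit : (∏ k ∈ Finset.range dt, (Ztop N hN i - aF N hN lam i (k + 1))) *
        (∏ k ∈ Finset.Ico dt (N i - 1), (Ztop N hN i - aF N hN lam i (k + 1)))
      = ∏ k ∈ Finset.range (N i - 1), (Ztop N hN i - aF N hN lam i (k + 1)) := by
    exact Finset.prod_range_mul_prod_Ico _ h4
  have heq : Ztop N hN i * X (⟨i, t⟩ : (i : Fin n) × Fin (N i)) *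
        ∏ k ∈ Finset.range (N i - 1), (Ztop N hN i - aF N hN lam i (k + 1))
      = (Ztop N hN i * X (⟨i, t⟩ : (i : Fin n) × Fin (N i)) *
          ∏ k ∈ Finset.range dt, (Ztop N hN i - aF N hN lam i (k + 1))) *
        (∏ k ∈ Finset.Ico dt (N i - 1), (Ztop N hN i - aF N hN lam i (k + 1))) := by
    rw [← hsplit]; ring
  rw [heq]
  exact Ideal.mul_mem_right _ _ (wzA N hN lam i dt h1 t h3)

set_option maxHeartbeats 1000000 in
set_option synthInstance.maxHeartbeats 1000000 in
lemma ML_mem (i : Fin n) :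
    Mb N hN lam i + Lb N hN lam i ∈ Jid N hN lam ⊔ Tid N hN i := by
  set Q : Ideal (MvPolynomial ((i : Fin n) × Fin (N i)) F) := Jid N hN lam ⊔ Tid N hN i with hQ
  refine Ideal.Quotient.eq_zero_iff_mem.mp ?_
  set q : MvPolynomial ((i : Fin n) × Fin (N i)) F →+* _ := Ideal.Quotient.mk Q with hq
  have hq0 : ∀ p : (i : Fin n) × Fin (N i), q (X p * Lform N hN lam p) = 0 := fun p =>
    Ideal.Quotient.eq_zero_iff_mem.mpr (Ideal.mem_sup_left (gen_mem N hN lam p))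
  have hqt : ∀ j, j ≠ i → q (Ztop N hN j) = 0 := fun j hj =>
    Ideal.Quotient.eq_zero_iff_mem.mpr (Ideal.mem_sup_right (Ideal.subset_span ⟨j, hj, rfl⟩))
  have hqa : ∀ k, q (aF N hN lam i k) = 0 := by
    intro k
    rw [aF, map_sum]
    refine Finset.sum_eq_zero fun j hj => ?_
    rw [map_mul, hqt j (Finset.mem_erase.mp hj).1, mul_zero]
  have hz : ∀ t : Fin (N i), t.val + 1 < N i →
      q (X (⟨i, t⟩ : (i : Fin n) × Fin (N i))) * q (Ss N i (t.val + 1)) = 0 := by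
    intro t ht
    have h0 := hq0 ⟨i, t⟩
    rw [Lform_low N hN lam i t ht, map_mul, map_sub, map_sub, hqa, hqa] at h0
    simpa using h0
  have hw : q (Ztop N hN i) * q (Ss N i (N i - 1)) = q (Ztop N hN i) * q (Ztop N hN i) := by
    have h0 := hq0 ⟨i, tfin N hN i⟩
    rw [← Ztop_eq, Lform_top N hN lam i, map_mul, map_add, map_sub, hqa] at h0
    have : q (Ztop N hN i) * (q (Ss N i (N i - 1)) - q (Ztop N hN i)) = 0 := by
      simpa using h0
    linear_combination this
  -- B1
  have hB1 : ∀ m, m ≤ N i - 1 → (q (Ss N i (N i - 1))) ^ m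
      = ∏ k ∈ Finset.range m, q (Ss N i (N i - 1 - k)) := by
    intro m
    induction m with
    | zero => simp
    | succ m ih =>
      intro hm
      rw [pow_succ, ih (by omega), Finset.prod_range_succ]
      have hsub := Ss_split (F := F) N i (show N i - 1 - m ≤ N i - 1 by omega)
      have hzero : (∏ k ∈ Finset.range m, q (Ss N i (N i - 1 - k))) *
          q (∑ s ∈ univ.filter (fun s : Fin (N i) => N i - 1 - m ≤ s.val ∧ s.val < N i - 1),
              X (⟨i, s⟩ : (i : Fin n) × Fin (N i))) = 0 := by
        rw [map_sum, Finset.mul_sum]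
        refine Finset.sum_eq_zero fun s hs => ?_
        simp only [mem_filter, mem_univ, true_and] at hs
        have hk0 : N i - 2 - s.val ∈ Finset.range m := by
          rw [Finset.mem_range]; omega
        rw [← Finset.mul_prod_erase _ _ hk0]
        have hval : N i - 1 - (N i - 2 - s.val) = s.val + 1 := by omega
        rw [hval]
        have := hz s (by omega)
        calc q (Ss N i (s.val + 1)) *
              (∏ k ∈ (Finset.range m).erase (N i - 2 - s.val), q (Ss N i (N i - 1 - k))) *
              q (X (⟨i, s⟩ : (i : Fin n) × Fin (N i)))
            = (q (X (⟨i, s⟩ : (i : Fin n) × Fin (N i))) * q (Ss N i (s.val + 1))) *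
              (∏ k ∈ (Finset.range m).erase (N i - 2 - s.val), q (Ss N i (N i - 1 - k))) := by
              ring
          _ = 0 := by rw [this, zero_mul]
      calc (∏ k ∈ Finset.range m, q (Ss N i (N i - 1 - k))) * q (Ss N i (N i - 1))
          = (∏ k ∈ Finset.range m, q (Ss N i (N i - 1 - k))) *
              (q (Ss N i (N i - 1 - m)) +
                q (∑ s ∈ univ.filter (fun s : Fin (N i) => N i - 1 - m ≤ s.val ∧ s.val < N i - 1),
                    X (⟨i, s⟩ : (i : Fin n) × Fin (N i)))) := by
            rw [← map_add, ← hsub]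
        _ = (∏ k ∈ Finset.range m, q (Ss N i (N i - 1 - k))) * q (Ss N i (N i - 1 - m)) := by
            rw [mul_add, hzero, add_zero]
  -- B2
  have hB2 : q (Ss N i (N i - 1)) *
      ∏ k ∈ Finset.range (N i - 1), q (Ss N i (N i - 1 - k)) = 0 := by
    rw [Ss, map_sum, Finset.sum_mul]
    refine Finset.sum_eq_zero fun s hs => ?_
    simp only [mem_filter, mem_univ, true_and] at hs
    have hk0 : N i - 2 - s.val ∈ Finset.range (N i - 1) := by
      rw [Finset.mem_range]; omega
    rw [← Finset.mul_prod_erase _ _ hk0]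
    have hval : N i - 1 - (N i - 2 - s.val) = s.val + 1 := by omega
    rw [hval]
    have := hz s (by omega)
    calc q (X (⟨i, s⟩ : (i : Fin n) × Fin (N i))) *
          (q (Ss N i (s.val + 1)) *
            ∏ k ∈ (Finset.range (N i - 1)).erase (N i - 2 - s.val), q (Ss N i (N i - 1 - k)))
        = (q (X (⟨i, s⟩ : (i : Fin n) × Fin (N i))) * q (Ss N i (s.val + 1))) *
            ∏ k ∈ (Finset.range (N i - 1)).erase (N i - 2 - s.val), q (Ss N i (N i - 1 - k)) := by
          ring
      _ = 0 := by rw [this, zero_mul]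
  -- B3
  have hB3 : ∀ m : ℕ, (q (Ztop N hN i)) ^ (m + 1)
      = q (Ztop N hN i) * (q (Ss N i (N i - 1))) ^ m := by
    intro m
    induction m with
    | zero => simp
    | succ m ih =>
      calc (q (Ztop N hN i)) ^ (m + 2) = (q (Ztop N hN i)) ^ (m + 1) * q (Ztop N hN i) := by
            rw [pow_succ]
        _ = q (Ztop N hN i) * q (Ztop N hN i) * (q (Ss N i (N i - 1))) ^ m := by
            rw [ih]; ring
        _ = q (Ztop N hN i) * q (Ss N i (N i - 1)) * (q (Ss N i (N i - 1))) ^ m := by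
            rw [← hw]
        _ = q (Ztop N hN i) * (q (Ss N i (N i - 1))) ^ (m + 1) := by
            rw [pow_succ]; ring
  -- images of Mb and Lb
  have hM : q (Mb N hN lam i) = (q (Ztop N hN i)) ^ (N i) := by
    rw [Mb, map_prod]
    have : ∀ k ∈ Finset.range (N i), q (Ztop N hN i - aF N hN lam i k) = q (Ztop N hN i) := by
      intro k _
      rw [map_sub, hqa, sub_zero]
    rw [Finset.prod_congr rfl this, Finset.prod_const, Finset.card_range]
  have hL : q (Lb N hN lam i) = (q (Ss N i (N i - 1)) - q (Ztop N hN i)) *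
      ∏ k ∈ Finset.range (N i - 1), q (Ss N i (N i - 1 - k)) := by
    rw [Lb, map_prod, ← Finset.mul_prod_erase _ _ (Finset.mem_univ (tfin N hN i))]
    congr 1
    · rw [Lform_top N hN lam i, map_add, map_sub, hqa, add_zero]
    · have hbij : ∏ t ∈ univ.erase (tfin N hN i), q (Lform N hN lam ⟨i, t⟩)
          = ∏ k ∈ Finset.range (N i - 1), q (Ss N i (k + 1)) := by
        refine Finset.prod_bij' (fun t _ => t.val) (fun k hk => ⟨k, by
          simp only [Finset.mem_range] at hk; omega⟩) ?_ ?_ ?_ ?_ ?_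
        · intro t ht
          rcases Finset.mem_erase.mp ht with ⟨hne, -⟩
          have hne' : t.val ≠ N i - 1 := fun h => hne (Fin.ext h)
          have h2 : t.val < N i := t.isLt
          show t.val ∈ Finset.range (N i - 1)
          rw [Finset.mem_range]
          omega
        · intro k hk
          simp only [Finset.mem_range] at hk
          refine Finset.mem_erase.mpr ⟨?_, Finset.mem_univ _⟩
          intro h
          have hval : k = N i - 1 := by simpa [tfin] using congrArg Fin.val h
          omega
        · intro t ht; exact Fin.ext rfl
        · intro k hk; rfl
        · intro t ht
          rcases Finset.mem_erase.mp ht with ⟨hne, -⟩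
          have hlt : t.val + 1 < N i := by
            have : t.val ≠ N i - 1 := fun h => hne (Fin.ext h)
            omega
          rw [Lform_low N hN lam i t hlt, map_sub, map_sub, hqa, hqa]
          simp
      rw [hbij]
      have hrefl : ∏ k ∈ Finset.range (N i - 1), q (Ss N i (N i - 1 - k))
          = ∏ k ∈ Finset.range (N i - 1), q (Ss N i (((N i - 1) - 1 - k) + 1)) := by
        refine Finset.prod_congr rfl fun k hk => ?_
        rw [Finset.mem_range] at hk
        have harg : N i - 1 - k = ((N i - 1) - 1 - k) + 1 := by omega
        rw [harg]
      rw [hrefl, Finset.prod_range_reflect (fun k => q (Ss N i (k + 1))) (N i - 1)]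
  -- combine
  rw [map_add, hM, hL]
  have hNe : N i = (N i - 1) + 1 := by have := hN i; omega
  have hMN : q (Ztop N hN i) ^ (N i)
      = q (Ztop N hN i) * q (Ss N i (N i - 1)) ^ (N i - 1) := by
    conv_lhs => rw [hNe]
    exact hB3 (N i - 1)
  rw [hMN, hB1 (N i - 1) le_rfl]
  linear_combination hB2

lemma wL (j : Fin n) : Ztop N hN j * Lb N hN lam j ∈ Jid N hN lam := by
  rw [Lb, ← Finset.mul_prod_erase _ _ (Finset.mem_univ (tfin N hN j)), ← mul_assoc]
  exact Ideal.mul_mem_right _ _ (top_gen_mem N hN lam j)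

lemma Tid_mul_mem (a : Fin n) (c : MvPolynomial ((i : Fin n) × Fin (N i)) F)
    (hc : ∀ j, j ≠ a → Ztop N hN j * c ∈ Jid N hN lam) :
    ∀ v ∈ Tid N hN a, v * c ∈ Jid N hN lam := by
  intro v hv
  refine Submodule.span_induction ?_ ?_ ?_ ?_ hv
  · rintro x ⟨j, hj, rfl⟩
    exact hc j hj
  · rw [zero_mul]; exact Ideal.zero_mem _
  · intro x y hx hy px py
    rw [add_mul]; exact Ideal.add_mem _ px py
  · intro r x hx px
    rw [smul_eq_mul, mul_assoc]
    exact Ideal.mul_mem_left _ _ px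

lemma main_aux (s : Finset (Fin n)) :
    (∏ i ∈ s, Mb N hN lam i - ∏ i ∈ s, (-(Lb N hN lam i))) * ∏ j ∈ sᶜ, Mb N hN lam j
      ∈ Jid N hN lam := by
  classical
  induction s using Finset.induction_on with
  | empty => simp only [Finset.prod_empty, sub_self, zero_mul]; exact Ideal.zero_mem _
  | @insert a s' ha ih =>
    rw [Finset.prod_insert ha, Finset.prod_insert ha, Finset.compl_insert]
    have hains : a ∈ s'ᶜ := Finset.mem_compl.mpr ha
    have hP : ∏ j ∈ s'ᶜ, Mb N hN lam j
        = Mb N hN lam a * ∏ j ∈ s'ᶜ.erase a, Mb N hN lam j :=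
      (Finset.mul_prod_erase _ _ hains).symm
    have hsplit : (Mb N hN lam a * ∏ i ∈ s', Mb N hN lam i -
          -Lb N hN lam a * ∏ i ∈ s', -Lb N hN lam i) * ∏ j ∈ s'ᶜ.erase a, Mb N hN lam j
        = (∏ i ∈ s', Mb N hN lam i - ∏ i ∈ s', -Lb N hN lam i) *
            (Mb N hN lam a * ∏ j ∈ s'ᶜ.erase a, Mb N hN lam j)
          + (Mb N hN lam a + Lb N hN lam a) *
            ((∏ i ∈ s', -Lb N hN lam i) * ∏ j ∈ s'ᶜ.erase a, Mb N hN lam j) := by ring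
    rw [hsplit, ← hP]
    refine Ideal.add_mem _ ih ?_
    obtain ⟨u, hu, v, hv, huv⟩ := Submodule.mem_sup.mp (ML_mem N hN lam a)
    rw [← huv, add_mul]
    refine Ideal.add_mem _ (Ideal.mul_mem_right _ _ hu) ?_
    refine Tid_mul_mem N hN lam a _ ?_ v hv
    intro j hj
    by_cases hjs : j ∈ s'
    · have hY : ∏ i ∈ s', -Lb N hN lam i
          = -Lb N hN lam j * ∏ i ∈ s'.erase j, -Lb N hN lam i :=
        (Finset.mul_prod_erase _ _ hjs).symm
      have heq : Ztop N hN j *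
            ((∏ i ∈ s', -Lb N hN lam i) * ∏ j' ∈ s'ᶜ.erase a, Mb N hN lam j')
          = (Ztop N hN j * Lb N hN lam j) *
            (-((∏ i ∈ s'.erase j, -Lb N hN lam i) * ∏ j' ∈ s'ᶜ.erase a, Mb N hN lam j')) := by
        rw [hY]; ring
      rw [heq]
      exact Ideal.mul_mem_right _ _ (wL N hN lam j)
    · have hjc : j ∈ s'ᶜ.erase a := Finset.mem_erase.mpr ⟨hj, Finset.mem_compl.mpr hjs⟩
      have hPP : ∏ j' ∈ s'ᶜ.erase a, Mb N hN lam j'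
          = Mb N hN lam j * ∏ j' ∈ (s'ᶜ.erase a).erase j, Mb N hN lam j' :=
        (Finset.mul_prod_erase _ _ hjc).symm
      have heq : Ztop N hN j *
            ((∏ i ∈ s', -Lb N hN lam i) * ∏ j' ∈ s'ᶜ.erase a, Mb N hN lam j')
          = (Ztop N hN j * Mb N hN lam j) *
            ((∏ i ∈ s', -Lb N hN lam i) * ∏ j' ∈ (s'ᶜ.erase a).erase j, Mb N hN lam j') := by
        rw [hPP]; ring
      rw [heq]
      exact Ideal.mul_mem_right _ _ (wM N hN lam j)

end Stmt10Aux

/-- With `M i = ∏_{k=0}^{N i - 1} (Z_{i,N i} - ∑_{j ≠ i} λᵏ_{i,j} Z_{j,N j})` and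
`L_i = ∏_{k=0}^{N i - 1} L_{i, N i - k}`, one has
`M_1 ⋯ M_n ≡ (-1)ⁿ · L_1 ⋯ L_n` modulo the ideal `J = ⟨Z_{i,j} · L_{i,j}⟩`. -/
theorem stmt10 (F : Type) [Field F] (n : ℕ) (N : Fin n → ℕ) (hN : ∀ i, 0 < N i)
    (lam : Fin n → Fin n → ℕ → F) :
    (∏ i : Fin n, ∏ k ∈ Finset.range (N i),
        (Ztop N hN i - ∑ j ∈ univ.erase i, C (lam i j k) * Ztop N hN j))
      - (-1 : MvPolynomial ((i : Fin n) × Fin (N i)) F) ^ n *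
          ∏ p : (i : Fin n) × Fin (N i), Lform N hN lam p ∈
    Ideal.span (Set.range fun p : (i : Fin n) × Fin (N i) =>
      X p * Lform N hN lam p) := by
    classical
  have h1 : (∏ p : (i : Fin n) × Fin (N i), Lform N hN lam p)
      = ∏ i : Fin n, Stmt10Aux.Lb N hN lam i := by
    rw [← Finset.univ_sigma_univ, Finset.prod_sigma]
    rfl
  have h2 : ((-1 : MvPolynomial ((i : Fin n) × Fin (N i)) F) ^ n) *
        ∏ i : Fin n, Stmt10Aux.Lb N hN lam i
      = ∏ i : Fin n, -Stmt10Aux.Lb N hN lam i := by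
    have hc : ((-1 : MvPolynomial ((i : Fin n) × Fin (N i)) F)) ^ n
        = ∏ _i : Fin n, (-1 : MvPolynomial ((i : Fin n) × Fin (N i)) F) := by
      rw [Finset.prod_const, Finset.card_univ, Fintype.card_fin]
    rw [hc, ← Finset.prod_mul_distrib]
    exact Finset.prod_congr rfl fun i _ => by ring
  rw [h1, h2]
  have hm := Stmt10Aux.main_aux N hN lam Finset.univ
  rw [Finset.compl_univ, Finset.prod_empty, mul_one] at hm
  exact hm
end

section
/- Let F be a field, N_1,...,N_n positive integers, and λ_{i,j}^k ∈ F fixed scalars. In the polynomial ring F[Z_{i,k} | 1 ≤ i ≤ n, 1 ≤ k ≤ N_i], let J be the ideal generated by the products Z_{i,j}·L_{i,j}. Set M_i := ∏_{k=0}^{N_i−1} (Z_{i,N_i} − Σ_{j≠i} λ_{i,j}^k Z_{j,N_j}) and L_i := ∏_{k=0}^{N_i−1} L_{i,N_i−k}. Then for every 1 ≤ i ≤ n one has M_1···M_n ≡ (−1)^i · L_1···L_i · M_{i+1}···M_n modulo J. -/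
open MvPolynomial Finset

set_option maxHeartbeats 1000000
set_option synthInstance.maxHeartbeats 1000000

namespace Stmt11

variable {F : Type} [Field F] {n : ℕ} (N : Fin n → ℕ) (hN : ∀ i, 0 < N i)
  (lam : Fin n → Fin n → ℕ → F)

/-- The index type of the variables. -/
abbrev σtp (n : ℕ) (N : Fin n → ℕ) : Type := (i : Fin n) × Fin (N i)

/-- The ideal `J`. -/
noncomputable def Jdl : Ideal (MvPolynomial (σtp n N) F) :=
  Ideal.span (Set.range fun p : σtp n N => X p * Lform N hN lam p)

lemma gen_mem (p : σtp n N) : X p * Lform N hN lam p ∈ Jdl N hN lam :=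
  Ideal.subset_span ⟨p, rfl⟩

/-- `c_k` for block `i`. -/
noncomputable def cc (i : Fin n) (k : ℕ) : MvPolynomial (σtp n N) F :=
  ∑ j ∈ univ.erase i, C (lam i j k) * Ztop N hN j

/-- partial sum `S_m = Z_{i,1}+...+Z_{i,m}`. -/
noncomputable def Sp (i : Fin n) (m : ℕ) : MvPolynomial (σtp n N) F :=
  ∑ t ∈ (univ : Finset (Fin (N i))).filter fun t => t.val < m, X (⟨i, t⟩ : σtp n N)

noncomputable def Mp (i : Fin n) : MvPolynomial (σtp n N) F :=
  ∏ k ∈ Finset.range (N i),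
    (Ztop N hN i - ∑ j ∈ univ.erase i, C (lam i j k) * Ztop N hN j)

noncomputable def Lp (i : Fin n) : MvPolynomial (σtp n N) F :=
  ∏ k : Fin (N i), Lform N hN lam ⟨i, k⟩

lemma Mp_eq (i : Fin n) :
    Mp N hN lam i = ∏ k ∈ Finset.range (N i), (Ztop N hN i - cc N hN lam i k) := rfl

/-- top index of block `i`. -/
def topIdx (i : Fin n) : Fin (N i) := ⟨N i - 1, Nat.sub_lt (hN i) Nat.one_pos⟩

lemma Ztop_eq (i : Fin n) :
    (Ztop N hN i : MvPolynomial (σtp n N) F) = X ⟨i, topIdx N hN i⟩ := rfl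

lemma Sp_zero (i : Fin n) : Sp N (F := F) i 0 = 0 := by
  simp [Sp]

lemma Sp_succ (i : Fin n) (m : ℕ) (h : m < N i) :
    Sp N (F := F) i (m + 1) = Sp N i m + X (⟨i, ⟨m, h⟩⟩ : σtp n N) := by
  unfold Sp
  rw [show (univ : Finset (Fin (N i))).filter (fun t => t.val < m + 1)
      = insert ⟨m, h⟩ ((univ : Finset (Fin (N i))).filter fun t => t.val < m) by
    ext t
    simp only [Finset.mem_insert, Finset.mem_filter, Finset.mem_univ, true_and, Fin.ext_iff]
    omega]
  rw [Finset.sum_insert (by simp)]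
  ring

lemma Sp_sub (i : Fin n) (a b : ℕ) (hab : a ≤ b) :
    Sp N (F := F) i b - Sp N i a
      = ∑ t ∈ (univ : Finset (Fin (N i))).filter fun t => a ≤ t.val ∧ t.val < b,
          X (⟨i, t⟩ : σtp n N) := by
  unfold Sp
  rw [sub_eq_iff_eq_add, ← Finset.sum_union (Finset.disjoint_left.mpr (by
    intro t ht hs
    simp only [Finset.mem_filter, Finset.mem_univ, true_and] at ht hs
    omega))]
  congr 1
  ext t
  simp only [Finset.mem_filter, Finset.mem_univ, true_and, Finset.mem_union]
  omega

lemma Lform_top (i : Fin n) :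
    Lform N hN lam (⟨i, topIdx N hN i⟩ : σtp n N)
      = Sp N i (N i - 1) - Ztop N hN i + cc N hN lam i 0 := by
  unfold Lform
  rw [if_pos (show (topIdx N hN i).val + 1 = N i from Nat.succ_pred_eq_of_pos (hN i))]
  rw [show ((univ : Finset (Fin (N i))).filter fun t => t.val + 1 < N i)
      = (univ : Finset (Fin (N i))).filter (fun t => t.val < N i - 1) by
    ext t; simp only [Finset.mem_filter, Finset.mem_univ, true_and]; omega]
  rfl

lemma Lform_low (i : Fin n) (t : Fin (N i)) (ht : t.val + 1 < N i) :
    Lform N hN lam (⟨i, t⟩ : σtp n N)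
      = Sp N i (t.val + 1) - (cc N hN lam i (N i - (t.val + 1)) - cc N hN lam i 0) := by
  unfold Lform
  rw [if_neg (show ¬(t.val + 1 = N i) by omega)]
  congr 1
  · rw [show ((univ : Finset (Fin (N i))).filter fun s => s.val ≤ t.val)
        = (univ : Finset (Fin (N i))).filter (fun s => s.val < t.val + 1) by
      ext s; simp only [Finset.mem_filter, Finset.mem_univ, true_and]; omega]
    rfl
  · unfold cc
    rw [← Finset.sum_sub_distrib]
    exact Finset.sum_congr rfl fun j _ => by rw [map_sub, sub_mul]

lemma lemB : ∀ (m : ℕ) (i : Fin n) (t : Fin (N i)), t.val + 1 < N i → N i - (t.val + 1) ≤ m →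
    Ztop N hN i * (X (⟨i, t⟩ : σtp n N) *
      ∏ k ∈ Finset.Icc 1 (N i - (t.val + 1)), (Ztop N hN i - cc N hN lam i k))
      ∈ Jdl (F := F) N hN lam := by
  intro m
  induction m with
  | zero => intro i t ht hm; omega
  | succ m IH =>
    intro i t ht hm
    rcases Nat.lt_or_ge (N i - (t.val + 1)) (m + 1) with h | h
    · exact IH i t ht (by omega)
    · have hd : N i - (t.val + 1) = m + 1 := by omega
      rw [hd]
      set W : MvPolynomial (σtp n N) F := Ztop N hN i with hW
      set Pm := ∏ k ∈ Finset.Icc 1 m, (W - cc N hN lam i k) with hPm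
      have hsplit : ∏ k ∈ Finset.Icc 1 (m + 1), (W - cc N hN lam i k)
          = Pm * (W - cc N hN lam i (m + 1)) := Finset.prod_Icc_succ_top (by omega) _
      set fs := (univ : Finset (Fin (N i))).filter
        (fun s => t.val + 1 ≤ s.val ∧ s.val < N i - 1) with hfs
      have hsum : ∀ s ∈ fs,
          W * (X (⟨i, t⟩ : σtp n N) * Pm) * X (⟨i, s⟩ : σtp n N) ∈ Jdl N hN lam := by
        intro s hs
        simp only [hfs, Finset.mem_filter, Finset.mem_univ, true_and] at hs
        have hs1 : s.val + 1 < N i := by omega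
        have hs2 : N i - (s.val + 1) ≤ m := by omega
        obtain ⟨r, hr⟩ : (∏ k ∈ Finset.Icc 1 (N i - (s.val + 1)), (W - cc N hN lam i k)) ∣ Pm :=
          Finset.prod_dvd_prod_of_subset _ _ _ (Finset.Icc_subset_Icc le_rfl (by omega))
        rw [hr, show W * (X (⟨i, t⟩ : σtp n N) *
              ((∏ k ∈ Finset.Icc 1 (N i - (s.val + 1)), (W - cc N hN lam i k)) * r))
              * X (⟨i, s⟩ : σtp n N)
            = (W * (X (⟨i, s⟩ : σtp n N) *
                ∏ k ∈ Finset.Icc 1 (N i - (s.val + 1)), (W - cc N hN lam i k)))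
              * (r * X (⟨i, t⟩ : σtp n N)) from by ring]
        exact Ideal.mul_mem_right _ _ (IH i s hs1 hs2)
      have hsub : Sp N (F := F) i (N i - 1) - Sp N i (t.val + 1) = ∑ s ∈ fs, X (⟨i, s⟩ : σtp n N) :=
        Sp_sub N i (t.val + 1) (N i - 1) (by omega)
      have key : W * (X (⟨i, t⟩ : σtp n N) * ∏ k ∈ Finset.Icc 1 (m + 1), (W - cc N hN lam i k))
          = (X (⟨i, t⟩ : σtp n N) * Lform N hN lam ⟨i, t⟩) * (W * Pm)
            - (X (⟨i, topIdx N hN i⟩ : σtp n N) * Lform N hN lam ⟨i, topIdx N hN i⟩)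
                * (X (⟨i, t⟩ : σtp n N) * Pm)
            + ∑ s ∈ fs, W * (X (⟨i, t⟩ : σtp n N) * Pm) * X (⟨i, s⟩ : σtp n N) := by
        rw [hsplit, Lform_top, Lform_low N hN lam i t ht, ← Ztop_eq, ← hW, hd,
          ← Finset.mul_sum, ← hsub]
        ring
      rw [key]
      exact add_mem (sub_mem (Ideal.mul_mem_right _ _ (gen_mem N hN lam _))
        (Ideal.mul_mem_right _ _ (gen_mem N hN lam _))) (Ideal.sum_mem _ hsum)

lemma lemA : ∀ (m : ℕ) (i : Fin n), m + 1 ≤ N i →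
    Ztop N hN i * ∏ k ∈ Finset.range (m + 1), (Ztop N hN i - cc N hN lam i k)
      - Ztop N hN i * Sp N i (N i - 1 - m)
        * ∏ k ∈ Finset.Icc 1 m, (Ztop N hN i - cc N hN lam i k)
      ∈ Jdl (F := F) N hN lam := by
  intro m
  induction m with
  | zero =>
    intro i _
    rw [Finset.prod_range_one, show Finset.Icc 1 0 = (∅ : Finset ℕ) from rfl,
      Finset.prod_empty, Nat.sub_zero]
    rw [show Ztop N hN i * (Ztop N hN i - cc N hN lam i 0)
          - Ztop N hN i * Sp N i (N i - 1) * 1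
        = -((X (⟨i, topIdx N hN i⟩ : σtp n N) * Lform N hN lam ⟨i, topIdx N hN i⟩)) from by
      rw [Lform_top, ← Ztop_eq]; ring]
    exact neg_mem (gen_mem N hN lam _)
  | succ m IH =>
    intro i hm
    set W : MvPolynomial (σtp n N) F := Ztop N hN i with hW
    have htm : N i - 2 - m < N i := by omega
    set tm : Fin (N i) := ⟨N i - 2 - m, htm⟩ with htmdef
    have htv : tm.val = N i - 2 - m := rfl
    have h1 : Sp N (F := F) i (N i - 1 - m) = Sp N i (N i - 2 - m) + X (⟨i, tm⟩ : σtp n N) := by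
      rw [show N i - 1 - m = (N i - 2 - m) + 1 by omega]
      exact Sp_succ N i _ htm
    have h2 : N i - 1 - (m + 1) = N i - 2 - m := by omega
    have hlemB : W * (X (⟨i, tm⟩ : σtp n N) *
        ∏ k ∈ Finset.Icc 1 (N i - (tm.val + 1)), (W - cc N hN lam i k))
        ∈ Jdl (F := F) N hN lam := lemB N hN lam (m + 1) i tm (by omega) (by omega)
    have h3 : N i - (tm.val + 1) = m + 1 := by omega
    rw [h3] at hlemB
    have key : W * ∏ k ∈ Finset.range (m + 1 + 1), (W - cc N hN lam i k)
          - W * Sp N i (N i - 1 - (m + 1)) * ∏ k ∈ Finset.Icc 1 (m + 1), (W - cc N hN lam i k)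
        = (W * ∏ k ∈ Finset.range (m + 1), (W - cc N hN lam i k)
            - W * Sp N i (N i - 1 - m) * ∏ k ∈ Finset.Icc 1 m, (W - cc N hN lam i k))
            * (W - cc N hN lam i (m + 1))
          + W * (X (⟨i, tm⟩ : σtp n N) * ∏ k ∈ Finset.Icc 1 (m + 1), (W - cc N hN lam i k)) := by
      rw [Finset.prod_range_succ, Finset.prod_Icc_succ_top (Nat.one_le_iff_ne_zero.mpr (by omega)),
        h2, h1]
      ring
    rw [key]
    exact add_mem (Ideal.mul_mem_right _ _ (IH i (by omega))) hlemB

lemma lemWM (i : Fin n) : Ztop N hN i * Mp N hN lam i ∈ Jdl (F := F) N hN lam := by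
  have := lemA N hN lam (N i - 1) i (by have := hN i; omega)
  rw [show N i - 1 + 1 = N i by have := hN i; omega, Nat.sub_self, Sp_zero] at this
  simpa [Mp_eq] using this

lemma lemWL (i : Fin n) : Ztop N hN i * Lp N hN lam i ∈ Jdl (F := F) N hN lam := by
  unfold Lp
  rw [← Finset.mul_prod_erase univ _ (Finset.mem_univ (topIdx N hN i)), Ztop_eq, ← mul_assoc]
  exact Ideal.mul_mem_right _ _ (gen_mem N hN lam _)

lemma lemC (i : Fin n) :
    Mp N hN lam i + Lp N hN lam i ∈
      Jdl (F := F) N hN lam ⊔ Ideal.span ((fun j => Ztop N hN j) '' {j : Fin n | j ≠ i}) := by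
  set K := Jdl (F := F) N hN lam ⊔ Ideal.span ((fun j => Ztop N hN j) '' {j : Fin n | j ≠ i})
    with hK
  rw [← Ideal.Quotient.eq_zero_iff_mem]
  set π := Ideal.Quotient.mk K with hπ
  have hz : ∀ j : Fin n, j ≠ i → π (Ztop N hN j) = 0 := fun j hj =>
    Ideal.Quotient.eq_zero_iff_mem.mpr (Ideal.mem_sup_right (Ideal.subset_span ⟨j, hj, rfl⟩))
  have hcc : ∀ k, π (cc N hN lam i k) = 0 := by
    intro k
    unfold cc
    rw [map_sum]
    refine Finset.sum_eq_zero fun j hj => ?_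
    rw [map_mul, hz j (Finset.mem_erase.mp hj).1, mul_zero]
  have hgen : ∀ t : Fin (N i),
      π (X (⟨i, t⟩ : σtp n N)) * π (Lform N hN lam ⟨i, t⟩) = 0 := fun t => by
    rw [← map_mul]
    exact Ideal.Quotient.eq_zero_iff_mem.mpr (Ideal.mem_sup_left (gen_mem N hN lam _))
  set w := π (Ztop N hN i) with hw
  set s : ℕ → _ := fun m => π (Sp N i m) with hs
  have hs0 : s 0 = 0 := by rw [hs]; simp only; rw [Sp_zero, map_zero]
  have hLtop : π (Lform N hN lam ⟨i, topIdx N hN i⟩) = s (N i - 1) - w := by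
    rw [Lform_top, map_add, map_sub, hcc, add_zero]
  have hLlow : ∀ t : Fin (N i), t.val + 1 < N i →
      π (Lform N hN lam ⟨i, t⟩) = s (t.val + 1) := fun t ht => by
    rw [Lform_low N hN lam i t ht, map_sub, map_sub, hcc, hcc, sub_zero, sub_zero]
  have hssucc : ∀ (m : ℕ) (h : m < N i),
      s (m + 1) = s m + π (X (⟨i, ⟨m, h⟩⟩ : σtp n N)) := fun m h => by
    rw [hs]; simp only; rw [Sp_succ N i m h, map_add]
  have hzs : ∀ (m : ℕ) (h : m + 1 < N i),
      π (X (⟨i, ⟨m, by omega⟩⟩ : σtp n N)) * s (m + 1) = 0 := by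
    intro m h
    have h2 := hgen ⟨m, by omega⟩
    rw [hLlow ⟨m, by omega⟩ h] at h2
    exact h2
  have htops : w * s (N i - 1) = w * w := by
    have h2 := hgen (topIdx N hN i)
    rw [hLtop, ← Ztop_eq, ← hw, mul_sub] at h2
    exact sub_eq_zero.mp h2
  -- lemma D
  have hD : ∀ m : ℕ, m < N i → ∏ j ∈ Finset.Icc 1 m, s j = s m ^ m := by
    intro m
    induction m with
    | zero => intro _; simp
    | succ m IH =>
      intro hm
      rw [Finset.prod_Icc_succ_top (by omega), IH (by omega)]
      obtain ⟨h', hh'⟩ := sub_dvd_pow_sub_pow (s (m + 1)) (s m) m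
      have e2 : s (m + 1) - s m = π (X (⟨i, ⟨m, by omega⟩⟩ : σtp n N)) := by
        rw [hssucc m (by omega)]; ring
      linear_combination (-(s (m + 1))) * hh' - (s (m + 1) * h') * e2 - h' * (hzs m hm)
  -- lemma F
  have hF : ∀ m : ℕ, m < N i → s m * ∏ j ∈ Finset.Icc 1 m, s j = 0 := by
    intro m
    induction m with
    | zero => intro _; rw [hs0, zero_mul]
    | succ m IH =>
      intro hm
      rw [Finset.prod_Icc_succ_top (by omega)]
      have e2 : s (m + 1) - s m = π (X (⟨i, ⟨m, by omega⟩⟩ : σtp n N)) := by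
        rw [hssucc m (by omega)]; ring
      have hIH := IH (by omega)
      linear_combination (s (m + 1) * (∏ j ∈ Finset.Icc 1 m, s j)) * e2
        + s (m + 1) * hIH + (∏ j ∈ Finset.Icc 1 m, s j) * (hzs m hm)
  -- lemma G
  have hG : ∀ k : ℕ, s (N i - 1) ^ k * w = w ^ (k + 1) := by
    intro k
    induction k with
    | zero => rw [pow_zero, one_mul, pow_one]
    | succ k IH =>
      linear_combination (s (N i - 1)) ^ k * htops + w * IH
  -- put everything together
  rw [map_add]
  have hM : π (Mp N hN lam i) = w ^ (N i) := by
    rw [Mp_eq, map_prod,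
      Finset.prod_congr rfl (fun k _ => by rw [map_sub, hcc, sub_zero] : ∀ k ∈ Finset.range (N i),
        π (Ztop N hN i - cc N hN lam i k) = w),
      Finset.prod_const, Finset.card_range]
  have hreidx : ∏ k ∈ (univ : Finset (Fin (N i))).erase (topIdx N hN i),
      π (Lform N hN lam ⟨i, k⟩) = ∏ j ∈ Finset.Icc 1 (N i - 1), s j := by
    refine Finset.prod_bij' (i := fun k _ => k.val + 1)
      (j := fun j hj => ⟨j - 1, by
        simp only [Finset.mem_Icc] at hj; omega⟩) ?_ ?_ ?_ ?_ ?_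
    · intro k hk
      simp only [Finset.mem_erase, Finset.mem_univ, and_true, ne_eq, Fin.ext_iff] at hk
      simp only [Finset.mem_Icc]
      have : (topIdx N hN i).val = N i - 1 := rfl
      have hkv := k.isLt
      omega
    · intro j hj
      simp only [Finset.mem_Icc] at hj
      simp only [Finset.mem_erase, Finset.mem_univ, and_true, ne_eq, Fin.ext_iff]
      have : (topIdx N hN i).val = N i - 1 := rfl
      omega
    · intro k hk
      simp only [Finset.mem_erase, Finset.mem_univ, and_true, ne_eq, Fin.ext_iff] at hk
      simp only [Fin.ext_iff]
      omega
    · intro j hj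
      simp only [Finset.mem_Icc] at hj
      show j - 1 + 1 = j
      omega
    · intro k hk
      simp only [Finset.mem_erase, Finset.mem_univ, and_true, ne_eq, Fin.ext_iff] at hk
      have : (topIdx N hN i).val = N i - 1 := rfl
      have hkv := k.isLt
      have hlt : k.val + 1 < N i := by omega
      exact hLlow k hlt
  have hLpval : π (Lp N hN lam i) = (s (N i - 1) - w) * s (N i - 1) ^ (N i - 1) := by
    unfold Lp
    rw [map_prod, ← Finset.mul_prod_erase univ _ (Finset.mem_univ (topIdx N hN i)), hLtop,
      hreidx, hD (N i - 1) (by have := hN i; omega)]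
  have hNi : N i - 1 + 1 = N i := by have := hN i; omega
  have hsN : s (N i - 1) * s (N i - 1) ^ (N i - 1) = 0 := by
    rw [← hD (N i - 1) (by have := hN i; omega)]
    exact hF (N i - 1) (by have := hN i; omega)
  have hG' : s (N i - 1) ^ (N i - 1) * w = w ^ (N i) := by
    rw [hG (N i - 1), hNi]
  rw [hM, hLpval]
  linear_combination hsN - hG'

lemma lemMul (i : Fin n) (R : MvPolynomial (σtp n N) F)
    (hR : ∀ j : Fin n, j ≠ i → Ztop N hN j * R ∈ Jdl (F := F) N hN lam)
    (x : MvPolynomial (σtp n N) F)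
    (hx : x ∈ Jdl (F := F) N hN lam ⊔ Ideal.span ((fun j => Ztop N hN j) '' {j : Fin n | j ≠ i})) :
    x * R ∈ Jdl (F := F) N hN lam := by
  obtain ⟨a, ha, b, hb, rfl⟩ := Submodule.mem_sup.mp hx
  rw [add_mul]
  refine add_mem (Ideal.mul_mem_right _ _ ha) ?_
  refine Submodule.span_induction (p := fun y _ => y * R ∈ Jdl (F := F) N hN lam)
    ?_ ?_ ?_ ?_ hb
  · rintro y ⟨j, hj, rfl⟩
    exact hR j hj
  · show (0 : MvPolynomial (σtp n N) F) * R ∈ _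
    rw [zero_mul]; exact zero_mem _
  · intro y z _ _ hy hz
    show (y + z) * R ∈ _
    rw [add_mul]; exact add_mem hy hz
  · intro a y _ hy
    show (a • y) * R ∈ _
    rw [smul_mul_assoc]
    exact Submodule.smul_mem _ _ hy

lemma ZtopProdL (j : Fin n) (s : Finset (Fin n)) (hj : j ∈ s) :
    Ztop N hN j * ∏ t ∈ s, Lp N hN lam t ∈ Jdl (F := F) N hN lam := by
  obtain ⟨r, hr⟩ := Finset.dvd_prod_of_mem (Lp N hN lam) hj
  rw [hr, show Ztop N hN j * (Lp N hN lam j * r) = Ztop N hN j * Lp N hN lam j * r from by ring]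
  exact Ideal.mul_mem_right _ _ (lemWL N hN lam j)

lemma ZtopProdM (j : Fin n) (s : Finset (Fin n)) (hj : j ∈ s) :
    Ztop N hN j * ∏ t ∈ s, Mp N hN lam t ∈ Jdl (F := F) N hN lam := by
  obtain ⟨r, hr⟩ := Finset.dvd_prod_of_mem (Mp N hN lam) hj
  rw [hr, show Ztop N hN j * (Mp N hN lam j * r) = Ztop N hN j * Mp N hN lam j * r from by ring]
  exact Ideal.mul_mem_right _ _ (lemWM N hN lam j)

lemma mainAux : ∀ (m : ℕ) (i : Fin n), i.val = m →
    (∏ t, Mp N hN lam t)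
      - (-1 : MvPolynomial (σtp n N) F) ^ (i.val + 1)
        * (∏ t ∈ univ.filter fun t : Fin n => t ≤ i, Lp N hN lam t)
        * (∏ t ∈ univ.filter fun t : Fin n => i < t, Mp N hN lam t)
      ∈ Jdl (F := F) N hN lam := by
  intro m
  induction m with
  | zero =>
    intro i hi
    have hfil1 : (univ.filter fun t : Fin n => t ≤ i) = {i} := by
      ext t
      simp only [Finset.mem_filter, Finset.mem_univ, true_and, Finset.mem_singleton,
        Fin.le_def, Fin.ext_iff, hi]
      omega
    have hfil2 : (univ.filter fun t : Fin n => i < t) = univ.erase i := by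
      ext t
      simp only [Finset.mem_filter, Finset.mem_univ, true_and, Finset.mem_erase, and_true,
        Fin.lt_def, Fin.ext_iff, hi, ne_eq]
      omega
    have hall : (∏ t, Mp N hN lam t)
        = Mp N hN lam i * ∏ t ∈ univ.erase i, Mp N hN lam t :=
      (Finset.mul_prod_erase univ _ (Finset.mem_univ i)).symm
    rw [hfil1, hfil2, Finset.prod_singleton, hall, hi]
    rw [show Mp N hN lam i * (∏ t ∈ univ.erase i, Mp N hN lam t)
          - (-1 : MvPolynomial (σtp n N) F) ^ (0 + 1) * Lp N hN lam i
            * (∏ t ∈ univ.erase i, Mp N hN lam t)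
        = (Mp N hN lam i + Lp N hN lam i) * ∏ t ∈ univ.erase i, Mp N hN lam t from by ring]
    refine lemMul N hN lam i _ (fun j hj => ?_) _ (lemC N hN lam i)
    exact ZtopProdM N hN lam j _ (Finset.mem_erase.mpr ⟨hj, Finset.mem_univ j⟩)
  | succ m IH =>
    intro i hi
    have hmn : m < n := by have := i.isLt; omega
    set i' : Fin n := ⟨m, hmn⟩ with hi'def
    have hi'val : i'.val = m := rfl
    have hIH := IH i' rfl
    have hiA : i ∉ univ.filter fun t : Fin n => t ≤ i' := by
      simp only [Finset.mem_filter, Finset.mem_univ, true_and, Fin.le_def, hi'val, hi]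
      omega
    have hiB : i ∉ univ.filter fun t : Fin n => i < t := by
      simp only [Finset.mem_filter, Finset.mem_univ, true_and, Fin.lt_def]
      omega
    have hA : (univ.filter fun t : Fin n => t ≤ i)
        = insert i (univ.filter fun t : Fin n => t ≤ i') := by
      ext t
      simp only [Finset.mem_filter, Finset.mem_univ, true_and, Finset.mem_insert,
        Fin.le_def, Fin.ext_iff, hi, hi'val]
      omega
    have hB : (univ.filter fun t : Fin n => i' < t)
        = insert i (univ.filter fun t : Fin n => i < t) := by
      ext t
      simp only [Finset.mem_filter, Finset.mem_univ, true_and, Finset.mem_insert,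
        Fin.lt_def, Fin.ext_iff, hi, hi'val]
      omega
    set P1 := ∏ t ∈ univ.filter fun t : Fin n => t ≤ i', Lp N hN lam t with hP1
    set P2 := ∏ t ∈ univ.filter fun t : Fin n => i < t, Mp N hN lam t with hP2
    have hR : ∀ j : Fin n, j ≠ i → Ztop N hN j * (P1 * P2) ∈ Jdl (F := F) N hN lam := by
      intro j hj
      have hjv : j.val ≠ m + 1 := by rw [← hi]; exact fun h => hj (Fin.ext h)
      rcases Nat.lt_or_ge j.val (m + 1) with hlt | hge
      · have hjmem : j ∈ univ.filter fun t : Fin n => t ≤ i' := by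
          simp only [Finset.mem_filter, Finset.mem_univ, true_and, Fin.le_def, hi'val]
          omega
        obtain ⟨r, hr⟩ := Finset.dvd_prod_of_mem (Lp N hN lam) hjmem
        rw [hP1, hr, show Ztop N hN j * (Lp N hN lam j * r * P2)
            = Ztop N hN j * Lp N hN lam j * (r * P2) from by ring]
        exact Ideal.mul_mem_right _ _ (lemWL N hN lam j)
      · have hjmem : j ∈ univ.filter fun t : Fin n => i < t := by
          simp only [Finset.mem_filter, Finset.mem_univ, true_and, Fin.lt_def, hi]
          omega
        obtain ⟨r, hr⟩ := Finset.dvd_prod_of_mem (Mp N hN lam) hjmem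
        rw [hP2, hr, show Ztop N hN j * (P1 * (Mp N hN lam j * r))
            = Ztop N hN j * Mp N hN lam j * (P1 * r) from by ring]
        exact Ideal.mul_mem_right _ _ (lemWM N hN lam j)
    have hD : (∏ t, Mp N hN lam t)
          - (-1 : MvPolynomial (σtp n N) F) ^ (i.val + 1)
            * (∏ t ∈ univ.filter fun t : Fin n => t ≤ i, Lp N hN lam t)
            * (∏ t ∈ univ.filter fun t : Fin n => i < t, Mp N hN lam t)
        = ((∏ t, Mp N hN lam t)
          - (-1 : MvPolynomial (σtp n N) F) ^ (i'.val + 1)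
            * (∏ t ∈ univ.filter fun t : Fin n => t ≤ i', Lp N hN lam t)
            * (∏ t ∈ univ.filter fun t : Fin n => i' < t, Mp N hN lam t))
          + (-1 : MvPolynomial (σtp n N) F) ^ (m + 1)
            * ((Mp N hN lam i + Lp N hN lam i) * (P1 * P2)) := by
      rw [hA, Finset.prod_insert hiA, hB, Finset.prod_insert hiB, hi, hi'val, ← hP1, ← hP2]
      ring
    rw [hD]
    refine add_mem hIH (Ideal.mul_mem_left _ _ ?_)
    exact lemMul N hN lam i _ hR _ (lemC N hN lam i)

end Stmt11

/-- With `M i = ∏_{k=0}^{N i - 1} (Z_{i,N i} - ∑_{j ≠ i} λᵏ_{i,j} Z_{j,N j})` and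
`L_i = ∏_{k=0}^{N i - 1} L_{i, N i - k}` (the product of all `L_{i,j}`,
`1 ≤ j ≤ N i`), for every `1 ≤ i ≤ n` (here `i : Fin n` represents `i+1`) one has
`M_1 ⋯ M_n ≡ (-1)ⁱ · L_1 ⋯ L_i · M_{i+1} ⋯ M_n` modulo `J = ⟨Z_{i,j} · L_{i,j}⟩`. -/
theorem stmt11 (F : Type) [Field F] (n : ℕ) (N : Fin n → ℕ) (hN : ∀ i, 0 < N i)
    (lam : Fin n → Fin n → ℕ → F) :
    ∀ i : Fin n,
      (∏ t : Fin n, ∏ k ∈ Finset.range (N t),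
          (Ztop N hN t - ∑ j ∈ univ.erase t, C (lam t j k) * Ztop N hN j))
        - (-1 : MvPolynomial ((i : Fin n) × Fin (N i)) F) ^ (i.val + 1) *
            (∏ t ∈ univ.filter fun t : Fin n => t ≤ i,
              ∏ k : Fin (N t), Lform N hN lam ⟨t, k⟩) *
            (∏ t ∈ univ.filter fun t : Fin n => i < t,
              ∏ k ∈ Finset.range (N t),
                (Ztop N hN t - ∑ j ∈ univ.erase t, C (lam t j k) * Ztop N hN j)) ∈
      Ideal.span (Set.range fun p : (i : Fin n) × Fin (N i) =>
        X p * Lform N hN lam p) := by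
  intro i
  exact Stmt11.mainAux N hN lam i.val i rfl
end
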